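/- arXiv:1501.05922 — 8 statements merged into one kernel-verified Lean document; each statement's English description precedes it below -/
import Mathlib

section
/- In the probability space of the counterexample, let X_t = D σ² 1_{σ ≤ t} (so X jumps at time σ to Dσ² if σ < ∞). Then X_∞ := lim_{t→∞} X_t = D σ² 1_{σ < ∞} exists almost surely and E[|X_∞|] = ∑_{n≥1} n² · (1/(2n²)) = ∞. In particular X_∞ is not integrable and X is not a uniformly integrable martingale. -/
open MeasureTheory Filter ProbabilityTheory
open scoped ENNReal NNReal Topology

/-! The sample space of Cherny's counterexample: `(ℕ ∪ {∞}) × {-1, 1}`, modeled as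
`Option ℕ × Bool` where `none` plays the role of `∞` (points `(0, i)` get measure `0`,
so effectively `ℕ = {1, 2, ...}`), and `true ↦ 1`, `false ↦ -1`. The σ-algebra is the
power set. -/

instance : MeasurableSpace (Option ℕ) := ⊤
instance : MeasurableSingletonClass (Option ℕ) := ⟨fun _ => trivial⟩

/-- The point masses: `P((n,i)) = 1/(4n²)` for `n ≥ 1` and `P((∞,i)) = (1 - π²/12)/2`. -/
noncomputable def chernyP : Option ℕ × Bool → ℝ≥0∞
  | (none, _) => ENNReal.ofReal ((1 - Real.pi ^ 2 / 12) / 2)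
  | (some n, _) => if n = 0 then 0 else 1 / (4 * (n : ℝ≥0∞) ^ 2)

/-- The probability measure of the counterexample. -/
noncomputable def chernyMeasure : Measure (Option ℕ × Bool) :=
  Measure.sum (fun x : Option ℕ × Bool => chernyP x • Measure.dirac x)

/-- `D`: the second coordinate, valued in `{-1, 1}`. -/
noncomputable def chernyD : Option ℕ × Bool → ℝ := fun ω => if ω.2 then 1 else -1

/-- `σ` viewed as an `ℝ≥0∞`-valued time (`∞` for `none`). -/
noncomputable def chernySigma : Option ℕ × Bool → ℝ≥0∞ := fun ω =>
  match ω.1 with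
  | none => ⊤
  | some n => (n : ℝ≥0∞)

/-- The process `X = D σ² 1_{[σ, ∞)}`. -/
noncomputable def chernyX : ℝ≥0 → Option ℕ × Bool → ℝ := fun t ω =>
  match ω.1 with
  | none => 0
  | some n => if (n : ℝ≥0) ≤ t then chernyD ω * (n : ℝ) ^ 2 else 0

/-- The pointwise limit `X_∞ = D σ² 1_{σ < ∞}`. -/
noncomputable def chernyXinf : Option ℕ × Bool → ℝ := fun ω =>
  match ω.1 with
  | none => 0
  | some n => chernyD ω * (n : ℝ) ^ 2

/-- The natural filtration of `X`. -/
noncomputable def chernyF : Filtration ℝ≥0 (inferInstance : MeasurableSpace (Option ℕ × Bool)) :=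
  Filtration.natural chernyX (fun _ => (measurable_of_countable _).stronglyMeasurable)

lemma cherny_lintegral (f : Option ℕ × Bool → ℝ≥0∞) :
    ∫⁻ ω, f ω ∂chernyMeasure = ∑' x, chernyP x * f x := by
  rw [chernyMeasure, lintegral_sum_measure]
  exact tsum_congr fun x => by rw [lintegral_smul_measure, lintegral_dirac, smul_eq_mul]

lemma aux_quarter {a : ℝ≥0∞} (h0 : a ≠ 0) (ht : a ≠ ⊤) : 1 / (4 * a) * a = 1 / 4 := by
  rw [one_div, ENNReal.mul_inv (Or.inl (by norm_num)) (Or.inl (by norm_num)), mul_assoc,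
    ENNReal.inv_mul_cancel h0 ht, mul_one, one_div]

lemma aux_half {a : ℝ≥0∞} (h0 : a ≠ 0) (ht : a ≠ ⊤) : a * (1 / (2 * a)) = 1 / 2 := by
  rw [one_div, ENNReal.mul_inv (Or.inl (by norm_num)) (Or.inl (by norm_num)), mul_left_comm,
    ENNReal.mul_inv_cancel h0 ht, mul_one, one_div]

lemma cast_sq_ne_zero (n : ℕ) (hn : n ≠ 0) : ((n : ℝ≥0∞) ^ 2) ≠ 0 := by
  simpa using hn

lemma cast_sq_ne_top (n : ℕ) : ((n : ℝ≥0∞) ^ 2) ≠ ⊤ := by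
  simp [ENNReal.pow_eq_top_iff]

lemma ofReal_abs_D (b : Bool) (m : ℕ) :
    ENNReal.ofReal |chernyD (some m, b) * (m : ℝ) ^ 2| = ((m : ℝ≥0∞)) ^ 2 := by
  have habs : |chernyD (some m, b) * (m : ℝ) ^ 2| = (m : ℝ) ^ 2 := by
    cases b <;> simp [chernyD, abs_of_nonneg, sq_nonneg, abs_neg]
  rw [habs, ENNReal.ofReal_pow (by positivity), ENNReal.ofReal_natCast]

/-- For the counterexample process `X = Dσ²1_{[σ,∞)}`, the limit
`X_∞ = lim_{t→∞} X_t = Dσ²1_{σ<∞}` exists (here: for every `ω`), but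
`E[|X_∞|] = ∑_{n≥1} n²/(2n²) = ∞`; in particular `X_∞` is not integrable and `X` is not
uniformly integrable. -/
theorem statement7 :
    (∀ ω : Option ℕ × Bool, Tendsto (fun t => chernyX t ω) atTop (𝓝 (chernyXinf ω))) ∧
      (∫⁻ ω, ENNReal.ofReal |chernyXinf ω| ∂chernyMeasure
        = ∑' n : ℕ, ((n + 1 : ℕ) : ℝ≥0∞) ^ 2 * (1 / (2 * ((n + 1 : ℕ) : ℝ≥0∞) ^ 2))) ∧
      (∫⁻ ω, ENNReal.ofReal |chernyXinf ω| ∂chernyMeasure = ⊤) ∧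
      ¬ Integrable chernyXinf chernyMeasure ∧
      ¬ UniformIntegrable chernyX 1 chernyMeasure := by
  have key : ∫⁻ ω, ENNReal.ofReal |chernyXinf ω| ∂chernyMeasure
      = ∑' n : ℕ, ((n + 1 : ℕ) : ℝ≥0∞) ^ 2 * (1 / (2 * ((n + 1 : ℕ) : ℝ≥0∞) ^ 2)) := by
    rw [cherny_lintegral, ENNReal.tsum_prod']
    have hb : ∀ o : Option ℕ, (∑' b : Bool, chernyP (o, b) * ENNReal.ofReal |chernyXinf (o, b)|)
        = chernyP (o, false) * ENNReal.ofReal |chernyXinf (o, false)|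
          + chernyP (o, true) * ENNReal.ofReal |chernyXinf (o, true)| := fun o => tsum_bool _
    rw [tsum_congr hb]
    rw [← (Option.some_injective ℕ).tsum_eq (f := fun o =>
        chernyP (o, false) * ENNReal.ofReal |chernyXinf (o, false)|
          + chernyP (o, true) * ENNReal.ofReal |chernyXinf (o, true)|) (by
        intro x hx
        cases x with
        | none => simp [Function.mem_support, chernyXinf] at hx
        | some n => exact ⟨n, rfl⟩)]
    rw [tsum_eq_zero_add' ENNReal.summable]
    have h0 : chernyP (some 0, false) * ENNReal.ofReal |chernyXinf (some 0, false)|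
        + chernyP (some 0, true) * ENNReal.ofReal |chernyXinf (some 0, true)| = 0 := by
      simp [chernyP]
    rw [h0, zero_add]
    refine tsum_congr fun n => ?_
    have hne : ((((n + 1 : ℕ)) : ℝ≥0∞) ^ 2) ≠ 0 := cast_sq_ne_zero _ n.succ_ne_zero
    have hnt : ((((n + 1 : ℕ)) : ℝ≥0∞) ^ 2) ≠ ⊤ := cast_sq_ne_top _
    have hP : chernyP (some (n + 1), false) = 1 / (4 * ((n + 1 : ℕ) : ℝ≥0∞) ^ 2) := by
      simp [chernyP]
    have hP' : chernyP (some (n + 1), true) = 1 / (4 * ((n + 1 : ℕ) : ℝ≥0∞) ^ 2) := by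
      simp [chernyP]
    have hX : ∀ b, ENNReal.ofReal |chernyXinf (some (n + 1), b)| = ((n + 1 : ℕ) : ℝ≥0∞) ^ 2 :=
      fun b => ofReal_abs_D b (n + 1)
    rw [hP, hP', hX, hX, aux_quarter hne hnt, aux_half hne hnt, one_div, one_div,
      ← two_mul, show (4:ℝ≥0∞) = 2*2 by norm_num,
      ENNReal.mul_inv (by norm_num) (by norm_num), ← mul_assoc,
      ENNReal.mul_inv_cancel two_ne_zero (by norm_num), one_mul]
  have htop : ∫⁻ ω, ENNReal.ofReal |chernyXinf ω| ∂chernyMeasure = ⊤ := by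
    rw [key]
    have : ∀ n : ℕ, ((n + 1 : ℕ) : ℝ≥0∞) ^ 2 * (1 / (2 * ((n + 1 : ℕ) : ℝ≥0∞) ^ 2))
        = 1 / 2 := fun n => aux_half (cast_sq_ne_zero _ n.succ_ne_zero) (cast_sq_ne_top _)
    rw [tsum_congr this]
    exact ENNReal.tsum_const_eq_top_of_ne_zero (by norm_num)
  refine ⟨?_, key, htop, ?_, ?_⟩
  · rintro ⟨o, b⟩
    cases o with
    | none =>
      have : (fun t => chernyX t (none, b)) = fun _ => chernyXinf (none, b) := rfl
      rw [this]; exact tendsto_const_nhds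
    | some n =>
      refine Tendsto.congr' ?_ (tendsto_const_nhds (x := chernyXinf (some n, b)))
      filter_upwards [eventually_ge_atTop (n : ℝ≥0)] with t ht
      simp [chernyX, chernyXinf, ht]
  · intro h
    have hfi := h.2
    rw [HasFiniteIntegral] at hfi
    have : ∫⁻ ω, ‖chernyXinf ω‖ₑ ∂chernyMeasure = ⊤ := by
      rw [← htop]; exact lintegral_congr fun ω => Real.enorm_eq_ofReal_abs _
    rw [this] at hfi
    exact absurd hfi (by simp)
  · intro h
    obtain ⟨-, -, C, hC⟩ := h
    have hbound : ∀ N : ℕ, (N : ℝ≥0∞) / 4 ≤ (C : ℝ≥0∞) := by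
      intro N
      have h1 : eLpNorm (chernyX N) 1 chernyMeasure
          = ∑' x, chernyP x * (‖chernyX N x‖₊ : ℝ≥0∞) := by
        exact eLpNorm_one_eq_lintegral_enorm.trans (cherny_lintegral _)
      have h2 : ∑ k ∈ Finset.Icc 1 N, (1 / 4 : ℝ≥0∞)
          ≤ ∑' x, chernyP x * (‖chernyX N x‖₊ : ℝ≥0∞) := by
        have hinj : Function.Injective (fun k : ℕ => ((some k, true) : Option ℕ × Bool)) := by
          intro a b hab; simpa using hab
        refine le_trans ?_ (ENNReal.tsum_comp_le_tsum_of_injective hinj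
          (fun x => chernyP x * (‖chernyX N x‖₊ : ℝ≥0∞)))
        refine le_trans (le_of_eq ?_) (ENNReal.sum_le_tsum (Finset.Icc 1 N))
        refine Finset.sum_congr rfl fun k hk => ?_
        obtain ⟨hk1, hk2⟩ := Finset.mem_Icc.mp hk
        have hk0 : k ≠ 0 := by omega
        have hXN : chernyX (N : ℝ≥0) (some k, true) = (k : ℝ) ^ 2 := by
          simp [chernyX, chernyD, Nat.cast_le.mpr hk2]
        have hnorm : (‖chernyX (N : ℝ≥0) (some k, true)‖₊ : ℝ≥0∞) = (k : ℝ≥0∞) ^ 2 := by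
          rw [hXN, ← enorm_eq_nnnorm, Real.enorm_eq_ofReal_abs, abs_of_nonneg (by positivity),
            ENNReal.ofReal_pow (by positivity), ENNReal.ofReal_natCast]
        rw [hnorm]
        have hP : chernyP (some k, true) = 1 / (4 * (k : ℝ≥0∞) ^ 2) := by simp [chernyP, hk0]
        rw [hP, aux_quarter (cast_sq_ne_zero _ hk0) (cast_sq_ne_top _)]
      have h3 : ∑ k ∈ Finset.Icc 1 N, (1 / 4 : ℝ≥0∞) = (N : ℝ≥0∞) / 4 := by
        rw [Finset.sum_const, Nat.card_Icc]
        simp [div_eq_mul_inv, one_div, nsmul_eq_mul]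
      calc (N : ℝ≥0∞) / 4 = ∑ k ∈ Finset.Icc 1 N, (1 / 4 : ℝ≥0∞) := h3.symm
        _ ≤ ∑' x, chernyP x * (‖chernyX N x‖₊ : ℝ≥0∞) := h2
        _ = eLpNorm (chernyX N) 1 chernyMeasure := h1.symm
        _ ≤ C := hC N
    obtain ⟨N, hN⟩ := ENNReal.exists_nat_gt
      (show ((C : ℝ≥0∞) * 4) ≠ ⊤ from ENNReal.mul_ne_top ENNReal.coe_ne_top (by norm_num))
    have := hbound N
    rw [ENNReal.div_le_iff_le_mul (Or.inl (by norm_num)) (Or.inl (by norm_num))] at this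
    exact absurd hN (not_lt.mpr this)
end

section
/- In the counterexample space, let F be the natural filtration of X = Dσ²1_{[σ,∞)} and let τ be any almost surely finite stopping time. Set u = τ((∞,-1)) ∨ τ((∞,1)). Then {σ > u} ⊆ {τ ≤ u}, and consequently τ ∧ σ ≤ u almost surely, i.e., the stopped stopping time τ ∧ σ is uniformly bounded. -/
open MeasureTheory Filter ProbabilityTheory
open scoped ENNReal NNReal Topology

lemma cherny_key (u : ℝ≥0) (A : Set (Option ℕ × Bool)) (hA : MeasurableSet[chernyF u] A)
    (ω ω' : Option ℕ × Bool) (h : ∀ j ≤ u, chernyX j ω = chernyX j ω') :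
    ω ∈ A ↔ ω' ∈ A := by
  let m : MeasurableSpace (Option ℕ × Bool) :=
  { MeasurableSet' := fun B => (∀ x y : Option ℕ × Bool,
      (∀ j ≤ u, chernyX j x = chernyX j y) → (x ∈ B ↔ y ∈ B))
    measurableSet_empty := by simp
    measurableSet_compl := by
      intro B hB x y hxy
      simp only [Set.mem_compl_iff]
      exact not_congr (hB x y hxy)
    measurableSet_iUnion := by
      intro f hf x y hxy
      simp only [Set.mem_iUnion]
      exact exists_congr fun i => hf i x y hxy }
  have hle : chernyF u ≤ m := by
    refine iSup₂_le fun j hj => ?_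
    rintro B ⟨s, _, rfl⟩ x y hxy
    simp only [Set.mem_preimage, hxy j hj]
  exact hle A hA ω ω' h

/-- For any (everywhere finite) stopping time `τ` of the natural filtration of
`X`, with `u = τ((∞,-1)) ⊔ τ((∞,1))`, one has `{σ > u} ⊆ {τ ≤ u}` and consequently
`τ ∧ σ ≤ u` everywhere, i.e. the stopped stopping time `τ ∧ σ` is uniformly bounded. -/
theorem statement8 (τ : Option ℕ × Bool → ℝ≥0) (hτ : IsStoppingTime chernyF (fun ω => (τ ω : WithTop ℝ≥0))) :
    (∀ ω : Option ℕ × Bool,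
        ((max (τ (none, false)) (τ (none, true)) : ℝ≥0) : ℝ≥0∞) < chernySigma ω →
        τ ω ≤ max (τ (none, false)) (τ (none, true))) ∧
      ∀ ω : Option ℕ × Bool,
        min ((τ ω : ℝ≥0∞)) (chernySigma ω)
          ≤ ((max (τ (none, false)) (τ (none, true)) : ℝ≥0) : ℝ≥0∞) := by

  classical
  set u := max (τ (none, false)) (τ (none, true)) with hu
  have hτu : ∀ ω : Option ℕ × Bool,
      ((u : ℝ≥0) : ℝ≥0∞) < chernySigma ω → τ ω ≤ u := by
    intro ω hσ
    have hA : MeasurableSet[chernyF u] {x | τ x ≤ u} := by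
      have hset : {x | τ x ≤ u} = {x | ((τ x : WithTop ℝ≥0)) ≤ ((u : WithTop ℝ≥0))} := by
        ext x; simp only [Set.mem_setOf_eq, WithTop.coe_le_coe]
      rw [hset]; exact hτ u
    have hX : ∀ j ≤ u, chernyX j ω = chernyX j (none, ω.2) := by
      intro j hj
      rcases hω : ω.1 with _ | n
      · simp [chernyX, hω]
      · have hn : ¬ ((n : ℝ≥0) ≤ j) := by
          intro hle
          have : ((n : ℝ≥0) : ℝ≥0∞) ≤ (u : ℝ≥0∞) := by
            exact_mod_cast le_trans hle hj
          simp only [chernySigma, hω] at hσ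
          exact absurd this (not_le.mpr hσ)
        simp [chernyX, hω, hn]
    have hmem : (none, ω.2) ∈ {x | τ x ≤ u} := by
      simp only [Set.mem_setOf_eq]
      cases hb : ω.2
      · exact le_max_left _ _
      · exact le_max_right _ _
    exact (cherny_key u _ hA ω (none, ω.2) hX).mpr hmem
  refine ⟨hτu, fun ω => ?_⟩
  rcases le_or_gt (chernySigma ω) ((u : ℝ≥0) : ℝ≥0∞) with h | h
  · exact le_trans (min_le_right _ _) h
  · exact le_trans (min_le_left _ _) (by exact_mod_cast hτu ω h)
end

section
/- There exists a filtered probability space and a right-continuous martingale X such that X_τ is integrable and E[X_τ] = E[X_0] for every almost surely finite stopping time τ, the limit X_∞ = lim_{t→∞} X_t exists almost surely, but X is not a uniformly integrable martingale (indeed X_∞ is not integrable). -/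
open MeasureTheory Filter ProbabilityTheory
open scoped ENNReal NNReal Topology

namespace S9

abbrev Om : Type := ℕ × Bool

lemma measAll (A : Set Om) : MeasurableSet A := A.to_countable.measurableSet

noncomputable def W : ℕ → ℝ≥0 := fun n =>
  if n = 0 then 1/4 else (4 * (n : ℝ≥0) * ((n : ℝ≥0) + 1))⁻¹

lemma real_hasSum : HasSum (fun n : ℕ => (1:ℝ)/(4*((n:ℝ)+1)*((n:ℝ)+2))) (1/4) := by
  have key : HasSum (fun n : ℕ => 1/((n:ℝ)+1) - 1/((n:ℝ)+2)) 1 := by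
    rw [hasSum_iff_tendsto_nat_of_nonneg]
    · have hps : ∀ N : ℕ, ∑ i ∈ Finset.range N, (1/((i:ℝ)+1) - 1/((i:ℝ)+2)) = 1 - 1/((N:ℝ)+1) := by
        intro N
        have := Finset.sum_range_sub' (fun i : ℕ => 1/((i:ℝ)+1)) N
        have e2 : ∀ i:ℕ, 1/((i:ℝ)+1) - 1/((i:ℝ)+2) = 1/((i:ℝ)+1) - 1/(((i+1:ℕ):ℝ)+1) := by
          intro i; push_cast; ring_nf
        rw [Finset.sum_congr rfl (fun i _ => e2 i), this]
        norm_num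
      simp only [hps]
      have : Tendsto (fun N : ℕ => 1 - 1/((N:ℝ)+1)) atTop (𝓝 (1 - 0)) :=
        tendsto_const_nhds.sub tendsto_one_div_add_atTop_nhds_zero_nat
      simpa using this
    · intro i
      have h1 : (0:ℝ) < (i:ℝ)+1 := by positivity
      have h2 : (0:ℝ) < (i:ℝ)+2 := by positivity
      rw [sub_nonneg, div_le_div_iff₀ h2 h1]
      nlinarith
  have := key.mul_left (1/4)
  rw [mul_one] at this
  have he : (fun i:ℕ => 1/4 * (1/((i:ℝ)+1) - 1/((i:ℝ)+2)))
      = fun n:ℕ => (1:ℝ)/(4*((n:ℝ)+1)*((n:ℝ)+2)) := by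
    funext n
    have h1 : ((n:ℝ)+1) ≠ 0 := by positivity
    have h2 : ((n:ℝ)+2) ≠ 0 := by positivity
    field_simp
    ring
  rwa [he] at this

lemma W_succ_real (n : ℕ) : ((W (n+1) : ℝ≥0) : ℝ) = 1/(4*((n:ℝ)+1)*((n:ℝ)+2)) := by
  have h : (4 * ((n:ℕ)+1 : ℝ≥0) * (((n:ℕ)+1 : ℝ≥0) + 1)) ≠ 0 := by positivity
  simp only [W, Nat.succ_ne_zero, if_false]
  rw [NNReal.coe_inv]
  push_cast
  rw [inv_eq_one_div]
  ring_nf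

lemma summable_W_succ : Summable (fun n : ℕ => W (n+1)) := by
  rw [← NNReal.summable_coe]
  refine Summable.congr real_hasSum.summable ?_
  intro n; rw [W_succ_real]

lemma tsum_W_succ : ∑' n : ℕ, W (n+1) = 1/4 := by
  have h := NNReal.coe_tsum (f := fun n : ℕ => W (n+1)) (L := SummationFilter.unconditional ℕ)
  have h2 : ∑' n : ℕ, ((W (n+1) : ℝ≥0) : ℝ) = 1/4 := by
    rw [tsum_congr (fun n => W_succ_real n)]
    exact real_hasSum.tsum_eq
  apply NNReal.coe_injective
  rw [h, h2]
  norm_num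

lemma tsum_W_enn : ∑' n : ℕ, (W n : ℝ≥0∞) = 1/2 := by
  rw [tsum_eq_zero_add' ENNReal.summable]
  have h1 : ∑' n : ℕ, (W (n+1) : ℝ≥0∞) = ((1/4 : ℝ≥0) : ℝ≥0∞) := by
    rw [← ENNReal.coe_tsum summable_W_succ, tsum_W_succ]
  rw [h1]
  have : (W 0 : ℝ≥0∞) = ((1/4 : ℝ≥0) : ℝ≥0∞) := by norm_num [W]
  rw [this, ← ENNReal.coe_add]
  have : ((1/4 : ℝ≥0) + 1/4 : ℝ≥0) = 1/2 := by
    rw [← NNReal.coe_inj]; push_cast; norm_num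
  rw [this]
  simp [ENNReal.coe_div]

noncomputable def p : PMF Om :=
  ⟨fun ω => (W ω.1 : ℝ≥0∞), by
    rw [Summable.hasSum_iff ENNReal.summable]
    rw [ENNReal.tsum_prod']
    have : ∀ n : ℕ, ∑' _ : Bool, (W n : ℝ≥0∞) = 2 * W n := by
      intro n
      rw [tsum_eq_sum (s := Finset.univ) (by simp)]
      simp [two_mul]
    rw [tsum_congr this, ENNReal.tsum_mul_left, tsum_W_enn]
    rw [ENNReal.mul_div_cancel'] <;> norm_num⟩

noncomputable def μ : Measure Om := p.toMeasure

instance : IsProbabilityMeasure μ := PMF.toMeasure.isProbabilityMeasure p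

lemma mu_sing (ω : Om) : μ {ω} = (W ω.1 : ℝ≥0∞) := by
  rw [μ, PMF.toMeasure_apply_singleton _ _ (measAll _)]; rfl


noncomputable def g (t : ℝ≥0) (ω : Om) : Option Om :=
  if ω.1 ≠ 0 ∧ (ω.1 : ℝ≥0) ≤ t then some ω else none

noncomputable def F : Option Om → ℝ :=
  fun o => o.elim 0 (fun ω => if ω.2 then ((ω.1 : ℝ))^2 else -((ω.1 : ℝ))^2)

noncomputable def X (t : ℝ≥0) (ω : Om) : ℝ := F (g t ω)

instance : MeasurableSpace (Option Om) := ⊤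

lemma g_comp {s t : ℝ≥0} (hst : s ≤ t) (ω : Om) : g s ω = (g t ω).bind (g s) := by
  by_cases h : ω.1 ≠ 0 ∧ (ω.1 : ℝ≥0) ≤ t
  · have e1 : g t ω = some ω := if_pos h
    rw [e1, Option.bind_some]
  · have h2 : ¬ (ω.1 ≠ 0 ∧ (ω.1 : ℝ≥0) ≤ s) := by
      intro ⟨h1, h2⟩; exact h ⟨h1, h2.trans hst⟩
    have e1 : g t ω = none := if_neg h
    have e2 : g s ω = none := if_neg h2
    rw [e1, e2, Option.bind_none]

noncomputable def ℱ : Filtration ℝ≥0 (inferInstance : MeasurableSpace Om) where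
  seq := fun t => MeasurableSpace.comap (g t) ⊤
  mono' := by
    intro s t hst
    show MeasurableSpace.comap (g s) ⊤ ≤ MeasurableSpace.comap (g t) ⊤
    have : g s = (fun o => o.bind (g s)) ∘ g t := funext (g_comp hst)
    rw [this, ← MeasurableSpace.comap_comp]
    exact MeasurableSpace.comap_mono le_top
  le' := fun t A _ => measAll A

lemma X_apply (t : ℝ≥0) (ω : Om) :
    X t ω = if ω.1 ≠ 0 ∧ (ω.1 : ℝ≥0) ≤ t then
      (if ω.2 then ((ω.1 : ℝ))^2 else -((ω.1 : ℝ))^2) else 0 := by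
  rw [X, g]
  by_cases h : ω.1 ≠ 0 ∧ (ω.1 : ℝ≥0) ≤ t
  · rw [if_pos h, if_pos h]; rfl
  · rw [if_neg h, if_neg h]; rfl

lemma X_zero_fst (t : ℝ≥0) (b : Bool) : X t (0, b) = 0 := by
  rw [X_apply]; simp

lemma X_of_le {t : ℝ≥0} {n : ℕ} (hn : n ≠ 0) (hle : (n : ℝ≥0) ≤ t) (b : Bool) :
    X t (n, b) = if b then ((n : ℝ))^2 else -((n : ℝ))^2 := by
  rw [X_apply, if_pos ⟨hn, hle⟩]

lemma X_of_gt {t : ℝ≥0} {n : ℕ} (hgt : ¬ (n : ℝ≥0) ≤ t) (b : Bool) :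
    X t (n, b) = 0 := by
  rw [X_apply, if_neg (fun h => hgt h.2)]

lemma adapted : StronglyAdapted ℱ X := by
  intro t
  have hg : Measurable[ℱ t] (g t) := Measurable.of_comap_le le_rfl
  have hF : Measurable F := measurable_from_top
  exact (hF.comp hg).stronglyMeasurable

/-- Membership in an `ℱ t`-measurable set is equal for two points mapping to `none`. -/
lemma mem_iff_of_none {t : ℝ≥0} {A : Set Om} (hA : MeasurableSet[ℱ t] A)
    {ω ω' : Om} (hω : g t ω = none) (hω' : g t ω' = none) : ω ∈ A ↔ ω' ∈ A := by
  obtain ⟨B, -, rfl⟩ := MeasurableSpace.measurableSet_comap.mp hA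
  simp only [Set.mem_preimage, hω, hω']

lemma g_none {t : ℝ≥0} {ω : Om} (h : ¬ (ω.1 ≠ 0 ∧ (ω.1 : ℝ≥0) ≤ t)) : g t ω = none :=
  if_neg h

/-- Integral of a finitely supported function as a finite sum. -/
lemma rep (f : Om → ℝ) (S : Finset Om) (h : ∀ ω ∉ S, f ω = 0) :
    f = fun x => ∑ ω ∈ S, Set.indicator {ω} (fun _ => f ω) x := by
  funext x
  by_cases hx : x ∈ S
  · rw [Finset.sum_eq_single_of_mem x hx]
    · simp
    · intro ω _ hne
      exact Set.indicator_of_notMem (by simp [hne.symm]) _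
  · rw [h x hx]
    refine (Finset.sum_eq_zero ?_).symm
    intro ω hω
    rcases eq_or_ne x ω with rfl | hne
    · exact absurd hω hx
    · exact Set.indicator_of_notMem (by simp [hne]) _

lemma integrable_of_support (f : Om → ℝ) (S : Finset Om) (h : ∀ ω ∉ S, f ω = 0) :
    Integrable f μ := by
  rw [rep f S h]
  exact integrable_finset_sum _ (fun ω _ => (integrable_const _).indicator (measAll _))

lemma integral_eq_sum (f : Om → ℝ) (S : Finset Om) (h : ∀ ω ∉ S, f ω = 0) :
    ∫ ω, f ω ∂μ = ∑ ω ∈ S, (μ {ω}).toReal * f ω := by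
  conv_lhs => rw [rep f S h]
  rw [integral_finset_sum _ (fun ω _ => (integrable_const _).indicator (measAll _))]
  refine Finset.sum_congr rfl ?_
  intro ω _
  rw [integral_indicator_const _ (measAll _), smul_eq_mul]
  rfl


noncomputable def Sf (t : ℝ≥0) : Finset Om := Finset.range (⌈t⌉₊ + 1) ×ˢ Finset.univ

lemma gt_of_not_mem_Sf {t : ℝ≥0} {ω : Om} (h : ω ∉ Sf t) : ¬ (ω.1 : ℝ≥0) ≤ t := by
  intro hle
  apply h
  rw [Sf, Finset.mem_product]
  refine ⟨Finset.mem_range.mpr ?_, Finset.mem_univ _⟩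
  have : (ω.1 : ℝ≥0) ≤ (⌈t⌉₊ : ℝ≥0) := hle.trans (Nat.le_ceil t)
  exact Nat.lt_succ_of_le (by exact_mod_cast this)

lemma X_support (t : ℝ≥0) : ∀ ω ∉ Sf t, X t ω = 0 := fun ω hω =>
  X_of_gt (n := ω.1) (gt_of_not_mem_Sf hω) ω.2

lemma integrable_X (t : ℝ≥0) : Integrable (X t) μ :=
  integrable_of_support _ (Sf t) (X_support t)

lemma setIntegral_eq {s t : ℝ≥0} (hst : s ≤ t) {A : Set Om} (hA : MeasurableSet[ℱ s] A) :
    ∫ x in A, X s x ∂μ = ∫ x in A, X t x ∂μ := by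
  have hsupp : ∀ r : ℝ≥0, r ≤ t → ∀ ω ∉ Sf t, Set.indicator A (X r) ω = 0 := by
    intro r hr ω hω
    have : X r ω = 0 := X_of_gt (n := ω.1) (fun hle => gt_of_not_mem_Sf hω (hle.trans hr)) ω.2
    simp [Set.indicator_apply, this]
  rw [← integral_indicator (measAll A), ← integral_indicator (measAll A),
    integral_eq_sum _ (Sf t) (hsupp s hst), integral_eq_sum _ (Sf t) (hsupp t le_rfl)]
  rw [Sf, Finset.sum_product, Finset.sum_product]
  refine Finset.sum_congr rfl (fun n _ => ?_)
  rw [Fintype.sum_bool, Fintype.sum_bool]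
  by_cases hns : n ≠ 0 ∧ (n : ℝ≥0) ≤ s
  · have key : ∀ b, A.indicator (X s) (n, b) = A.indicator (X t) (n, b) := by
      intro b
      have hx : X s (n, b) = X t (n, b) := by
        rw [X_of_le hns.1 hns.2, X_of_le hns.1 (hns.2.trans hst)]
      by_cases hm : ((n, b) : Om) ∈ A
      · rw [Set.indicator_of_mem hm, Set.indicator_of_mem hm, hx]
      · rw [Set.indicator_of_notMem hm, Set.indicator_of_notMem hm]
    rw [key true, key false]
  · have hXs : ∀ b, X s (n, b) = 0 := by
      intro b
      rcases eq_or_ne n 0 with rfl | hn0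
      · exact X_zero_fst s b
      · exact X_of_gt (fun hle => hns ⟨hn0, hle⟩) b
    have hgnone : ∀ b, g s (n, b) = none := fun b => g_none hns
    have hmem : (n, true) ∈ A ↔ (n, false) ∈ A :=
      mem_iff_of_none hA (hgnone true) (hgnone false)
    have hXt : X t (n, false) = -X t (n, true) := by
      rcases eq_or_ne n 0 with rfl | hn0
      · rw [X_zero_fst, X_zero_fst]; ring
      · by_cases hle : (n : ℝ≥0) ≤ t
        · rw [X_of_le hn0 hle, X_of_le hn0 hle]; simp
        · rw [X_of_gt hle, X_of_gt hle]; ring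
    have hw : μ {((n, false) : Om)} = μ {((n, true) : Om)} := by
      rw [mu_sing, mu_sing]
    by_cases hm : (n, true) ∈ A
    · have hm' : (n, false) ∈ A := hmem.mp hm
      rw [Set.indicator_of_mem hm (X s), Set.indicator_of_mem hm' (X s),
        Set.indicator_of_mem hm (X t), Set.indicator_of_mem hm' (X t), hXs, hXs, hXt, hw]
      ring
    · have hm' : (n, false) ∉ A := fun h => hm (hmem.mpr h)
      rw [Set.indicator_of_notMem hm (X s), Set.indicator_of_notMem hm' (X s),
        Set.indicator_of_notMem hm (X t), Set.indicator_of_notMem hm' (X t)]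

lemma martingale : Martingale X ℱ μ := by
  refine ⟨adapted, ?_⟩
  intro i j hij
  refine (ae_eq_condExp_of_forall_setIntegral_eq (ℱ.le i) (integrable_X j)
    (fun A _ _ => (integrable_X i).integrableOn)
    (fun A hA _ => setIntegral_eq hij hA) ?_).symm
  exact StronglyMeasurable.aestronglyMeasurable (adapted i)


lemma stop_le {τ : Om → ℝ≥0} (hτ : IsStoppingTime ℱ (fun ω => (τ ω : WithTop ℝ≥0))) {v : ℝ≥0} {ω ω' : Om}
    (hω : g v ω = none) (hω' : g v ω' = none) (h : τ ω ≤ v) : τ ω' ≤ v :=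
  WithTop.coe_le_coe.mp ((mem_iff_of_none (hτ v) hω hω').mp (WithTop.coe_le_coe.mpr h))

lemma optional_sampling (τ : Om → ℝ≥0) (hτ : IsStoppingTime ℱ (fun ω => (τ ω : WithTop ℝ≥0))) :
    Integrable (fun ω => X (τ ω) ω) μ ∧ ∫ ω, X (τ ω) ω ∂μ = ∫ ω, X 0 ω ∂μ := by
  set u : ℝ≥0 := max (τ (0, true)) (τ (0, false)) with hu
  -- Claim A : outside the "known" region at time `u`, `τ ≤ u`.
  have claimA : ∀ ω : Om, ¬ (ω.1 ≠ 0 ∧ (ω.1 : ℝ≥0) ≤ u) → τ ω ≤ u := by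
    intro ω h
    refine stop_le hτ (v := u) (ω := ((0, true) : Om)) ?_ (g_none h) (le_max_left _ _)
    exact g_none (by simp)
  -- Claim B : the stopping decision before `n` cannot depend on the sign.
  have claimB : ∀ (n : ℕ), n ≠ 0 → ∀ b : Bool, τ (n, b) < (n : ℝ≥0) →
      τ (n, !b) ≤ τ (n, b) := by
    intro n hn b hlt
    have h1 : g (τ (n, b)) ((n, b) : Om) = none :=
      g_none (fun h => absurd h.2 (not_le.mpr hlt))
    have h2 : g (τ (n, b)) ((n, !b) : Om) = none :=
      g_none (fun h => absurd h.2 (not_le.mpr hlt))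
    exact stop_le hτ h1 h2 le_rfl
  have claimB' : ∀ (n : ℕ), n ≠ 0 →
      ((n : ℝ≥0) ≤ τ (n, true) ↔ (n : ℝ≥0) ≤ τ (n, false)) := by
    intro n hn
    constructor
    · intro h
      by_contra hc
      have := claimB n hn false (not_le.mp hc)
      simp only [Bool.not_false] at this
      exact absurd (this.trans_lt (not_le.mp hc)) (not_lt.mpr h)
    · intro h
      by_contra hc
      have := claimB n hn true (not_le.mp hc)
      simp only [Bool.not_true] at this
      exact absurd (this.trans_lt (not_le.mp hc)) (not_lt.mpr h)
  -- support of the stopped value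
  have hsupp : ∀ ω ∉ Sf u, X (τ ω) ω = 0 := by
    intro ω hω
    have hgt : ¬ (ω.1 : ℝ≥0) ≤ u := gt_of_not_mem_Sf hω
    have hτω : τ ω ≤ u := claimA ω (fun h => hgt h.2)
    exact X_of_gt (fun hle => hgt (le_trans (hle.trans hτω) le_rfl)) ω.2
  refine ⟨integrable_of_support _ (Sf u) hsupp, ?_⟩
  have hX0 : ∀ ω : Om, X 0 ω = 0 := by
    intro ω
    rw [X_apply, if_neg]
    rintro ⟨h1, h2⟩
    have : ω.1 = 0 := by exact_mod_cast le_antisymm h2 zero_le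
    exact h1 this
  have hrhs : ∫ ω, X 0 ω ∂μ = 0 := by
    simp only [hX0, integral_zero]
  rw [hrhs, integral_eq_sum _ (Sf u) hsupp, Sf, Finset.sum_product]
  refine Finset.sum_eq_zero (fun n _ => ?_)
  rw [Fintype.sum_bool]
  rcases eq_or_ne n 0 with rfl | hn0
  · rw [X_zero_fst, X_zero_fst]
    ring
  · have hwt : μ {((n, true) : Om)} = (W n : ℝ≥0∞) := mu_sing _
    have hwf : μ {((n, false) : Om)} = (W n : ℝ≥0∞) := mu_sing _
    by_cases hle : (n : ℝ≥0) ≤ τ (n, true)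
    · have hle' : (n : ℝ≥0) ≤ τ (n, false) := (claimB' n hn0).mp hle
      rw [X_of_le hn0 hle true, X_of_le hn0 hle' false, hwt, hwf]
      simp only [if_pos, Bool.false_eq_true, if_false, if_true]
      ring
    · have hle' : ¬ (n : ℝ≥0) ≤ τ (n, false) := fun h => hle ((claimB' n hn0).mpr h)
      rw [X_of_gt hle true, X_of_gt hle' false]
      ring


noncomputable def Xinf : Om → ℝ := fun ω =>
  if ω.1 ≠ 0 then (if ω.2 then ((ω.1 : ℝ))^2 else -((ω.1 : ℝ))^2) else 0

lemma W_ge {n : ℕ} (hn : n ≠ 0) : (1/8 : ℝ≥0) ≤ (n : ℝ≥0)^2 * W n := by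
  have h1 : (1 : ℝ) ≤ n := by exact_mod_cast Nat.one_le_iff_ne_zero.mpr hn
  rw [← NNReal.coe_le_coe]
  rw [W, if_neg hn, NNReal.coe_mul, NNReal.coe_inv]
  push_cast
  rw [← div_eq_mul_inv, le_div_iff₀ (by positivity)]
  nlinarith

lemma lint_lb (f : Om → ℝ) (k : ℕ)
    (hf : ∀ n : ℕ, 1 ≤ n → n ≤ k → f (n, true) = (n : ℝ)^2) :
    (k : ℝ≥0∞) / 8 ≤ ∫⁻ ω, ‖f ω‖₊ ∂μ := by
  rw [lintegral_countable' (fun ω => (‖f ω‖₊ : ℝ≥0∞))]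
  set T : Finset Om := (Finset.Icc 1 k).image (fun n => ((n, true) : Om)) with hT
  have hinj : ∀ a ∈ Finset.Icc 1 k, ∀ b ∈ Finset.Icc 1 k,
      ((a, true) : Om) = (b, true) → a = b := fun a _ b _ h => (Prod.mk.injEq ..).mp h |>.1
  calc (k : ℝ≥0∞) / 8 = ∑ n ∈ Finset.Icc 1 k, (1/8 : ℝ≥0∞) := by
        rw [Finset.sum_const, Nat.card_Icc]
        simp only [Nat.add_sub_cancel, nsmul_eq_mul]
        rw [ENNReal.div_eq_inv_mul, one_div, mul_comm]
    _ ≤ ∑ n ∈ Finset.Icc 1 k, (‖f ((n, true) : Om)‖₊ : ℝ≥0∞) * μ {((n, true) : Om)} := by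
        refine Finset.sum_le_sum (fun n hn => ?_)
        obtain ⟨h1, h2⟩ := Finset.mem_Icc.mp hn
        have hn0 : n ≠ 0 := Nat.one_le_iff_ne_zero.mp h1
        have hnorm : ‖f ((n, true) : Om)‖₊ = (n : ℝ≥0)^2 := by
          rw [hf n h1 h2]
          rw [← Real.nnnorm_natCast (n := n)]
          exact nnnorm_pow _ 2
        rw [hnorm, mu_sing]
        calc (1/8 : ℝ≥0∞) = ((1/8 : ℝ≥0) : ℝ≥0∞) := by simp
          _ ≤ (((n : ℝ≥0)^2 * W n : ℝ≥0) : ℝ≥0∞) := ENNReal.coe_le_coe.mpr (W_ge hn0)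
          _ = ((n : ℝ≥0)^2 : ℝ≥0) * (W n : ℝ≥0∞) := by rw [ENNReal.coe_mul]
    _ = ∑ ω ∈ T, (‖f ω‖₊ : ℝ≥0∞) * μ {ω} := by rw [hT, Finset.sum_image hinj]
    _ ≤ ∑' ω : Om, (‖f ω‖₊ : ℝ≥0∞) * μ {ω} := ENNReal.sum_le_tsum T

lemma not_int_Xinf : ¬ Integrable Xinf μ := by
  intro h
  have hfin : ∫⁻ ω, ‖Xinf ω‖₊ ∂μ < ⊤ := h.2
  have hlb : ∀ k : ℕ, (k : ℝ≥0∞) / 8 ≤ ∫⁻ ω, ‖Xinf ω‖₊ ∂μ := by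
    intro k
    refine lint_lb Xinf k (fun n h1 _ => ?_)
    rw [Xinf]
    simp only [Nat.one_le_iff_ne_zero.mp h1, ne_eq, not_false_eq_true, if_true, if_pos]
  obtain ⟨k, hk⟩ := ENNReal.exists_nat_gt
    (r := (∫⁻ ω, ‖Xinf ω‖₊ ∂μ) * 8) (ENNReal.mul_ne_top hfin.ne (by norm_num))
  have h2 : (k : ℝ≥0∞) ≤ (∫⁻ ω, ‖Xinf ω‖₊ ∂μ) * 8 :=
    (ENNReal.div_le_iff_le_mul (Or.inl (by norm_num)) (Or.inl (by norm_num))).mp (hlb k)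
  exact absurd h2 (not_le.mpr hk)


lemma not_ui : ¬ UniformIntegrable X 1 μ := by
  rintro ⟨-, -, C, hC⟩
  set k : ℕ := 8 * (⌊C⌋₊ + 1) with hk
  have hbound := hC (k : ℝ≥0)
  rw [eLpNorm_one_eq_lintegral_enorm] at hbound
  have hlb : (k : ℝ≥0∞) / 8 ≤ ∫⁻ ω, ‖X (k : ℝ≥0) ω‖₊ ∂μ := by
    refine lint_lb _ k (fun n h1 h2 => ?_)
    rw [X_of_le (Nat.one_le_iff_ne_zero.mp h1) (by exact_mod_cast h2) true]
    simp
  have hk8 : (k : ℝ≥0∞) / 8 = ((⌊C⌋₊ + 1 : ℕ) : ℝ≥0∞) := by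
    rw [hk]
    push_cast
    rw [mul_comm, mul_div_assoc, ENNReal.div_self (by norm_num) (by norm_num), mul_one]
  have hCk : (C : ℝ≥0∞) < (k : ℝ≥0∞) / 8 := by
    rw [hk8]
    exact_mod_cast Nat.lt_floor_add_one C
  exact absurd (hlb.trans hbound) (not_le.mpr hCk)

lemma rc (ω : Om) (t : ℝ≥0) : ContinuousWithinAt (fun s => X s ω) (Set.Ici t) t := by
  rcases eq_or_ne ω.1 0 with h0 | h0
  · have h1 : ∀ s, X s ω = 0 := fun s => by rw [X_apply, if_neg (fun h => h.1 h0)]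
    exact (continuousWithinAt_const (b := (0:ℝ))).congr (fun s _ => h1 s) (h1 t)
  · by_cases hle : (ω.1 : ℝ≥0) ≤ t
    · refine (continuousWithinAt_const
        (b := if ω.2 then ((ω.1 : ℝ))^2 else -((ω.1 : ℝ))^2)).congr (fun s hs => ?_) ?_
      · rw [X_apply, if_pos ⟨h0, hle.trans hs⟩]
      · rw [X_apply, if_pos ⟨h0, hle⟩]
    · have hmem : Set.Iio ((ω.1 : ℝ≥0)) ∈ 𝓝[Set.Ici t] t :=
        mem_nhdsWithin_of_mem_nhds (Iio_mem_nhds (not_le.mp hle))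
      refine ContinuousWithinAt.congr_of_eventuallyEq
        (continuousWithinAt_const (b := (0:ℝ))) ?_ ?_
      · filter_upwards [hmem] with s hs
        rw [X_apply, if_neg (fun h => absurd h.2 (not_le.mpr hs))]
      · rw [X_apply, if_neg (fun h => hle h.2)]

lemma tendsto_X (ω : Om) : Tendsto (fun t => X t ω) atTop (𝓝 (Xinf ω)) := by
  rcases eq_or_ne ω.1 0 with h0 | h0
  · have h1 : ∀ s, X s ω = 0 := fun s => by rw [X_apply, if_neg (fun h => h.1 h0)]
    have h2 : Xinf ω = 0 := by rw [Xinf, if_neg (by simp [h0])]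
    rw [h2]
    exact tendsto_const_nhds.congr (fun t => (h1 t).symm)
  · refine Tendsto.congr' ?_ (tendsto_const_nhds (x := Xinf ω))
    filter_upwards [eventually_ge_atTop ((ω.1 : ℝ≥0))] with s hs
    rw [X_apply, if_pos ⟨h0, hs⟩, Xinf, if_pos h0]

end S9

/-- There exist a filtered probability space and a right-continuous martingale `X`
such that `X_τ ∈ L¹` and `E[X_τ] = E[X_0]` for every finite stopping time `τ`, the limit
`X_∞ = lim_{t→∞} X_t` exists a.s., but `X` is not a uniformly integrable martingale (indeed
`X_∞` is not integrable). -/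
theorem statement9 :
    ∃ (Ω : Type) (m : MeasurableSpace Ω) (μ : Measure Ω) (_ : IsProbabilityMeasure μ)
      (ℱ : Filtration ℝ≥0 m) (X : ℝ≥0 → Ω → ℝ) (Xinf : Ω → ℝ),
      Martingale X ℱ μ ∧
      (∀ᵐ ω ∂μ, ∀ t : ℝ≥0, ContinuousWithinAt (fun s => X s ω) (Set.Ici t) t) ∧
      (∀ τ : Ω → ℝ≥0, IsStoppingTime ℱ (fun ω => (τ ω : WithTop ℝ≥0)) →
        Integrable (fun ω => X (τ ω) ω) μ ∧ ∫ ω, X (τ ω) ω ∂μ = ∫ ω, X 0 ω ∂μ) ∧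
      (∀ᵐ ω ∂μ, Tendsto (fun t => X t ω) atTop (𝓝 (Xinf ω))) ∧
      ¬ Integrable Xinf μ ∧
      ¬ UniformIntegrable X 1 μ := by
  refine ⟨S9.Om, inferInstance, S9.μ, inferInstance, S9.ℱ, S9.X, S9.Xinf,
    S9.martingale, ?_, S9.optional_sampling, ?_, S9.not_int_Xinf, S9.not_ui⟩
  · exact ae_of_all _ (fun ω t => S9.rc ω t)
  · exact ae_of_all _ (fun ω => S9.tendsto_X ω)
end

section
/- Let σ be a random variable with values in ℕ ∪ {∞} with P(σ = n) = 1/(2n²), and let U be an independent uniform(0,1) random variable. Then E[σ² 1_{σ ≤ 1/U}] = (1/2) E[⌊1/U⌋] = ∞. -/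
open MeasureTheory Filter ProbabilityTheory
open scoped ENNReal NNReal Topology

lemma statement10_aux_tsum (k : ℕ) :
    ∑' n : ℕ, (if n + 1 ≤ k then (1:ℝ≥0∞) else 0) = k := by
  rw [tsum_eq_sum (s := Finset.range k)
    (by intro n hn; rw [if_neg]; simp [Finset.mem_range] at hn; omega)]
  rw [Finset.sum_congr rfl (fun n hn => by
    rw [if_pos]; simp only [Finset.mem_range] at hn; omega)]
  simp

lemma statement10_aux_harm : ∑' n : ℕ, ((n:ℝ≥0∞)+1)⁻¹ = ⊤ := by
  have h : ¬ Summable (fun n : ℕ => ((n:ℝ)+1)⁻¹) := by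
    intro h
    have h2 := (summable_nat_add_iff (f := fun n : ℕ => 1/(n:ℝ)) 1).mp (by simpa [one_div] using h)
    exact Real.not_summable_one_div_natCast h2
  have hnn : ¬ Summable (fun n : ℕ => ((n:ℝ≥0)+1)⁻¹) := by
    intro h2
    exact h (by simpa [NNReal.coe_inv] using (NNReal.summable_coe.mpr h2))
  have : ∑' n : ℕ, ((((n:ℝ≥0)+1)⁻¹ : ℝ≥0) : ℝ≥0∞) = ⊤ := by
    by_contra hne
    exact hnn (ENNReal.tsum_coe_ne_top_iff_summable.mp hne)
  simpa using this

/-- Let `σ` take values in `{1, 2, ...} ∪ {∞}` with `P(σ = n) = 1/(2n²)`, and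
let `U` be an independent uniform(0,1) random variable. Then
`E[σ² 1_{σ ≤ 1/U}] = (1/2) E[⌊1/U⌋] = ∞`. -/
theorem statement10 {Ω : Type*} {m : MeasurableSpace Ω} {μ : Measure Ω} [IsProbabilityMeasure μ]
    (σ : Ω → ℝ≥0∞) (U : Ω → ℝ)
    (hσmeas : Measurable σ) (hUmeas : Measurable U)
    (hσval : ∀ ω, σ ω = ⊤ ∨ ∃ n : ℕ, 1 ≤ n ∧ σ ω = (n : ℝ≥0∞))
    (hσlaw : ∀ n : ℕ, 1 ≤ n → μ {ω | σ ω = (n : ℝ≥0∞)} = 1 / (2 * (n : ℝ≥0∞) ^ 2))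
    (hUlaw : Measure.map U μ = (volume : Measure ℝ).restrict (Set.Ioo 0 1))
    (hindep : IndepFun σ U μ) :
    (∫⁻ ω, {ω' | σ ω' ≤ ENNReal.ofReal (1 / U ω')}.indicator (fun ω' => (σ ω') ^ 2) ω ∂μ
        = 2⁻¹ * ∫⁻ ω, ((⌊1 / U ω⌋.toNat : ℕ) : ℝ≥0∞) ∂μ) ∧
      ∫⁻ ω, {ω' | σ ω' ≤ ENNReal.ofReal (1 / U ω')}.indicator (fun ω' => (σ ω') ^ 2) ω ∂μ
        = ⊤ := by
  classical
  set S : ℕ → Set ℝ := fun n => Set.Ioo 0 1 ∩ Set.Iic (1/(n+1:ℝ)) with hSdef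
  have hSmeas : ∀ n, MeasurableSet (S n) := fun n => measurableSet_Ioo.inter measurableSet_Iic
  -- uniform law computation
  have hmeasU : ∀ n : ℕ, μ (U ⁻¹' S n) = ((n:ℝ≥0∞)+1)⁻¹ := by
    intro n
    rw [← Measure.map_apply hUmeas (hSmeas n), hUlaw, Measure.restrict_apply (hSmeas n)]
    have hle1 : (1:ℝ)/(n+1:ℝ) ≤ 1 := by
      rw [div_le_one (by positivity)]; linarith [Nat.cast_nonneg (α := ℝ) n]
    have h1 : Set.Ioo (0:ℝ) (1/(n+1:ℝ)) ⊆ S n ∩ Set.Ioo 0 1 := by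
      intro x hx
      exact ⟨⟨⟨hx.1, lt_of_lt_of_le hx.2 hle1⟩, le_of_lt hx.2⟩, hx.1, lt_of_lt_of_le hx.2 hle1⟩
    have h2 : S n ∩ Set.Ioo 0 1 ⊆ Set.Ioc 0 (1/(n+1:ℝ)) := by
      intro x hx; exact ⟨hx.1.1.1, hx.1.2⟩
    have key : ENNReal.ofReal (1/(n+1:ℝ)) = ((n:ℝ≥0∞)+1)⁻¹ := by
      rw [one_div, ENNReal.ofReal_inv_of_pos (by positivity)]
      norm_num [ENNReal.ofReal_add, ENNReal.ofReal_natCast]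
    refine le_antisymm ?_ ?_
    · calc _ ≤ volume (Set.Ioc (0:ℝ) (1/(n+1:ℝ))) := measure_mono h2
        _ = _ := by rw [Real.volume_Ioc, sub_zero, key]
    · have := measure_mono (μ := volume) h1
      rw [Real.volume_Ioo, sub_zero, key] at this
      exact this
  -- u ∈ S n ↔ n+1 ≤ ⌊1/u⌋.toNat, for u ∈ (0,1)
  have hiff : ∀ (u : ℝ), u ∈ Set.Ioo (0:ℝ) 1 → ∀ n : ℕ, (u ∈ S n ↔ n + 1 ≤ (⌊1/u⌋).toNat) := by
    intro u hu n
    have h0 : 0 < u := hu.1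
    rw [Int.le_toNat (Int.floor_nonneg.mpr (by positivity))]
    push_cast
    rw [Int.le_floor]
    push_cast
    constructor
    · intro hS
      rw [le_div_iff₀ h0]
      have := hS.2
      simp only [Set.mem_Iic] at this
      rw [le_div_iff₀ (by positivity)] at this
      linarith
    · intro hle
      refine ⟨hu, ?_⟩
      simp only [Set.mem_Iic]
      rw [le_div_iff₀ (by positivity)]
      rw [le_div_iff₀ h0] at hle
      linarith
  -- E[⌊1/U⌋] = ∞
  have hB : ∫⁻ ω, ((⌊1 / U ω⌋.toNat : ℕ) : ℝ≥0∞) ∂μ = ⊤ := by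
    refine top_le_iff.mp ?_
    have hle : ∀ ω, ∑' n : ℕ, (U ⁻¹' S n).indicator (fun _ => (1:ℝ≥0∞)) ω
        ≤ ((⌊1 / U ω⌋.toNat : ℕ) : ℝ≥0∞) := by
      intro ω
      by_cases hω : U ω ∈ Set.Ioo (0:ℝ) 1
      · calc ∑' n : ℕ, (U ⁻¹' S n).indicator (fun _ => (1:ℝ≥0∞)) ω
            = ∑' n : ℕ, (if n + 1 ≤ (⌊1/U ω⌋).toNat then (1:ℝ≥0∞) else 0) :=
              tsum_congr fun n => by
                rw [Set.indicator_apply]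
                exact if_congr (hiff (U ω) hω n) rfl rfl
          _ = ((⌊1 / U ω⌋.toNat : ℕ) : ℝ≥0∞) := statement10_aux_tsum _
          _ ≤ _ := le_rfl
      · have hnot : ∀ n : ℕ, ω ∉ U ⁻¹' S n := fun n hn => hω hn.1
        simp only [Set.indicator_of_notMem (hnot _), tsum_zero]
        exact zero_le
    calc (⊤:ℝ≥0∞) = ∑' n : ℕ, μ (U ⁻¹' S n) := by
          simp_rw [hmeasU]; exact statement10_aux_harm.symm
      _ = ∑' n : ℕ, ∫⁻ ω, (U ⁻¹' S n).indicator (fun _ => (1:ℝ≥0∞)) ω ∂μ :=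
          tsum_congr fun n =>
            (lintegral_indicator_one (hUmeas (hSmeas n))).symm
      _ = ∫⁻ ω, ∑' n : ℕ, (U ⁻¹' S n).indicator (fun _ => (1:ℝ≥0∞)) ω ∂μ :=
          (lintegral_tsum fun n =>
            ((measurable_one.indicator (hUmeas (hSmeas n))).aemeasurable)).symm
      _ ≤ _ := lintegral_mono hle
  -- the events for σ
  set C : ℕ → Set Ω := fun n => σ ⁻¹' {((n+1:ℕ) : ℝ≥0∞)} ∩ U ⁻¹' S n with hCdef
  have hCmeas : ∀ n, MeasurableSet (C n) :=
    fun n => (hσmeas (measurableSet_singleton _)).inter (hUmeas (hSmeas n))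
  have hterm : ∀ n : ℕ, ((n:ℝ≥0∞)+1)^2 * μ (C n) = 2⁻¹ * ((n:ℝ≥0∞)+1)⁻¹ := by
    intro n
    have hind := (indepFun_iff_measure_inter_preimage_eq_mul.mp hindep)
      {((n+1:ℕ) : ℝ≥0∞)} (S n) (measurableSet_singleton _) (hSmeas n)
    have hpre : σ ⁻¹' {((n+1:ℕ) : ℝ≥0∞)} = {ω | σ ω = ((n+1:ℕ) : ℝ≥0∞)} := rfl
    rw [hCdef] at *
    rw [hind, hpre, hσlaw (n+1) (by omega), hmeasU n]
    set x : ℝ≥0∞ := (n:ℝ≥0∞)+1 with hx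
    have hxe : ((n+1:ℕ) : ℝ≥0∞) = x := by push_cast; rfl
    have hx0 : x ≠ 0 := by rw [← hxe]; exact_mod_cast Nat.succ_ne_zero n
    have hxt : x ≠ ⊤ := by rw [← hxe]; exact ENNReal.natCast_ne_top _
    rw [hxe, one_div, ENNReal.mul_inv (Or.inl two_ne_zero) (Or.inl ENNReal.ofNat_ne_top)]
    rw [show x^2 * (2⁻¹ * (x^2)⁻¹ * x⁻¹) = (x^2 * (x^2)⁻¹) * (2⁻¹ * x⁻¹) by ring,
      ENNReal.mul_inv_cancel (pow_ne_zero _ hx0) (ENNReal.pow_ne_top hxt), one_mul]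
  -- pointwise lower bound
  have hpt : ∀ ω, ∑' n : ℕ, (C n).indicator (fun _ => ((n:ℝ≥0∞)+1)^2) ω
      ≤ {ω' | σ ω' ≤ ENNReal.ofReal (1 / U ω')}.indicator (fun ω' => (σ ω') ^ 2) ω := by
    intro ω
    by_cases hω : ∃ n, ω ∈ C n
    · obtain ⟨n, hn⟩ := hω
      have huniq : ∀ k, k ≠ n → (C k).indicator (fun _ => ((k:ℝ≥0∞)+1)^2) ω = 0 := by
        intro k hk
        apply Set.indicator_of_notMem
        intro hkC
        have h1 : σ ω = ((n+1:ℕ) : ℝ≥0∞) := hn.1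
        have h2 : σ ω = ((k+1:ℕ) : ℝ≥0∞) := hkC.1
        rw [h1] at h2
        have hnk : n + 1 = k + 1 := Nat.cast_inj.mp h2
        omega
      rw [tsum_eq_single n huniq]
      have hU : U ω ∈ S n := hn.2
      have h0 : 0 < U ω := hU.1.1
      have hmem : ω ∈ {ω' | σ ω' ≤ ENNReal.ofReal (1 / U ω')} := by
        have hle : ((n+1:ℕ):ℝ) ≤ 1 / U ω := by
          push_cast
          rw [le_div_iff₀ h0]
          have := hU.2
          simp only [Set.mem_Iic] at this
          rw [le_div_iff₀ (by positivity)] at this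
          linarith
        show σ ω ≤ ENNReal.ofReal (1 / U ω)
        rw [hn.1, ← ENNReal.ofReal_natCast]
        exact ENNReal.ofReal_le_ofReal hle
      rw [Set.indicator_of_mem hn, Set.indicator_of_mem hmem, hn.1]
      push_cast
      exact le_refl _
    · push_neg at hω
      have h0 : ∀ n : ℕ, (C n).indicator (fun _ => ((n:ℝ≥0∞)+1)^2) ω = 0 :=
        fun n => Set.indicator_of_notMem (hω n) _
      simp only [h0, tsum_zero]
      exact zero_le
  -- LHS = ∞
  have hC : ∫⁻ ω, {ω' | σ ω' ≤ ENNReal.ofReal (1 / U ω')}.indicator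
      (fun ω' => (σ ω') ^ 2) ω ∂μ = ⊤ := by
    refine top_le_iff.mp ?_
    calc (⊤:ℝ≥0∞) = ∑' n : ℕ, 2⁻¹ * ((n:ℝ≥0∞)+1)⁻¹ := by
          rw [ENNReal.tsum_mul_left, statement10_aux_harm, ENNReal.mul_top (by norm_num)]
      _ = ∑' n : ℕ, ∫⁻ ω, (C n).indicator (fun _ => ((n:ℝ≥0∞)+1)^2) ω ∂μ :=
          tsum_congr fun n => by
            rw [lintegral_indicator_const (hCmeas n), hterm n]
      _ = ∫⁻ ω, ∑' n : ℕ, (C n).indicator (fun _ => ((n:ℝ≥0∞)+1)^2) ω ∂μ :=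
          (lintegral_tsum fun n =>
            ((measurable_const.indicator (hCmeas n)).aemeasurable)).symm
      _ ≤ _ := lintegral_mono hpt
  refine ⟨?_, hC⟩
  rw [hC, hB, ENNReal.mul_top (by norm_num)]
end

section
/- Assume the filtration and paths of X are right-continuous, X_τ is integrable for all finite stopping times τ, and there exists a finite stopping time η and an F_η-measurable uniform(0,1) random variable U. Then E[liminf_{t→∞} |X_t| | F_η] < ∞ almost surely. -/
open MeasureTheory Filter ProbabilityTheory
open scoped ENNReal NNReal Topology

section AuxLemmas

lemma statement13_auxA {g : ℝ≥0 → ℝ≥0∞} (hg : ∀ t, ContinuousWithinAt g (Set.Ici t) t)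
    {d : ℕ → ℝ≥0} (hd : DenseRange d) (s : ℝ≥0) :
    ⨅ (j : ℕ) (_ : s ≤ d j), g (d j) = ⨅ (t : ℝ≥0) (_ : s ≤ t), g t := by
  apply le_antisymm
  · refine le_iInf₂ fun t hts => ?_
    have ht : t ∈ closure (Set.Ioi t ∩ Set.range d) := by
      have h1 : Set.Ioi t ⊆ closure (Set.Ioi t ∩ Set.range d) :=
        hd.open_subset_closure_inter isOpen_Ioi
      have h2 : t ∈ closure (Set.Ioi t) := by
        rw [closure_Ioi]; exact Set.self_mem_Ici
      exact closure_minimal h1 isClosed_closure h2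
    have hcw : ContinuousWithinAt g (Set.Ioi t ∩ Set.range d) t :=
      (hg t).mono (fun x hx => Set.mem_Ici.mpr (le_of_lt hx.1))
    have hmem : g t ∈ closure (g '' (Set.Ioi t ∩ Set.range d)) :=
      hcw.mem_closure_image ht
    have hlb : ∀ y ∈ g '' (Set.Ioi t ∩ Set.range d),
        (⨅ (j : ℕ) (_ : s ≤ d j), g (d j)) ≤ y := by
      rintro y ⟨x, ⟨hx1, j, rfl⟩, rfl⟩
      exact iInf₂_le j (hts.trans hx1.le)
    have hcl : IsClosed {y : ℝ≥0∞ | (⨅ (j : ℕ) (_ : s ≤ d j), g (d j)) ≤ y} :=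
      isClosed_le continuous_const continuous_id
    exact hcl.closure_subset_iff.mpr hlb hmem
  · exact le_iInf₂ fun j hj => iInf₂_le (d j) hj

lemma statement13_auxB (g : ℝ≥0 → ℝ≥0∞) :
    liminf g atTop = ⨆ n : ℕ, ⨅ (t : ℝ≥0) (_ : (n : ℝ≥0) ≤ t), g t := by
  apply le_antisymm
  · rw [liminf_eq]
    refine sSup_le fun a ha => ?_
    simp only [Set.mem_setOf_eq, eventually_atTop] at ha
    obtain ⟨s, hs⟩ := ha
    obtain ⟨n, hn⟩ := exists_nat_ge s
    exact le_iSup_of_le n (le_iInf₂ fun t ht => hs t (hn.trans ht))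
  · refine iSup_le fun n => ?_
    refine le_liminf_of_le (by isBoundedDefault) ?_
    exact eventually_atTop.mpr ⟨n, fun t ht => iInf₂_le t ht⟩

lemma statement13_auxD (g : ℝ≥0 → ℝ≥0∞) :
    liminf g atTop ≤ liminf (fun n : ℕ => g n) atTop := by
  rw [liminf_eq, liminf_eq]
  refine sSup_le fun a ha => le_sSup ?_
  simp only [Set.mem_setOf_eq, eventually_atTop] at ha ⊢
  obtain ⟨s, hs⟩ := ha
  obtain ⟨n, hn⟩ := exists_nat_ge s
  exact ⟨n, fun j hj => hs j (hn.trans (by exact_mod_cast hj))⟩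

lemma statement13_auxE {u : ℕ → ℝ≥0∞} {c : ℝ≥0∞} :
    liminf u atTop ⊓ c ≤ liminf (fun n => u n ⊓ c) atTop := by
  refine le_of_forall_lt fun a ha => ?_
  obtain ⟨a', haa', ha'⟩ := exists_between ha
  have h1' : a' < liminf u atTop := lt_of_lt_of_le ha' inf_le_left
  have h2' : a' < c := lt_of_lt_of_le ha' inf_le_right
  have hev : ∀ᶠ n in atTop, a' ≤ u n ⊓ c :=
    (eventually_lt_of_lt_liminf h1').mono fun n hn => le_inf hn.le h2'.le
  exact lt_of_lt_of_le haa' (le_liminf_of_le (by isBoundedDefault) hev)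

lemma statement13_auxRN {Ω : Type*} {m0 m : MeasurableSpace Ω} (hm : m0 ≤ m) (μ : Measure Ω)
    [IsFiniteMeasure μ] {φ : Ω → ℝ≥0∞} (hφ : Measurable φ) (hint : ∫⁻ ω, φ ω ∂μ ≠ ∞) :
    ∃ ρ : Ω → ℝ≥0∞, Measurable[m0] ρ ∧ ∀ s : Set Ω, MeasurableSet[m0] s →
      ∫⁻ ω in s, ρ ω ∂μ = ∫⁻ ω in s, φ ω ∂μ := by
  set ν : @Measure Ω m0 := (μ.withDensity φ).trim hm with hν
  set μ0 : @Measure Ω m0 := μ.trim hm with hμ0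
  haveI : IsFiniteMeasure μ0 := ⟨by
    rw [hμ0, trim_measurableSet_eq hm MeasurableSet.univ]; exact measure_lt_top μ _⟩
  haveI : IsFiniteMeasure ν := ⟨by
    rw [hν, trim_measurableSet_eq hm MeasurableSet.univ,
      withDensity_apply _ MeasurableSet.univ, Measure.restrict_univ]
    exact hint.lt_top⟩
  have habs : ν ≪ μ0 := by
    refine Measure.AbsolutelyContinuous.mk fun s hs h0 => ?_
    rw [hμ0, trim_measurableSet_eq hm hs] at h0
    rw [hν, trim_measurableSet_eq hm hs, withDensity_apply _ (hm s hs),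
      Measure.restrict_eq_zero.mpr h0, lintegral_zero_measure]
  refine ⟨ν.rnDeriv μ0, Measure.measurable_rnDeriv ν μ0, fun s hs => ?_⟩
  have h1 : ∫⁻ ω in s, ν.rnDeriv μ0 ω ∂μ = ∫⁻ ω in s, ν.rnDeriv μ0 ω ∂μ0 := by
    rw [hμ0, restrict_trim hm μ hs, lintegral_trim _ (Measure.measurable_rnDeriv ν μ0)]
  rw [h1, Measure.setLIntegral_rnDeriv' habs hs, hν, trim_measurableSet_eq hm hs,
    withDensity_apply _ (hm s hs)]

/-- Partition lemma: a positive-measure set `A` can be split using a uniform variable into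
countably many positive-measure slices given by disjoint measurable subsets of `ℝ`. -/
lemma statement13_auxPartition {Ω : Type*} {m : MeasurableSpace Ω} (μ : Measure Ω)
    [IsProbabilityMeasure μ] (A : Set Ω) (hA : MeasurableSet A) (hA0 : μ A ≠ 0)
    (U : Ω → ℝ) (hU : Measurable U)
    (hUlaw : Measure.map U μ = (volume : Measure ℝ).restrict (Set.Ioo 0 1)) :
    ∃ T : ℕ → Set ℝ, (∀ k, MeasurableSet (T k)) ∧ Pairwise (Function.onFun Disjoint T) ∧
      (∀ k, μ (A ∩ U ⁻¹' T k) ≠ 0) := by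
  have hUpre : ∀ s : Set ℝ, MeasurableSet s → μ (U ⁻¹' s) = volume (s ∩ Set.Ioo 0 1) := by
    intro s hs
    rw [← Measure.map_apply hU hs, hUlaw, Measure.restrict_apply hs]
  set G : ℝ → ℝ≥0∞ := fun t => μ (A ∩ U ⁻¹' Set.Iic t) with hGdef
  have hGfin : ∀ t, G t ≠ ⊤ := fun t => measure_ne_top μ _
  have hGmono : Monotone G := fun s t hst =>
    measure_mono (Set.inter_subset_inter_right _ (Set.preimage_mono (Set.Iic_subset_Iic.mpr hst)))
  have hGsub : ∀ s t : ℝ, s ≤ t → G t ≤ G s + ENNReal.ofReal (t - s) := by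
    intro s t hst
    have hsplit : A ∩ U ⁻¹' Set.Iic t ⊆ (A ∩ U ⁻¹' Set.Iic s) ∪ U ⁻¹' Set.Ioc s t := by
      rintro ω ⟨hω1, hω2⟩
      by_cases hle : U ω ≤ s
      · exact Or.inl ⟨hω1, hle⟩
      · exact Or.inr ⟨lt_of_not_ge hle, hω2⟩
    calc G t ≤ μ ((A ∩ U ⁻¹' Set.Iic s) ∪ U ⁻¹' Set.Ioc s t) := measure_mono hsplit
      _ ≤ G s + μ (U ⁻¹' Set.Ioc s t) := measure_union_le _ _
      _ ≤ G s + ENNReal.ofReal (t - s) := by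
        refine add_le_add le_rfl ?_
        rw [hUpre _ measurableSet_Ioc]
        calc volume (Set.Ioc s t ∩ Set.Ioo 0 1) ≤ volume (Set.Ioc s t) :=
            measure_mono (Set.inter_subset_left)
          _ = ENNReal.ofReal (t - s) := by rw [Real.volume_Ioc]
  set F : ℝ → ℝ := fun t => (G t).toReal with hFdef
  have hFmono : Monotone F := fun s t hst => ENNReal.toReal_mono (hGfin t) (hGmono hst)
  have hFsub : ∀ s t : ℝ, s ≤ t → F t - F s ≤ t - s := by
    intro s t hst
    have h1 : F t ≤ F s + (t - s) := by
      have := ENNReal.toReal_mono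
        (ENNReal.add_ne_top.mpr ⟨hGfin s, ENNReal.ofReal_ne_top⟩) (hGsub s t hst)
      rwa [ENNReal.toReal_add (hGfin s) ENNReal.ofReal_ne_top,
        ENNReal.toReal_ofReal (sub_nonneg.mpr hst)] at this
    linarith
  have hFcont : Continuous F := by
    refine (LipschitzWith.of_dist_le_mul (K := 1) fun x y => ?_).continuous
    rw [Real.dist_eq, Real.dist_eq, NNReal.coe_one, one_mul]
    rcases le_total x y with h | h
    · rw [abs_sub_comm, abs_of_nonneg (sub_nonneg.mpr (hFmono h)),
        abs_sub_comm, abs_of_nonneg (sub_nonneg.mpr h)]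
      exact hFsub x y h
    · rw [abs_of_nonneg (sub_nonneg.mpr (hFmono h)), abs_of_nonneg (sub_nonneg.mpr h)]
      exact hFsub y x h
  have hG0 : G 0 = 0 := by
    refine le_antisymm ?_ zero_le
    calc G 0 ≤ μ (U ⁻¹' Set.Iic 0) := measure_mono Set.inter_subset_right
      _ = volume (Set.Iic 0 ∩ Set.Ioo 0 1) := hUpre _ measurableSet_Iic
      _ = 0 := by
        convert measure_empty
        · ext x
          simp only [Set.mem_inter_iff, Set.mem_Iic, Set.mem_Ioo, Set.mem_empty_iff_false,
            iff_false, not_and]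
          intro h1 h2
          linarith
        · infer_instance
  have hG1 : G 1 = μ A := by
    refine le_antisymm (measure_mono Set.inter_subset_left) ?_
    have hsplit : A ⊆ (A ∩ U ⁻¹' Set.Iic 1) ∪ U ⁻¹' Set.Ioi 1 := by
      intro ω hω
      by_cases hle : U ω ≤ 1
      · exact Or.inl ⟨hω, hle⟩
      · exact Or.inr (lt_of_not_ge hle)
    have h0 : μ (U ⁻¹' Set.Ioi 1) = 0 := by
      rw [hUpre _ measurableSet_Ioi]
      convert measure_empty
      · ext x
        simp only [Set.mem_inter_iff, Set.mem_Ioi, Set.mem_Ioo, Set.mem_empty_iff_false,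
          iff_false, not_and]
        intro h1 h2
        linarith
      · infer_instance
    calc μ A ≤ μ ((A ∩ U ⁻¹' Set.Iic 1) ∪ U ⁻¹' Set.Ioi 1) := measure_mono hsplit
      _ ≤ G 1 + μ (U ⁻¹' Set.Ioi 1) := measure_union_le _ _
      _ = G 1 := by rw [h0, add_zero]
  set ar : ℝ := (μ A).toReal with hardef
  have har : 0 < ar := ENNReal.toReal_pos hA0 (measure_ne_top μ _)
  set r : ℕ → ℝ := fun k => ar * (1 - (2⁻¹ : ℝ) ^ k) with hrdef
  have hrmono : StrictMono r := by
    intro j k hjk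
    have hpow : (2⁻¹ : ℝ) ^ k < (2⁻¹ : ℝ) ^ j :=
      pow_lt_pow_right_of_lt_one₀ (by norm_num) (by norm_num) hjk
    have := mul_lt_mul_of_pos_left (sub_lt_sub_left hpow 1) har
    simpa [hrdef] using this
  have hrmem : ∀ k, r k ∈ Set.Icc (F 0) (F 1) := by
    intro k
    have h1 : (0:ℝ) < (2⁻¹ : ℝ) ^ k := by positivity
    have h2 : (2⁻¹ : ℝ) ^ k ≤ 1 := pow_le_one₀ (by norm_num) (by norm_num)
    have hF0 : F 0 = 0 := by rw [hFdef]; simp only [hG0, ENNReal.toReal_zero]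
    have hF1 : F 1 = ar := by simp only [hFdef, hG1, hardef]
    rw [hF0, hF1]
    constructor
    · show (0:ℝ) ≤ ar * (1 - (2⁻¹ : ℝ) ^ k)
      nlinarith
    · show ar * (1 - (2⁻¹ : ℝ) ^ k) ≤ ar
      nlinarith
  have hIVT : ∀ k : ℕ, ∃ x, x ∈ Set.Icc (0:ℝ) 1 ∧ F x = r k := by
    intro k
    obtain ⟨x, hx, hFx⟩ := intermediate_value_Icc (zero_le_one) hFcont.continuousOn (hrmem k)
    exact ⟨x, hx, hFx⟩
  choose t htIcc htF using hIVT
  have htmono : StrictMono t := by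
    intro j k hjk
    by_contra hc
    push_neg at hc
    have := hFmono hc
    rw [htF j, htF k] at this
    exact absurd (hrmono hjk) (not_lt.mpr this)
  refine ⟨fun k => Set.Ioc (t k) (t (k + 1)), fun k => measurableSet_Ioc, ?_, ?_⟩
  · intro j k hjk
    rcases hjk.lt_or_gt with h | h
    · have hle : t (j + 1) ≤ t k := htmono.monotone (Nat.succ_le_of_lt h)
      refine Set.disjoint_left.mpr fun x hxj hxk => ?_
      exact absurd (hxj.2.trans hle) (not_le.mpr hxk.1)
    · have hle : t (k + 1) ≤ t j := htmono.monotone (Nat.succ_le_of_lt h)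
      refine Set.disjoint_left.mpr fun x hxj hxk => ?_
      exact absurd (hxk.2.trans hle) (not_le.mpr hxj.1)
  · intro k
    have hunion : A ∩ U ⁻¹' Set.Iic (t (k + 1)) =
        (A ∩ U ⁻¹' Set.Iic (t k)) ∪ (A ∩ U ⁻¹' Set.Ioc (t k) (t (k + 1))) := by
      ext ω
      simp only [Set.mem_inter_iff, Set.mem_preimage, Set.mem_Iic, Set.mem_union, Set.mem_Ioc]
      constructor
      · rintro ⟨h1, h2⟩
        by_cases hle : U ω ≤ t k
        · exact Or.inl ⟨h1, hle⟩
        · exact Or.inr ⟨h1, lt_of_not_ge hle, h2⟩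
      · rintro (⟨h1, h2⟩ | ⟨h1, h2, h3⟩)
        · exact ⟨h1, h2.trans (htmono (Nat.lt_succ_self k)).le⟩
        · exact ⟨h1, h3⟩
    have hdisj : Disjoint (A ∩ U ⁻¹' Set.Iic (t k)) (A ∩ U ⁻¹' Set.Ioc (t k) (t (k + 1))) := by
      refine Set.disjoint_left.mpr fun ω hω1 hω2 => ?_
      exact absurd hω1.2 (not_le.mpr hω2.2.1)
    have hmeas2 : MeasurableSet (A ∩ U ⁻¹' Set.Ioc (t k) (t (k + 1))) :=
      hA.inter (hU measurableSet_Ioc)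
    have hsum : G (t (k + 1)) = G (t k) + μ (A ∩ U ⁻¹' Set.Ioc (t k) (t (k + 1))) := by
      rw [hGdef]
      simp only
      rw [hunion, measure_union hdisj hmeas2]
    intro hzero
    rw [hzero, add_zero] at hsum
    have : F (t (k + 1)) = F (t k) := by rw [hFdef]; simp only [hsum]
    rw [htF, htF] at this
    exact absurd this (ne_of_gt (hrmono (Nat.lt_succ_self k)))

end AuxLemmas

/-- If the filtration and the paths of `X` are right-continuous, `X_τ ∈ L¹` for
all finite stopping times `τ`, and there are a finite stopping time `η` and an
`ℱ_η`-measurable uniform(0,1) random variable `U`, then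
`E[liminf_{t→∞} |X_t| | ℱ_η] < ∞` a.s.  The conditional expectation is expressed by an
`ℱ_η`-measurable, a.e. finite `g : Ω → ℝ≥0∞` with `∫_s liminf |X| dμ = ∫_s g dμ` for all
`s ∈ ℱ_η`. -/
theorem statement13 {Ω : Type*} {m : MeasurableSpace Ω} {μ : Measure Ω} [IsProbabilityMeasure μ]
    (ℱ : Filtration ℝ≥0 m) (X : ℝ≥0 → Ω → ℝ)
    (hℱ : ∀ t : ℝ≥0, ℱ t = ⨅ s : {s : ℝ≥0 // t < s}, ℱ s.1)
    (hadapted : Adapted ℱ X)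
    (hrc : ∀ᵐ ω ∂μ, ∀ t : ℝ≥0, ContinuousWithinAt (fun s => X s ω) (Set.Ici t) t)
    (hstop : ∀ τ : Ω → ℝ≥0, IsStoppingTime ℱ (fun ω => (τ ω : WithTop ℝ≥0)) → Integrable (fun ω => X (τ ω) ω) μ)
    (η : Ω → ℝ≥0) (hη : IsStoppingTime ℱ (fun ω => (η ω : WithTop ℝ≥0)))
    (U : Ω → ℝ) (hUmeas : Measurable[hη.measurableSpace] U)
    (hUlaw : Measure.map U μ = (volume : Measure ℝ).restrict (Set.Ioo 0 1)) :
    ∃ g : Ω → ℝ≥0∞, Measurable[hη.measurableSpace] g ∧ (∀ᵐ ω ∂μ, g ω < ⊤) ∧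
      ∀ s : Set Ω, MeasurableSet[hη.measurableSpace] s →
        ∫⁻ ω in s, Filter.liminf (fun t => (‖X t ω‖₊ : ℝ≥0∞)) atTop ∂μ
          = ∫⁻ ω in s, g ω ∂μ := by
  classical
  set m0 := hη.measurableSpace with hm0def
  have hm : m0 ≤ m := hη.measurableSpace_le
  have hXm : ∀ t : ℝ≥0, Measurable[m] (X t) := fun t =>
    (hadapted t).mono (ℱ.le t) le_rfl
  -- the liminf and its measurable version
  set L : Ω → ℝ≥0∞ := fun ω => liminf (fun t => (‖X t ω‖₊ : ℝ≥0∞)) atTop with hLdef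
  obtain ⟨d, hd⟩ : ∃ d : ℕ → ℝ≥0, DenseRange d :=
    ⟨TopologicalSpace.denseSeq ℝ≥0, TopologicalSpace.denseRange_denseSeq ℝ≥0⟩
  set L' : Ω → ℝ≥0∞ :=
    fun ω => ⨆ n : ℕ, ⨅ (j : ℕ) (_ : (n : ℝ≥0) ≤ d j), (‖X (d j) ω‖₊ : ℝ≥0∞) with hL'def
  have hXe : ∀ t : ℝ≥0, Measurable[m] fun ω => (‖X t ω‖₊ : ℝ≥0∞) := fun t =>
    measurable_coe_nnreal_ennreal.comp (measurable_nnnorm.comp (hXm t))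
  have hL'meas : Measurable[m] L' :=
    Measurable.iSup fun n => Measurable.iInf fun j => Measurable.iInf fun _ => hXe (d j)
  have hLL' : ∀ᵐ ω ∂μ, L ω = L' ω := by
    refine hrc.mono fun ω hω => ?_
    have hg : ∀ t, ContinuousWithinAt (fun s : ℝ≥0 => (‖X s ω‖₊ : ℝ≥0∞)) (Set.Ici t) t :=
      fun t => (ENNReal.continuous_coe.comp continuous_nnnorm).continuousAt.comp_continuousWithinAt (hω t)
    rw [hLdef]
    simp only [hL'def]
    rw [statement13_auxB]
    exact iSup_congr fun n => (statement13_auxA hg hd (n : ℝ≥0)).symm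
  -- pointwise comparison with the integer-time liminf
  have hLseq : ∀ ω, L ω ≤ liminf (fun n : ℕ => (‖X (n : ℝ≥0) ω‖₊ : ℝ≥0∞)) atTop :=
    fun ω => statement13_auxD _
  -- integrability at fixed integer times
  have hXint : ∀ n : ℕ, ∫⁻ ω, (‖X (n : ℝ≥0) ω‖₊ : ℝ≥0∞) ∂μ ≠ ∞ := fun n =>
    ((hstop (fun _ => (n : ℝ≥0)) (isStoppingTime_const ℱ _)).2 :
      HasFiniteIntegral _ μ).ne
  -- conditional expectations of |X n|
  have hfex : ∀ n : ℕ, ∃ ρ : Ω → ℝ≥0∞, Measurable[m0] ρ ∧ ∀ s : Set Ω,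
      MeasurableSet[m0] s →
      ∫⁻ ω in s, ρ ω ∂μ = ∫⁻ ω in s, (‖X (n : ℝ≥0) ω‖₊ : ℝ≥0∞) ∂μ :=
    fun n => statement13_auxRN hm μ (hXe _) (hXint n)
  choose f hfmeas hfprop using hfex
  -- conditional expectations of truncations of L'
  have hg0ex : ∀ k : ℕ, ∃ ρ : Ω → ℝ≥0∞, Measurable[m0] ρ ∧ ∀ s : Set Ω,
      MeasurableSet[m0] s →
      ∫⁻ ω in s, ρ ω ∂μ = ∫⁻ ω in s, L' ω ⊓ (k : ℝ≥0∞) ∂μ := by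
    intro k
    refine statement13_auxRN hm μ (hL'meas.inf measurable_const) (ne_top_of_le_ne_top ?_
      (lintegral_mono fun ω => inf_le_right))
    rw [lintegral_const]
    exact (ENNReal.mul_lt_top (ENNReal.natCast_ne_top k).lt_top (measure_lt_top μ _)).ne
  choose g0 hg0meas hg0prop using hg0ex
  -- a.e. monotonicity of g0
  haveI : IsFiniteMeasure (μ.trim hm) :=
    ⟨by rw [trim_measurableSet_eq hm MeasurableSet.univ]; exact measure_lt_top μ _⟩
  have hg0mono : ∀ k : ℕ, g0 k ≤ᵐ[μ] g0 (k + 1) := by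
    intro k
    refine ae_le_of_ae_le_trim (hm := hm)
      (ae_le_of_forall_setLIntegral_le_of_sigmaFinite (hg0meas k) fun s hs _ => ?_)
    have htr : ∀ j : ℕ, ∫⁻ ω in s, g0 j ω ∂(μ.trim hm) = ∫⁻ ω in s, g0 j ω ∂μ := by
      intro j
      rw [restrict_trim hm μ hs, lintegral_trim _ (hg0meas j)]
    rw [htr k, htr (k + 1), hg0prop k s hs, hg0prop (k + 1) s hs]
    refine lintegral_mono fun ω => le_inf inf_le_left (le_trans inf_le_right ?_)
    exact_mod_cast Nat.cast_le.mpr (Nat.le_succ k)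
  have hg0mono' : ∀ᵐ ω ∂μ, Monotone fun k : ℕ => g0 k ω := by
    have h1 : ∀ᵐ ω ∂μ, ∀ k : ℕ, g0 k ω ≤ g0 (k + 1) ω := ae_all_iff.mpr hg0mono
    exact h1.mono fun ω hω => monotone_nat_of_le_succ hω
  -- the candidate function g
  set g : Ω → ℝ≥0∞ := fun ω => ⨆ k : ℕ, g0 k ω with hgdef
  have hgmeas : Measurable[m0] g := Measurable.iSup hg0meas
  have hgprop : ∀ s : Set Ω, MeasurableSet[m0] s →
      ∫⁻ ω in s, L' ω ∂μ = ∫⁻ ω in s, g ω ∂μ := by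
    intro s hs
    have h1 : ∫⁻ ω in s, g ω ∂μ = ⨆ k : ℕ, ∫⁻ ω in s, g0 k ω ∂μ :=
      lintegral_iSup' (fun k => ((hg0meas k).mono hm le_rfl).aemeasurable)
        (ae_restrict_of_ae hg0mono')
    have h4 : ∀ ω, L' ω = ⨆ k : ℕ, L' ω ⊓ (k : ℝ≥0∞) := fun ω => by
      rw [← inf_iSup_eq, ENNReal.iSup_natCast, inf_top_eq]
    have h3 : ∫⁻ ω in s, L' ω ∂μ = ⨆ k : ℕ, ∫⁻ ω in s, L' ω ⊓ (k : ℝ≥0∞) ∂μ := by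
      calc ∫⁻ ω in s, L' ω ∂μ = ∫⁻ ω in s, ⨆ k : ℕ, L' ω ⊓ (k : ℝ≥0∞) ∂μ :=
            lintegral_congr fun ω => h4 ω
        _ = ⨆ k : ℕ, ∫⁻ ω in s, L' ω ⊓ (k : ℝ≥0∞) ∂μ := by
            refine lintegral_iSup (fun k => hL'meas.inf measurable_const) ?_
            intro j k hjk ω
            exact inf_le_inf le_rfl (by exact_mod_cast Nat.cast_le.mpr hjk)
    rw [h1, h3]
    exact iSup_congr fun k => (hg0prop k s hs).symm
  -- the set where g is infinite is null
  have hA : μ {ω | g ω = ⊤} = 0 := by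
    by_contra hA0
    set A : Set Ω := {ω | g ω = ⊤} with hAdef
    have hAmeas0 : MeasurableSet[m0] A := hgmeas (measurableSet_singleton ⊤)
    have hUm : Measurable[m] U := hUmeas.mono hm le_rfl
    obtain ⟨T, hTmeas, hTdisj, hTpos⟩ :=
      statement13_auxPartition μ A (hm _ hAmeas0) hA0 U hUm hUlaw
    set B : ℕ → Set Ω := fun k => A ∩ U ⁻¹' T k with hBdef
    have hB0 : ∀ k, MeasurableSet[m0] (B k) := fun k => hAmeas0.inter (hUmeas (hTmeas k))
    have hBm : ∀ k, MeasurableSet[m] (B k) := fun k => hm _ (hB0 k)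
    have hBpos : ∀ k, μ (B k) ≠ 0 := hTpos
    have hBfin : ∀ k, μ (B k) ≠ ⊤ := fun k => measure_ne_top μ _
    have hBdisj : Pairwise (Function.onFun Disjoint B) := fun j k hjk =>
      ((hTdisj hjk).preimage U).mono Set.inter_subset_right Set.inter_subset_right
    have hBsubA : ∀ k, B k ⊆ A := fun k => Set.inter_subset_left
    -- the weight function
    set c : ℕ → ℝ≥0∞ := fun k => (μ (B k))⁻¹ with hcdef
    have hcfin : ∀ k, c k ≠ ⊤ := fun k => ENNReal.inv_ne_top.mpr (hBpos k)
    set h : Ω → ℝ≥0∞ := fun ω => ∑' k : ℕ, (B k).indicator (fun _ => c k) ω with hhdef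
    have hh0 : Measurable[m0] h :=
      Measurable.ennreal_tsum fun k => measurable_const.indicator (hB0 k)
    have hhval : ∀ k, ∀ ω ∈ B k, h ω = c k := by
      intro k ω hω
      show (∑' j : ℕ, (B j).indicator (fun _ => c j) ω) = c k
      have hsingle : ∀ j : ℕ, j ≠ k → (B j).indicator (fun _ => c j) ω = 0 := by
        intro j hj
        have hnot : ω ∉ B j := fun hωj => Set.disjoint_left.mp (hBdisj hj) hωj hω
        exact Set.indicator_of_notMem hnot _
      rw [tsum_eq_single k hsingle, Set.indicator_of_mem hω]
    have hhfin : ∀ ω, h ω ≠ ⊤ := by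
      intro ω
      by_cases hex : ∃ k, ω ∈ B k
      · obtain ⟨k, hk⟩ := hex
        rw [hhval k ω hk]; exact hcfin k
      · push_neg at hex
        have hz : ∀ k : ℕ, (B k).indicator (fun _ => c k) ω = 0 := fun k =>
          Set.indicator_of_notMem (hex k) _
        show (∑' j : ℕ, (B j).indicator (fun _ => c j) ω) ≠ ⊤
        simp only [hz, tsum_zero]
        exact ENNReal.zero_ne_top
    -- the hitting predicate
    set Q : ℕ → Set Ω := fun n => {ω | η ω ≤ (n : ℝ≥0)} ∩ {ω | h ω ≤ f n ω} with hQdef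
    have hQ0 : ∀ n, MeasurableSet[m0] (Q n) := fun n =>
      (show MeasurableSet[m0] {ω | η ω ≤ (n : ℝ≥0)} by
        simpa only [WithTop.coe_le_coe] using hη.measurableSet_le' (n : ℝ≥0)).inter (measurableSet_le hh0 (hfmeas n))
    set P' : Ω → Prop := fun ω => ∃ n : ℕ, η ω ≤ (n : ℝ≥0) ∧ h ω ≤ f n ω with hP'def
    have hPset : {ω | P' ω} = ⋃ n, Q n := by
      ext ω
      simp only [hP'def, Set.mem_setOf_eq, Set.mem_iUnion, hQdef, Set.mem_inter_iff]
    have hP0 : MeasurableSet[m0] {ω | P' ω} := by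
      rw [hPset]; exact MeasurableSet.iUnion hQ0
    -- a.e. on each B k the hitting happens
    have hhit : ∀ k : ℕ, μ (B k \ {ω | P' ω}) = 0 := by
      intro k
      have hsub : B k \ {ω | P' ω} ⊆
          ⋃ m' : ℕ, (B k \ {ω | P' ω}) ∩ {ω | η ω ≤ (m' : ℝ≥0)} := by
        intro ω hω
        obtain ⟨m', hm'⟩ := exists_nat_ge (η ω)
        exact Set.mem_iUnion.mpr ⟨m', hω, hm'⟩
      refine measure_mono_null hsub (measure_iUnion_null fun m' => ?_)
      set C : Set Ω := (B k \ {ω | P' ω}) ∩ {ω | η ω ≤ (m' : ℝ≥0)} with hCdef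
      have hC0 : MeasurableSet[m0] C := ((hB0 k).diff hP0).inter (show MeasurableSet[m0] {ω | η ω ≤ (m' : ℝ≥0)} by
          simpa only [WithTop.coe_le_coe] using hη.measurableSet_le' (m' : ℝ≥0))
      have hCm : MeasurableSet[m] C := hm _ hC0
      have hfC : ∀ n : ℕ, m' ≤ n → ∀ ω ∈ C, f n ω ≤ c k := by
        intro n hn ω hω
        have hωB : ω ∈ B k := hω.1.1
        have hωP : ω ∉ {ω | P' ω} := hω.1.2
        have hη' : η ω ≤ (n : ℝ≥0) := le_trans hω.2 (by exact_mod_cast Nat.cast_le.mpr hn)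
        by_contra hcon
        push_neg at hcon
        exact hωP ⟨n, hη', (hhval k ω hωB).le.trans hcon.le⟩
      have hbound : ∀ k' : ℕ, ∫⁻ ω in C, L' ω ⊓ (k' : ℝ≥0∞) ∂μ ≤ c k * μ C := by
        intro k'
        have hae : ∀ᵐ ω ∂μ, L' ω ⊓ (k' : ℝ≥0∞) ≤
            liminf (fun n : ℕ => (‖X (n : ℝ≥0) ω‖₊ : ℝ≥0∞) ⊓ (k' : ℝ≥0∞)) atTop := by
          refine hLL'.mono fun ω hω => ?_
          calc L' ω ⊓ (k' : ℝ≥0∞) = L ω ⊓ (k' : ℝ≥0∞) := by rw [hω]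
            _ ≤ liminf (fun n : ℕ => (‖X (n : ℝ≥0) ω‖₊ : ℝ≥0∞)) atTop ⊓ (k' : ℝ≥0∞) :=
                inf_le_inf (hLseq ω) le_rfl
            _ ≤ _ := statement13_auxE
        calc ∫⁻ ω in C, L' ω ⊓ (k' : ℝ≥0∞) ∂μ
            ≤ ∫⁻ ω in C,
                liminf (fun n : ℕ => (‖X (n : ℝ≥0) ω‖₊ : ℝ≥0∞) ⊓ (k' : ℝ≥0∞)) atTop ∂μ :=
              lintegral_mono_ae (ae_restrict_of_ae hae)
          _ ≤ liminf (fun n : ℕ =>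
                ∫⁻ ω in C, (‖X (n : ℝ≥0) ω‖₊ : ℝ≥0∞) ⊓ (k' : ℝ≥0∞) ∂μ) atTop :=
              lintegral_liminf_le fun n => (hXe _).inf measurable_const
          _ ≤ c k * μ C := by
              refine liminf_le_of_frequently_le'
                ((eventually_atTop.mpr ⟨m', fun n hn => ?_⟩).frequently)
              calc ∫⁻ ω in C, (‖X (n : ℝ≥0) ω‖₊ : ℝ≥0∞) ⊓ (k' : ℝ≥0∞) ∂μ
                  ≤ ∫⁻ ω in C, (‖X (n : ℝ≥0) ω‖₊ : ℝ≥0∞) ∂μ :=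
                    lintegral_mono fun ω => inf_le_left
                _ = ∫⁻ ω in C, f n ω ∂μ := (hfprop n C hC0).symm
                _ ≤ ∫⁻ _ in C, c k ∂μ := setLIntegral_mono' hCm (hfC n hn)
                _ = c k * μ C := setLIntegral_const C (c k)
      have h4 : ∀ ω, L' ω = ⨆ k' : ℕ, L' ω ⊓ (k' : ℝ≥0∞) := fun ω => by
        rw [← inf_iSup_eq, ENNReal.iSup_natCast, inf_top_eq]
      have h7 : ∫⁻ ω in C, L' ω ∂μ ≤ c k * μ C := by
        calc ∫⁻ ω in C, L' ω ∂μ = ∫⁻ ω in C, ⨆ k' : ℕ, L' ω ⊓ (k' : ℝ≥0∞) ∂μ :=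
              lintegral_congr fun ω => h4 ω
          _ = ⨆ k' : ℕ, ∫⁻ ω in C, L' ω ⊓ (k' : ℝ≥0∞) ∂μ := by
              refine lintegral_iSup (fun k' => hL'meas.inf measurable_const) ?_
              intro i j hij ω
              exact inf_le_inf le_rfl (by exact_mod_cast Nat.cast_le.mpr hij)
          _ ≤ c k * μ C := iSup_le hbound
      have h6 : (⊤ : ℝ≥0∞) * μ C ≤ ∫⁻ ω in C, g ω ∂μ := by
        rw [← setLIntegral_const C ⊤]
        refine setLIntegral_mono' hCm fun ω hω => ?_
        have hgω : g ω = ⊤ := hω.1.1.1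
        exact hgω.ge
      have htop : (⊤ : ℝ≥0∞) * μ C ≤ c k * μ C :=
        h6.trans (((hgprop C hC0).symm).le.trans h7)
      by_contra hCne
      rw [ENNReal.top_mul hCne] at htop
      exact absurd (htop.trans_lt
        (ENNReal.mul_lt_top (hcfin k).lt_top (measure_lt_top μ C))) (lt_irrefl ⊤)
    -- the stopping time
    set τ : Ω → ℝ≥0 := fun ω => if hp : P' ω then ((Nat.find hp : ℕ) : ℝ≥0) else η ω with hτdef
    set E : ℕ → Set Ω := fun n => Q n ∩ ⋂ (j : ℕ) (_ : j < n), (Q j)ᶜ with hEdef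
    have hE0 : ∀ n, MeasurableSet[m0] (E n) := fun n =>
      (hQ0 n).inter (MeasurableSet.iInter fun j => MeasurableSet.iInter fun _ => (hQ0 j).compl)
    have hEmem : ∀ (n : ℕ) (ω : Ω), ω ∈ E n ↔ ∃ hp : P' ω, Nat.find hp = n := by
      intro n ω
      constructor
      · rintro ⟨hQn, hnot⟩
        have hp : P' ω := ⟨n, hQn.1, hQn.2⟩
        refine ⟨hp, ?_⟩
        rw [Nat.find_eq_iff]
        refine ⟨⟨hQn.1, hQn.2⟩, fun j hj hQj => ?_⟩
        exact (Set.mem_iInter₂.mp hnot j hj) ⟨hQj.1, hQj.2⟩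
      · rintro ⟨hp, hfind⟩
        have h1 := Nat.find_spec hp
        rw [hfind] at h1
        refine ⟨⟨h1.1, h1.2⟩, Set.mem_iInter₂.mpr fun j hj hQj => ?_⟩
        exact Nat.find_min hp (hfind ▸ hj) ⟨hQj.1, hQj.2⟩
    have hEτ : ∀ (n : ℕ) (ω : Ω), ω ∈ E n → τ ω = (n : ℝ≥0) := by
      intro n ω hω
      obtain ⟨hp, hfind⟩ := (hEmem n ω).mp hω
      rw [hτdef]
      simp only [dif_pos hp]
      exact congrArg (fun i : ℕ => (i : ℝ≥0)) hfind
    have hUnionE : (⋃ n, E n) = {ω | P' ω} := by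
      ext ω
      constructor
      · intro hω
        obtain ⟨n, hn⟩ := Set.mem_iUnion.mp hω
        obtain ⟨hp, _⟩ := (hEmem n ω).mp hn
        exact hp
      · intro hp
        exact Set.mem_iUnion.mpr ⟨Nat.find hp, (hEmem _ ω).mpr ⟨hp, rfl⟩⟩
    have hEdisj : Pairwise (Function.onFun Disjoint E) := by
      intro j k hjk
      refine Set.disjoint_left.mpr fun ω hωj hωk => ?_
      obtain ⟨hp1, h1⟩ := (hEmem j ω).mp hωj
      obtain ⟨hp2, h2⟩ := (hEmem k ω).mp hωk
      exact hjk (h1 ▸ h2 ▸ (rfl : Nat.find hp1 = Nat.find hp2))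
    have hτstop : IsStoppingTime ℱ (fun ω => (τ ω : WithTop ℝ≥0)) := by
      intro u
      simp only [WithTop.coe_le_coe]
      have hconv : ∀ (s : Set Ω), MeasurableSet[m0] s → s ⊆ {ω | η ω ≤ u} →
          MeasurableSet[ℱ u] s := by
        intro s hs hsub
        have h1 : MeasurableSet[ℱ u] (s ∩ {ω | η ω ≤ u}) := by
          simpa only [WithTop.coe_le_coe] using hs.2 u
        rwa [Set.inter_eq_self_of_subset_left hsub] at h1
      have hset : {ω | τ ω ≤ u} =
          (⋃ (n : ℕ) (_ : (n : ℝ≥0) ≤ u), E n) ∪ ({ω | P' ω}ᶜ ∩ {ω | η ω ≤ u}) := by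
        ext ω
        by_cases hp : P' ω
        · simp only [Set.mem_setOf_eq, hτdef, dif_pos hp, Set.mem_union, Set.mem_iUnion,
            Set.mem_inter_iff, Set.mem_compl_iff]
          constructor
          · intro hle
            exact Or.inl ⟨Nat.find hp, hle, (hEmem _ ω).mpr ⟨hp, rfl⟩⟩
          · rintro (⟨n, hn, hω⟩ | ⟨hnp, _⟩)
            · obtain ⟨hp', hfind⟩ := (hEmem n ω).mp hω
              have : Nat.find hp = n := hfind
              rw [this]
              exact hn
            · exact absurd hp hnp
        · simp only [Set.mem_setOf_eq, hτdef, dif_neg hp, Set.mem_union, Set.mem_iUnion,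
            Set.mem_inter_iff, Set.mem_compl_iff]
          constructor
          · intro hle
            exact Or.inr ⟨hp, hle⟩
          · rintro (⟨n, _, hω⟩ | ⟨_, hle⟩)
            · obtain ⟨hp', _⟩ := (hEmem n ω).mp hω
              exact absurd hp' hp
            · exact hle
      rw [hset]
      refine MeasurableSet.union ?_ ?_
      · refine MeasurableSet.iUnion fun n => MeasurableSet.iUnion fun hn => ?_
        refine hconv _ (hE0 n) fun ω hω => ?_
        exact le_trans hω.1.1 hn
      · exact hconv _ (hP0.compl.inter (show MeasurableSet[m0] {ω | η ω ≤ u} by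
          simpa only [WithTop.coe_le_coe] using hη.measurableSet_le' u)) fun ω hω => hω.2
    -- the contradiction
    have hτint := hstop τ hτstop
    have hτfin : ∫⁻ ω, (‖X (τ ω) ω‖₊ : ℝ≥0∞) ∂μ < ⊤ := hτint.2
    have hEm : ∀ n, MeasurableSet[m] (E n) := fun n => hm _ (hE0 n)
    have hW : ∫⁻ ω in ⋃ n, E n, (‖X (τ ω) ω‖₊ : ℝ≥0∞) ∂μ
        = ∑' n : ℕ, ∫⁻ ω in E n, (‖X (τ ω) ω‖₊ : ℝ≥0∞) ∂μ :=
      lintegral_iUnion hEm hEdisj _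
    have hWh : ∫⁻ ω in ⋃ n, E n, h ω ∂μ = ∑' n : ℕ, ∫⁻ ω in E n, h ω ∂μ :=
      lintegral_iUnion hEm hEdisj _
    have hEn : ∀ n : ℕ, ∫⁻ ω in E n, h ω ∂μ ≤ ∫⁻ ω in E n, (‖X (τ ω) ω‖₊ : ℝ≥0∞) ∂μ := by
      intro n
      have h1 : ∫⁻ ω in E n, (‖X (τ ω) ω‖₊ : ℝ≥0∞) ∂μ
          = ∫⁻ ω in E n, (‖X (n : ℝ≥0) ω‖₊ : ℝ≥0∞) ∂μ :=
        setLIntegral_congr_fun (hEm n) (fun ω hω => by rw [hEτ n ω hω])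
      rw [h1, ← hfprop n (E n) (hE0 n)]
      exact setLIntegral_mono' (hEm n) fun ω hω => hω.1.2
    have hhint : ∫⁻ ω in ⋃ n, E n, h ω ∂μ = ∑' k : ℕ, c k * μ (B k ∩ ⋃ n, E n) := by
      have hrw : ∫⁻ ω in ⋃ n, E n, h ω ∂μ
          = ∫⁻ ω in ⋃ n, E n, ∑' j : ℕ, (B j).indicator (fun _ => c j) ω ∂μ := rfl
      rw [hrw, lintegral_tsum fun k => (measurable_const.indicator (hBm k)).aemeasurable]
      refine tsum_congr fun k => ?_
      rw [lintegral_indicator (hBm k), setLIntegral_const, Measure.restrict_apply (hBm k)]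
    have hBW : ∀ k, μ (B k ∩ ⋃ n, E n) = μ (B k) := by
      intro k
      rw [hUnionE, ← Set.diff_diff_right_self, measure_diff_null (hhit k)]
    have hfinal : (⊤ : ℝ≥0∞) ≤ ∫⁻ ω, (‖X (τ ω) ω‖₊ : ℝ≥0∞) ∂μ := by
      calc (⊤ : ℝ≥0∞) = ∑' _ : ℕ, (1 : ℝ≥0∞) :=
            (ENNReal.tsum_const_eq_top_of_ne_zero one_ne_zero).symm
        _ = ∑' k : ℕ, c k * μ (B k ∩ ⋃ n, E n) := by
            refine tsum_congr fun k => ?_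
            rw [hBW k]
            exact (ENNReal.inv_mul_cancel (hBpos k) (hBfin k)).symm
        _ = ∫⁻ ω in ⋃ n, E n, h ω ∂μ := hhint.symm
        _ = ∑' n : ℕ, ∫⁻ ω in E n, h ω ∂μ := hWh
        _ ≤ ∑' n : ℕ, ∫⁻ ω in E n, (‖X (τ ω) ω‖₊ : ℝ≥0∞) ∂μ := ENNReal.tsum_le_tsum hEn
        _ = ∫⁻ ω in ⋃ n, E n, (‖X (τ ω) ω‖₊ : ℝ≥0∞) ∂μ := hW.symm
        _ ≤ ∫⁻ ω, (‖X (τ ω) ω‖₊ : ℝ≥0∞) ∂μ := setLIntegral_le_lintegral _ _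
    exact absurd (hfinal.trans_lt hτfin) (lt_irrefl ⊤)
  refine ⟨g, hgmeas, ?_, fun s hs => ?_⟩
  · rw [ae_iff]
    convert hA using 2
    ext ω
    simp [lt_top_iff_ne_top]
  · have h1 : ∫⁻ ω in s, L ω ∂μ = ∫⁻ ω in s, L' ω ∂μ :=
      lintegral_congr_ae (ae_restrict_of_ae hLL')
    exact h1.trans (hgprop s hs)
end

section
/- Assume the filtration and paths of X are right-continuous, X_τ is integrable for all finite stopping times τ, and E[liminf_{t→∞} |X_t| | F_η] < ∞ almost surely for some finite stopping time η. Then liminf_{t→∞} |X_t| is integrable. -/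
open MeasureTheory Filter ProbabilityTheory
open scoped ENNReal NNReal Topology

set_option maxHeartbeats 1000000

/-- If the filtration and the paths of `X` are right-continuous, `X_τ ∈ L¹` for
all finite stopping times `τ`, and `E[liminf_{t→∞} |X_t| | ℱ_η] < ∞` a.s. for some finite
stopping time `η` (expressed via an `ℱ_η`-measurable a.e. finite `g` with the defining
property of conditional expectation), then `liminf_{t→∞} |X_t|` is integrable. -/
theorem statement14 {Ω : Type*} {m : MeasurableSpace Ω} {μ : Measure Ω} [IsProbabilityMeasure μ]
    (ℱ : Filtration ℝ≥0 m) (X : ℝ≥0 → Ω → ℝ)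
    (hℱ : ∀ t : ℝ≥0, ℱ t = ⨅ s : {s : ℝ≥0 // t < s}, ℱ s.1)
    (hadapted : Adapted ℱ X)
    (hrc : ∀ᵐ ω ∂μ, ∀ t : ℝ≥0, ContinuousWithinAt (fun s => X s ω) (Set.Ici t) t)
    (hstop : ∀ τ : Ω → ℝ≥0, IsStoppingTime ℱ (fun ω => (τ ω : WithTop ℝ≥0)) → Integrable (fun ω => X (τ ω) ω) μ)
    (η : Ω → ℝ≥0) (hη : IsStoppingTime ℱ (fun ω => (η ω : WithTop ℝ≥0)))
    (g : Ω → ℝ≥0∞) (hg : Measurable[hη.measurableSpace] g) (hgfin : ∀ᵐ ω ∂μ, g ω < ⊤)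
    (hgcond : ∀ s : Set Ω, MeasurableSet[hη.measurableSpace] s →
      ∫⁻ ω in s, Filter.liminf (fun t => (‖X t ω‖₊ : ℝ≥0∞)) atTop ∂μ = ∫⁻ ω in s, g ω ∂μ) :
    ∫⁻ ω, Filter.liminf (fun t => (‖X t ω‖₊ : ℝ≥0∞)) atTop ∂μ < ⊤ := by
  classical
  -- the discrete-time filtration at integer times
  set 𝒢 : Filtration ℕ m :=
    ⟨fun n => ℱ (n : ℝ≥0), fun a b hab => ℱ.mono (by exact_mod_cast hab),
      fun n => ℱ.le _⟩ with h𝒢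
  -- a measurable version of the liminf, built from rational times
  set c : ℚ → ℝ≥0 := fun q => Real.toNNReal (q : ℝ) with hc
  set L : Ω → ℝ≥0∞ := fun ω =>
    ⨆ n : ℕ, ⨅ (q : ℚ) (_ : (n : ℝ≥0) ≤ c q), (‖X (c q) ω‖₊ : ℝ≥0∞) with hL
  -- ℕ-indexed basis of atTop on ℝ≥0
  have hbasis : (atTop : Filter ℝ≥0).HasBasis (fun _ : ℕ => True) (fun n => Set.Ici (n : ℝ≥0)) := by
    refine atTop_basis.to_hasBasis (fun a _ => ?_) (fun n _ => ⟨(n : ℝ≥0), trivial, subset_rfl⟩)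
    obtain ⟨n, hn⟩ := exists_nat_ge a
    exact ⟨n, trivial, Set.Ici_subset_Ici.2 hn⟩
  -- a.e. the liminf equals L
  have hLae : ∀ᵐ ω ∂μ, Filter.liminf (fun t => (‖X t ω‖₊ : ℝ≥0∞)) atTop = L ω := by
    filter_upwards [hrc] with ω hω
    rw [hbasis.liminf_eq_iSup_iInf]
    simp only [iSup_true, hL]
    refine iSup_congr fun n => ?_
    refine le_antisymm (le_iInf fun q => le_iInf fun hq => iInf₂_le (c q) hq) ?_
    refine le_iInf fun t => le_iInf fun (ht : (n : ℝ≥0) ≤ t) => ?_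
    -- approximate t from the right by rationals
    have hex : ∀ k : ℕ, ∃ q : ℚ, (t : ℝ) < (q : ℝ) ∧ (q : ℝ) < (t : ℝ) + ((k : ℝ) + 1)⁻¹ := by
      intro k
      refine exists_rat_btwn ?_
      have : (0:ℝ) < ((k : ℝ) + 1)⁻¹ := by positivity
      linarith
    choose qs hq1 hq2 using hex
    have hge : ∀ k, t ≤ c (qs k) := by
      intro k
      rw [hc]
      exact (Real.le_toNNReal_iff_coe_le (le_trans t.coe_nonneg (hq1 k).le)).2 (hq1 k).le
    have hcoe : ∀ k, ((c (qs k) : ℝ≥0) : ℝ) = (qs k : ℝ) := by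
      intro k
      rw [hc]
      exact Real.coe_toNNReal _ (le_trans t.coe_nonneg (hq1 k).le)
    have htendR : Tendsto (fun k => ((c (qs k) : ℝ≥0) : ℝ)) atTop (𝓝 (t : ℝ)) := by
      have h0 : Tendsto (fun k : ℕ => (t : ℝ) + ((k : ℝ) + 1)⁻¹) atTop (𝓝 (t : ℝ)) := by
        have h1 : Tendsto (fun k : ℕ => (t : ℝ) + ((k : ℝ) + 1)⁻¹) atTop (𝓝 ((t : ℝ) + 0)) := by
          refine tendsto_const_nhds.add ?_
          simpa [one_div] using tendsto_one_div_add_atTop_nhds_zero_nat (𝕜 := ℝ)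
        simpa using h1
      exact tendsto_of_tendsto_of_tendsto_of_le_of_le tendsto_const_nhds h0
        (fun k => by rw [hcoe k]; exact (hq1 k).le) (fun k => by rw [hcoe k]; exact (hq2 k).le)
    have htend : Tendsto (fun k => c (qs k)) atTop (𝓝 t) := NNReal.tendsto_coe.1 htendR
    have htendW : Tendsto (fun k => c (qs k)) atTop (𝓝[Set.Ici t] t) :=
      tendsto_nhdsWithin_of_tendsto_nhds_of_eventually_within _ htend
        (Eventually.of_forall hge)
    have hXtend : Tendsto (fun k => (‖X (c (qs k)) ω‖₊ : ℝ≥0∞)) atTop (𝓝 (‖X t ω‖₊ : ℝ≥0∞)) := by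
      have h1 : Tendsto (fun k => X (c (qs k)) ω) atTop (𝓝 (X t ω)) := (hω t).tendsto.comp htendW
      exact (ENNReal.continuous_coe.tendsto _).comp ((continuous_nnnorm.tendsto _).comp h1)
    refine ge_of_tendsto hXtend (Eventually.of_forall fun k => ?_)
    exact iInf_le_of_le (qs k) (iInf_le _ (le_trans ht (hge k)))
  -- measurability of L with respect to the supremum of the discrete filtration
  have hG_le : (⨆ n : ℕ, (𝒢 n : MeasurableSpace Ω)) ≤ m := iSup_le fun n => 𝒢.le n
  have hLmeasG : Measurable[⨆ n : ℕ, (𝒢 n : MeasurableSpace Ω)] L := by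
    rw [hL]
    refine Measurable.iSup fun n => Measurable.iInf fun q => Measurable.iInf fun hq => ?_
    have h1 : Measurable[ℱ (c q)] (X (c q)) := (hadapted (c q))
    have h2 : (ℱ (c q) : MeasurableSpace Ω) ≤ ⨆ n : ℕ, (𝒢 n : MeasurableSpace Ω) := by
      refine le_trans (ℱ.mono (Nat.le_ceil (c q))) ?_
      exact le_iSup (fun n : ℕ => (𝒢 n : MeasurableSpace Ω)) ⌈c q⌉₊
    have houter : Measurable fun x : ℝ => (‖x‖₊ : ℝ≥0∞) := measurable_nnnorm.coe_nnreal_ennreal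
    exact houter.comp (h1.mono h2 le_rfl)
  have hLm : Measurable L := Measurable.mono hLmeasG hG_le le_rfl
  -- replace the liminf by L in the goal and in the conditional-expectation hypothesis
  rw [lintegral_congr_ae hLae]
  have hcond : ∀ s : Set Ω, MeasurableSet[hη.measurableSpace] s →
      ∫⁻ ω in s, L ω ∂μ = ∫⁻ ω in s, g ω ∂μ := by
    intro s hs
    rw [← hgcond s hs]
    exact lintegral_congr_ae (ae_restrict_of_ae (hLae.mono fun ω h => h.symm))
  have hηle : hη.measurableSpace ≤ m := hη.measurableSpace_le
  -- the level sets of g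
  set A : ℕ → Set Ω := fun j => {ω | (j : ℝ≥0∞) ≤ g ω ∧ g ω < (j : ℝ≥0∞) + 1} with hA
  have hA_metaη : ∀ j, MeasurableSet[hη.measurableSpace] (A j) := by
    intro j
    exact (hg measurableSet_Ico : MeasurableSet[hη.measurableSpace] (g ⁻¹' Set.Ico _ _))
  have hA_meas : ∀ j, MeasurableSet (A j) := fun j => hηle _ (hA_metaη j)
  have hA_unique : ∀ {ω j j'}, ω ∈ A j → ω ∈ A j' → j = j' := by
    intro ω j j' h1 h2
    have k1 : (j : ℝ≥0∞) < (j' : ℝ≥0∞) + 1 := lt_of_le_of_lt h1.1 h2.2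
    have k2 : (j' : ℝ≥0∞) < (j : ℝ≥0∞) + 1 := lt_of_le_of_lt h2.1 h1.2
    have k1' : j < j' + 1 := by exact_mod_cast (by push_cast; exact k1 : (j:ℝ≥0∞) < ((j'+1 : ℕ):ℝ≥0∞))
    have k2' : j' < j + 1 := by exact_mod_cast (by push_cast; exact k2 : (j':ℝ≥0∞) < ((j+1 : ℕ):ℝ≥0∞))
    omega
  have hA_disj : Pairwise (Function.onFun Disjoint A) := by
    intro j j' hjj'
    rw [Function.onFun, Set.disjoint_left]
    intro ω h1 h2
    exact hjj' (hA_unique h1 h2)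
  have hA_cover : ∀ ω, g ω ≠ ⊤ → ∃ j, ω ∈ A j := by
    intro ω hω
    refine ⟨Nat.floor (g ω).toReal, ?_, ?_⟩
    · calc ((Nat.floor (g ω).toReal : ℕ) : ℝ≥0∞)
          = ENNReal.ofReal ((Nat.floor (g ω).toReal : ℕ) : ℝ) := (ENNReal.ofReal_natCast _).symm
        _ ≤ ENNReal.ofReal (g ω).toReal :=
            ENNReal.ofReal_le_ofReal (Nat.floor_le ENNReal.toReal_nonneg)
        _ = g ω := ENNReal.ofReal_toReal hω
    · have h1 : (g ω).toReal < ((Nat.floor (g ω).toReal : ℕ) : ℝ) + 1 := Nat.lt_floor_add_one _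
      calc g ω = ENNReal.ofReal (g ω).toReal := (ENNReal.ofReal_toReal hω).symm
        _ < ENNReal.ofReal (((Nat.floor (g ω).toReal : ℕ) : ℝ) + 1) :=
            (ENNReal.ofReal_lt_ofReal_iff (by positivity)).2 h1
        _ = ((Nat.floor (g ω).toReal : ℕ) : ℝ≥0∞) + 1 := by
            rw [ENNReal.ofReal_add (by positivity) zero_le_one]
            simp [ENNReal.ofReal_natCast]
  -- finiteness of the integral of L on each level set
  have hνA : ∀ j, ∫⁻ ω in A j, L ω ∂μ < ⊤ := by
    intro j
    rw [hcond (A j) (hA_metaη j)]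
    calc ∫⁻ ω in A j, g ω ∂μ ≤ ∫⁻ _ in A j, ((j : ℝ≥0∞) + 1) ∂μ := by
          refine setLIntegral_mono measurable_const fun ω hω => hω.2.le
      _ = ((j : ℝ≥0∞) + 1) * μ (A j) := setLIntegral_const _ _
      _ ≤ ((j : ℝ≥0∞) + 1) * 1 := by
          exact mul_le_mul_right prob_le_one _
      _ < ⊤ := by
          rw [mul_one]
          simp [lt_top_iff_ne_top]
  have hLfin : ∀ j, ∀ᵐ ω ∂μ, ω ∈ A j → L ω < ⊤ := by
    intro j
    refine (ae_restrict_iff' (hA_meas j)).1 ?_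
    exact ae_lt_top hLm (hνA j).ne
  -- A j is measurable w.r.t. the supremum σ-algebra
  have hA_Fn : ∀ j, ∀ n : ℕ, MeasurableSet[ℱ ((n : ℕ) : ℝ≥0)]
      (A j ∩ {ω | η ω ≤ ((n : ℕ) : ℝ≥0)}) := by
    intro j n
    have := ((hη.measurableSet (A j)).1 (hA_metaη j)).2 ((n : ℕ) : ℝ≥0)
    simpa only [WithTop.coe_le_coe] using this
  have hA_G : ∀ j, MeasurableSet[⨆ n : ℕ, (𝒢 n : MeasurableSpace Ω)] (A j) := by
    intro j
    have hrw : A j = ⋃ n : ℕ, (A j ∩ {ω | η ω ≤ ((n : ℕ) : ℝ≥0)}) := by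
      ext ω
      simp only [Set.mem_iUnion, Set.mem_inter_iff, Set.mem_setOf_eq]
      constructor
      · intro h
        obtain ⟨n, hn⟩ := exists_nat_ge (η ω)
        exact ⟨n, h, hn⟩
      · rintro ⟨n, h, -⟩
        exact h
    rw [hrw]
    refine MeasurableSet.iUnion fun n => ?_
    have h1 : (𝒢 n : MeasurableSpace Ω) ≤ ⨆ n : ℕ, (𝒢 n : MeasurableSpace Ω) :=
      le_iSup (fun n : ℕ => (𝒢 n : MeasurableSpace Ω)) n
    exact h1 _ (hA_Fn j n)
  -- the localized integrable functions
  set ℓ : ℕ → Ω → ℝ := fun j => (A j).indicator fun ω => (L ω).toReal with hℓ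
  have hℓ_nonneg : ∀ j ω, 0 ≤ ℓ j ω := fun j ω =>
    Set.indicator_nonneg (fun a _ => ENNReal.toReal_nonneg) ω
  have hℓ_mG : ∀ j, Measurable[⨆ n : ℕ, (𝒢 n : MeasurableSpace Ω)] (ℓ j) := fun j =>
    (ENNReal.measurable_toReal.comp hLmeasG).indicator (hA_G j)
  have hℓ_sm : ∀ j, StronglyMeasurable[⨆ n : ℕ, (𝒢 n : MeasurableSpace Ω)] (ℓ j) := fun j =>
    (hℓ_mG j).stronglyMeasurable
  have hℓ_nn : ∀ j ω, (‖ℓ j ω‖₊ : ℝ≥0∞) ≤ (A j).indicator L ω := by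
    intro j ω
    simp only [hℓ]
    by_cases hω : ω ∈ A j
    · rw [Set.indicator_of_mem hω, Set.indicator_of_mem hω,
        ← enorm_eq_nnnorm, Real.enorm_eq_ofReal ENNReal.toReal_nonneg]
      exact ENNReal.ofReal_toReal_le
    · rw [Set.indicator_of_notMem hω, Set.indicator_of_notMem hω]
      simp
  have hℓ_int : ∀ j, Integrable (ℓ j) μ := by
    intro j
    constructor
    · exact (((hℓ_sm j).mono hG_le)).aestronglyMeasurable
    · refine lt_of_le_of_lt (lintegral_mono fun ω => hℓ_nn j ω) ?_
      rw [lintegral_indicator (hA_meas j)]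
      exact hνA j
  -- the conditional expectation martingales
  set M : ℕ → ℕ → Ω → ℝ := fun j n => μ[ℓ j | 𝒢 n] with hM
  have hM_tendsto : ∀ j, ∀ᵐ ω ∂μ, Tendsto (fun n => M j n ω) atTop (𝓝 (ℓ j ω)) := fun j =>
    (hℓ_int j).tendsto_ae_condExp (hℓ_sm j)
  have hM_set : ∀ j (n : ℕ) (s : Set Ω), MeasurableSet[𝒢 n] s →
      ∫ ω in s, M j n ω ∂μ = ∫ ω in s, ℓ j ω ∂μ := fun j n s hs =>
    setIntegral_condExp (𝒢.le n) (hℓ_int j) hs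
  have hM_nonneg : ∀ j n, 0 ≤ᵐ[μ] M j n := fun j n =>
    condExp_nonneg (Eventually.of_forall (hℓ_nonneg j))
  have hM_int : ∀ j n, Integrable (M j n) μ := fun j n => integrable_condExp
  have hM_sm : ∀ j n, StronglyMeasurable[𝒢 n] (M j n) := fun j n => stronglyMeasurable_condExp
  -- the hitting sets
  set C : ℕ → Set Ω := fun n =>
    ⋃ j, ((A j ∩ {ω | η ω ≤ ((n : ℕ) : ℝ≥0)}) ∩ {ω | M j n ω ≤ ‖X ((n : ℕ) : ℝ≥0) ω‖ + 1})
    with hC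
  have hC_meas : ∀ n : ℕ, MeasurableSet[ℱ ((n : ℕ) : ℝ≥0)] (C n) := by
    intro n
    refine MeasurableSet.iUnion fun j => (hA_Fn j n).inter ?_
    have h1 : Measurable[ℱ ((n : ℕ) : ℝ≥0)] (M j n) := (hM_sm j n).measurable
    have h2 : Measurable[ℱ ((n : ℕ) : ℝ≥0)] fun ω => ‖X ((n : ℕ) : ℝ≥0) ω‖ + 1 := by
      have h3 : Measurable[ℱ ((n : ℕ) : ℝ≥0)] (X ((n : ℕ) : ℝ≥0)) :=
        (hadapted ((n : ℕ) : ℝ≥0))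
      have houter : Measurable fun x : ℝ => ‖x‖ + 1 := measurable_norm.add_const 1
      exact houter.comp h3
    exact measurableSet_le h1 h2
  have hC_sub : ∀ n : ℕ, C n ⊆ {ω | η ω ≤ ((n : ℕ) : ℝ≥0)} := by
    intro n ω hω
    obtain ⟨j, hj⟩ := Set.mem_iUnion.1 hω
    exact hj.1.2
  -- almost surely, some hitting set is reached
  have hhit : ∀ᵐ ω ∂μ, (∃ j, ω ∈ A j) → ∃ n, ω ∈ C n := by
    filter_upwards [hLae, ae_all_iff.2 hM_tendsto, ae_all_iff.2 hLfin] with ω hli hMt hLf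
    rintro ⟨j, hj⟩
    have hfin : L ω < ⊤ := hLf j hj
    set l : ℝ := (L ω).toReal with hl
    have hlj : ℓ j ω = l := by simp only [hℓ]; exact Set.indicator_of_mem hj _
    have h1 : ∀ᶠ n : ℕ in atTop, M j n ω < l + 2⁻¹ := by
      refine (hMt j).eventually_lt_const ?_
      rw [hlj]
      linarith
    have h2 : ∀ᶠ n : ℕ in atTop, l - 2⁻¹ ≤ ‖X ((n : ℕ) : ℝ≥0) ω‖ := by
      by_cases hcase : l ≤ 2⁻¹
      · refine Eventually.of_forall fun n => le_trans (by linarith) (norm_nonneg _)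
      · have hc : ENNReal.ofReal (l - 2⁻¹) < L ω := by
          conv_rhs => rw [← ENNReal.ofReal_toReal hfin.ne]
          exact (ENNReal.ofReal_lt_ofReal_iff (by linarith)).2 (by linarith)
        rw [← hli] at hc
        have h3 := eventually_lt_of_lt_liminf hc
        have h4 : ∀ᶠ n : ℕ in atTop,
            ENNReal.ofReal (l - 2⁻¹) < (‖X ((n : ℕ) : ℝ≥0) ω‖₊ : ℝ≥0∞) :=
          (tendsto_natCast_atTop_atTop (R := ℝ≥0)).eventually h3
        refine h4.mono fun n hn => ?_
        rw [← enorm_eq_nnnorm, ← ofReal_norm] at hn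
        exact ((ENNReal.ofReal_lt_ofReal_iff_of_nonneg (by linarith)).1 hn).le
    have h3 : ∀ᶠ n : ℕ in atTop, η ω ≤ ((n : ℕ) : ℝ≥0) := by
      obtain ⟨n₀, hn₀⟩ := exists_nat_ge (η ω)
      refine eventually_atTop.2 ⟨n₀, fun b hb => le_trans hn₀ ?_⟩
      exact_mod_cast hb
    obtain ⟨n, hn1, hn2, hn3⟩ := (h1.and (h2.and h3)).exists
    refine ⟨n, Set.mem_iUnion.2 ⟨j, ⟨hj, hn3⟩, ?_⟩⟩
    simp only [Set.mem_setOf_eq]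
    linarith
  -- the escape sets
  set R : ℕ → ℕ → ℕ → Set Ω := fun j mm p =>
    (A j ∩ {ω | η ω ≤ ((mm : ℕ) : ℝ≥0)}) ∩ ⋂ (n : ℕ) (_ : n ≤ p), (C n)ᶜ with hR
  have hC_m : ∀ n : ℕ, MeasurableSet (C n) := fun n => ℱ.le _ _ (hC_meas n)
  have hη_m : ∀ t : ℝ≥0, MeasurableSet {ω | η ω ≤ t} := fun t => by simpa only [WithTop.coe_le_coe] using ℱ.le t _ (hη t)
  have hR_m : ∀ j mm p, MeasurableSet (R j mm p) := by
    intro j mm p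
    refine ((hA_meas j).inter (hη_m _)).inter ?_
    exact MeasurableSet.iInter fun n => MeasurableSet.iInter fun _ => (hC_m n).compl
  set ε : ℕ → ℕ → ℝ≥0∞ := fun j mm => 2⁻¹ ^ (j + 1) * 2⁻¹ ^ (mm + 1) with hε
  have hε_pos : ∀ j mm, 0 < ε j mm := by
    intro j mm
    rw [hε]
    have h2 : (0:ℝ≥0∞) < 2⁻¹ := ENNReal.inv_pos.2 (by norm_num)
    exact ENNReal.mul_pos (ENNReal.pow_pos h2 _).ne' (ENNReal.pow_pos h2 _).ne'
  have hν_fin : ∀ j, μ.withDensity L (A j) < ⊤ := by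
    intro j
    rw [withDensity_apply _ (hA_meas j)]
    exact hνA j
  have hP : ∀ j mm : ℕ, ∃ p : ℕ, μ.withDensity L (R j mm p) < ε j mm := by
    intro j mm
    have hmono : Antitone fun p => R j mm p := by
      intro p p' hpp'
      refine Set.inter_subset_inter subset_rfl ?_
      exact Set.iInter₂_mono' fun n hn => ⟨n, le_trans hn hpp', subset_rfl⟩
    have hiInter : ⋂ p, R j mm p = (A j ∩ {ω | η ω ≤ ((mm : ℕ) : ℝ≥0)}) ∩ ⋂ n, (C n)ᶜ := by
      ext ω
      simp only [hR, Set.mem_iInter, Set.mem_inter_iff, Set.mem_compl_iff]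
      constructor
      · intro h
        exact ⟨(h 0).1, fun n => (h n).2 n le_rfl⟩
      · intro h p
        exact ⟨h.1, fun n _ => h.2 n⟩
    have hnull : μ ((A j ∩ {ω | η ω ≤ ((mm : ℕ) : ℝ≥0)}) ∩ ⋂ n, (C n)ᶜ) = 0 := by
      have h0 : μ {ω | ¬ ((∃ j, ω ∈ A j) → ∃ n, ω ∈ C n)} = 0 := ae_iff.1 hhit
      refine measure_mono_null ?_ h0
      intro ω hω
      simp only [Set.mem_inter_iff, Set.mem_iInter, Set.mem_compl_iff] at hω
      show ¬ _
      intro himp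
      obtain ⟨n, hn⟩ := himp ⟨j, hω.1.1⟩
      exact hω.2 n hn
    have hν_null : μ.withDensity L (⋂ p, R j mm p) = 0 := by
      rw [hiInter]
      exact (withDensity_absolutelyContinuous μ L) hnull
    have htends : Tendsto (fun p => μ.withDensity L (R j mm p)) atTop (𝓝 0) := by
      have h1 := tendsto_measure_iInter_atTop (μ := μ.withDensity L)
        (fun p => (hR_m j mm p).nullMeasurableSet) hmono
        ⟨0, (lt_of_le_of_lt (measure_mono (Set.inter_subset_left.trans
          Set.inter_subset_left)) (hν_fin j)).ne⟩
      rw [hν_null] at h1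
      exact h1
    exact (htends.eventually_lt_const (hε_pos j mm)).exists
  choose P hPspec using hP
  set T : ℕ → ℕ → ℕ := fun j mm => max mm (P j mm) with hT
  set U : ℕ → ℕ → Set Ω := fun j mm => R j mm (P j mm) with hU
  have hU_subA : ∀ j mm, U j mm ⊆ A j := fun j mm =>
    Set.inter_subset_left.trans Set.inter_subset_left
  have hU_subη : ∀ j mm, U j mm ⊆ {ω | η ω ≤ ((mm : ℕ) : ℝ≥0)} := fun j mm =>
    Set.inter_subset_left.trans Set.inter_subset_right
  have hU_measF : ∀ j mm, MeasurableSet[ℱ ((T j mm : ℕ) : ℝ≥0)] (U j mm) := by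
    intro j mm
    refine MeasurableSet.inter ?_ ?_
    · refine (ℱ.mono ?_) _ (hA_Fn j mm)
      exact_mod_cast le_max_left mm (P j mm)
    · refine MeasurableSet.iInter fun n => MeasurableSet.iInter fun hn => ?_
      refine ((ℱ.mono ?_) _ (hC_meas n)).compl
      exact_mod_cast le_trans hn (le_max_right mm (P j mm))
  -- the escape set for {g = ⊤}
  set Z : ℕ → Set Ω := fun mm => (g ⁻¹' {⊤}) ∩ {ω | η ω ≤ ((mm : ℕ) : ℝ≥0)} with hZ
  have hZ_measη : MeasurableSet[hη.measurableSpace] (g ⁻¹' {⊤}) :=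
    hg (measurableSet_singleton ⊤)
  have hZ_meas : ∀ mm : ℕ, MeasurableSet[ℱ ((mm : ℕ) : ℝ≥0)] (Z mm) :=
    fun mm => by simpa only [WithTop.coe_le_coe] using ((hη.measurableSet _).1 hZ_measη).2 ((mm : ℕ) : ℝ≥0)
  have hZ_null : μ (g ⁻¹' {⊤}) = 0 := by
    have : g ⁻¹' {⊤} = {ω | ¬ g ω < ⊤} := by
      ext ω
      simp [lt_top_iff_ne_top]
    rw [this]
    exact ae_iff.1 hgfin
  -- the trigger sets
  set V : ℕ → Set Ω := fun n => (⋃ j, ⋃ mm, if n = T j mm then U j mm else ∅) ∪ Z n with hV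
  have hV_meas : ∀ n : ℕ, MeasurableSet[ℱ ((n : ℕ) : ℝ≥0)] (V n) := by
    intro n
    refine MeasurableSet.union ?_ (hZ_meas n)
    refine MeasurableSet.iUnion fun j => MeasurableSet.iUnion fun mm => ?_
    split_ifs with h
    · rw [h]
      exact hU_measF j mm
    · exact @MeasurableSet.empty _ (ℱ ((n : ℕ) : ℝ≥0))
  have hV_subη : ∀ n : ℕ, V n ⊆ {ω | η ω ≤ ((n : ℕ) : ℝ≥0)} := by
    intro n ω hω
    rcases hω with hω | hω
    · obtain ⟨j, hj⟩ := Set.mem_iUnion.1 hω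
      obtain ⟨mm, hmm⟩ := Set.mem_iUnion.1 hj
      by_cases h : n = T j mm
      · rw [if_pos h] at hmm
        have h1 : η ω ≤ ((mm : ℕ) : ℝ≥0) := hU_subη j mm hmm
        refine le_trans h1 ?_
        have : mm ≤ n := h ▸ le_max_left mm (P j mm)
        exact_mod_cast this
      · rw [if_neg h] at hmm
        exact absurd hmm (Set.notMem_empty ω)
    · exact hω.2
  -- the stopping sets
  set W : ℕ → Set Ω := fun n => C n ∪ V n with hW
  have hW_meas : ∀ n : ℕ, MeasurableSet[ℱ ((n : ℕ) : ℝ≥0)] (W n) :=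
    fun n => (hC_meas n).union (hV_meas n)
  have hW_m : ∀ n : ℕ, MeasurableSet (W n) := fun n => ℱ.le _ _ (hW_meas n)
  have hW_subη : ∀ n : ℕ, W n ⊆ {ω | η ω ≤ ((n : ℕ) : ℝ≥0)} :=
    fun n => Set.union_subset (hC_sub n) (hV_subη n)
  have hWtot : ∀ ω, ∃ n, ω ∈ W n := by
    intro ω
    by_cases hCn : ∃ n, ω ∈ C n
    · obtain ⟨n, hn⟩ := hCn
      exact ⟨n, Or.inl hn⟩
    · push_neg at hCn
      obtain ⟨mm, hmm⟩ := exists_nat_ge (η ω)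
      by_cases hgω : g ω = ⊤
      · exact ⟨mm, Or.inr (Or.inr ⟨by simp [Set.mem_preimage, hgω], hmm⟩)⟩
      · obtain ⟨j, hj⟩ := hA_cover ω hgω
        refine ⟨T j mm, Or.inr (Or.inl ?_)⟩
        refine Set.mem_iUnion.2 ⟨j, Set.mem_iUnion.2 ⟨mm, ?_⟩⟩
        rw [if_pos rfl]
        refine ⟨⟨hj, hmm⟩, ?_⟩
        simp only [Set.mem_iInter, Set.mem_compl_iff]
        exact fun n _ => hCn n
  -- the stopping time
  set N : Ω → ℕ := fun ω => sInf {n | ω ∈ W n} with hN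
  have hNmem : ∀ ω, ω ∈ W (N ω) := fun ω => Nat.sInf_mem (hWtot ω)
  set τ : Ω → ℝ≥0 := fun ω => ((N ω : ℕ) : ℝ≥0) with hτdef
  have hτ : IsStoppingTime ℱ (fun ω => (τ ω : WithTop ℝ≥0)) := by
    intro t
    simp only [WithTop.coe_le_coe]
    have hset : {ω | τ ω ≤ t} = ⋃ (n : ℕ), ⋃ (_ : ((n : ℕ) : ℝ≥0) ≤ t), W n := by
      ext ω
      simp only [Set.mem_setOf_eq, Set.mem_iUnion, hτdef]
      constructor
      · intro h
        exact ⟨N ω, h, hNmem ω⟩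
      · rintro ⟨n, hn, hWn⟩
        refine le_trans ?_ hn
        have : N ω ≤ n := Nat.sInf_le hWn
        exact_mod_cast this
    rw [hset]
    exact MeasurableSet.iUnion fun n => MeasurableSet.iUnion fun hn => (ℱ.mono hn) _ (hW_meas n)
  have hXτ_int : Integrable (fun ω => X (τ ω) ω) μ := hstop τ hτ
  set XT : Ω → ℝ≥0∞ := fun ω => (‖X (τ ω) ω‖₊ : ℝ≥0∞) + 1 with hXT
  have hXT_fin : ∫⁻ ω, XT ω ∂μ < ⊤ := by
    have h1 : ∫⁻ ω, (‖X (τ ω) ω‖₊ : ℝ≥0∞) ∂μ < ⊤ := hXτ_int.2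
    simp only [hXT]
    rw [lintegral_add_right _ measurable_const, lintegral_const, one_mul]
    exact ENNReal.add_lt_top.2 ⟨h1, by simp⟩
  -- the partition by the value of the stopping time
  set Pt : ℕ → Set Ω := fun n => {ω | N ω = n} with hPt
  have hPt_eq : ∀ n : ℕ, Pt n = W n ∩ ⋂ (k : ℕ) (_ : k < n), (W k)ᶜ := by
    intro n
    ext ω
    simp only [hPt, Set.mem_setOf_eq, Set.mem_inter_iff, Set.mem_iInter, Set.mem_compl_iff]
    constructor
    · intro h
      refine ⟨h ▸ hNmem ω, fun k hk hWk => ?_⟩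
      have : N ω ≤ k := Nat.sInf_le hWk
      omega
    · rintro ⟨h1, h2⟩
      have hle : N ω ≤ n := Nat.sInf_le h1
      rcases eq_or_lt_of_le hle with h | h
      · exact h
      · exact absurd (hNmem ω) (h2 _ h)
  have hPt_measF : ∀ n : ℕ, MeasurableSet[ℱ ((n : ℕ) : ℝ≥0)] (Pt n) := by
    intro n
    rw [hPt_eq n]
    refine (hW_meas n).inter ?_
    refine MeasurableSet.iInter fun k => MeasurableSet.iInter fun hk => ?_
    refine ((ℱ.mono ?_) _ (hW_meas k)).compl
    exact_mod_cast hk.le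
  have hPt_m : ∀ n : ℕ, MeasurableSet (Pt n) := fun n => ℱ.le _ _ (hPt_measF n)
  have hPt_disj : Pairwise (Function.onFun Disjoint Pt) := by
    intro n n' hnn'
    rw [Function.onFun, Set.disjoint_left]
    intro ω h1 h2
    exact hnn' (h1.symm.trans h2)
  have hPt_cover : (⋃ n, Pt n) = Set.univ := by
    ext ω
    simp only [Set.mem_iUnion, Set.mem_univ, iff_true]
    exact ⟨N ω, rfl⟩
  have hPt_tau : ∀ {n : ℕ} {ω}, ω ∈ Pt n → τ ω = ((n : ℕ) : ℝ≥0) := by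
    intro n ω h
    have h' : N ω = n := h
    simp only [hτdef]
    exact_mod_cast h'
  have hPt_subη : ∀ n : ℕ, Pt n ⊆ {ω | η ω ≤ ((n : ℕ) : ℝ≥0)} := by
    intro n ω h
    exact hW_subη n (h ▸ hNmem ω)
  have hS_measF : ∀ j n : ℕ, MeasurableSet[ℱ ((n : ℕ) : ℝ≥0)] (A j ∩ Pt n) := by
    intro j n
    have : A j ∩ Pt n = (A j ∩ {ω | η ω ≤ ((n : ℕ) : ℝ≥0)}) ∩ Pt n := by
      ext ω
      simp only [Set.mem_inter_iff, Set.mem_setOf_eq]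
      exact ⟨fun h => ⟨⟨h.1, hPt_subη n h.2⟩, h.2⟩, fun h => ⟨h.1.1, h.2⟩⟩
    rw [this]
    exact (hA_Fn j n).inter (hPt_measF n)
  -- conversion between the Bochner and lower integrals
  have hconv : ∀ (j : ℕ) (s : Set Ω), MeasurableSet s → s ⊆ A j →
      ∫⁻ ω in s, L ω ∂μ = ENNReal.ofReal (∫ ω in s, ℓ j ω ∂μ) := by
    intro j s hsm hsub
    rw [ofReal_integral_eq_lintegral_ofReal ((hℓ_int j).integrableOn)
      (Eventually.of_forall fun ω => hℓ_nonneg j ω)]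
    refine setLIntegral_congr_fun_ae hsm ?_
    filter_upwards [hLfin j] with ω hfin hωs
    have hωA : ω ∈ A j := hsub hωs
    have h1 : ℓ j ω = (L ω).toReal := by simp only [hℓ]; exact Set.indicator_of_mem hωA _
    rw [h1, ENNReal.ofReal_toReal (hfin hωA).ne]
  have hMconv : ∀ (j n : ℕ) (s : Set Ω), MeasurableSet[ℱ ((n : ℕ) : ℝ≥0)] s → s ⊆ A j →
      ∫⁻ ω in s, ENNReal.ofReal (M j n ω) ∂μ = ∫⁻ ω in s, L ω ∂μ := by
    intro j n s hs hsub
    have hsm : MeasurableSet s := ℱ.le _ _ hs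
    rw [← ofReal_integral_eq_lintegral_ofReal ((hM_int j n).integrableOn)
      (ae_restrict_of_ae (hM_nonneg j n)), hM_set j n s hs]
    exact (hconv j s hsm hsub).symm
  -- the pointwise bound on the hit part
  have hbound : ∀ (j n : ℕ) (ω : Ω), ω ∈ (A j ∩ Pt n) ∩ C n →
      ENNReal.ofReal (M j n ω) ≤ XT ω := by
    rintro j n ω ⟨⟨hAω, hPtω⟩, hCω⟩
    obtain ⟨j', hj'⟩ := Set.mem_iUnion.1 hCω
    have hjj : j' = j := hA_unique hj'.1.1 hAω
    have hMle : M j n ω ≤ ‖X ((n : ℕ) : ℝ≥0) ω‖ + 1 := hjj ▸ hj'.2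
    have hXeq : XT ω = ENNReal.ofReal (‖X ((n : ℕ) : ℝ≥0) ω‖ + 1) := by
      simp only [hXT]
      rw [hPt_tau hPtω, ENNReal.ofReal_add (norm_nonneg _) zero_le_one,
        ENNReal.ofReal_one, ofReal_norm, enorm_eq_nnnorm]
    rw [hXeq]
    exact ENNReal.ofReal_le_ofReal hMle
  -- the key estimate on each piece of the partition
  have hkey : ∀ j n : ℕ, ∫⁻ ω in A j ∩ Pt n, L ω ∂μ ≤
      (∫⁻ ω in (A j ∩ Pt n) ∩ C n, XT ω ∂μ) + ∫⁻ ω in (A j ∩ Pt n) \ C n, L ω ∂μ := by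
    intro j n
    have hsm : MeasurableSet (A j ∩ Pt n) := (hA_meas j).inter (hPt_m n)
    have hsplit : ∫⁻ ω in A j ∩ Pt n, L ω ∂μ =
        (∫⁻ ω in (A j ∩ Pt n) ∩ C n, L ω ∂μ) + ∫⁻ ω in (A j ∩ Pt n) \ C n, L ω ∂μ := by
      rw [← lintegral_union (hsm.diff (hC_m n)) Set.disjoint_sdiff_inter.symm]
      rw [Set.inter_union_diff]
    rw [hsplit]
    refine add_le_add_left ?_ _
    have h1 : ∫⁻ ω in (A j ∩ Pt n) ∩ C n, L ω ∂μ =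
        ∫⁻ ω in (A j ∩ Pt n) ∩ C n, ENNReal.ofReal (M j n ω) ∂μ :=
      (hMconv j n _ ((hS_measF j n).inter (hC_meas n))
        (Set.inter_subset_left.trans Set.inter_subset_left)).symm
    rw [h1]
    refine lintegral_mono_ae ?_
    refine (ae_restrict_iff' (hsm.inter (hC_m n))).2 ?_
    exact Eventually.of_forall fun ω hω => hbound j n ω hω
  -- summing over the partition
  have hsum_n : ∀ j : ℕ, ∫⁻ ω in A j, L ω ∂μ = ∑' n, ∫⁻ ω in A j ∩ Pt n, L ω ∂μ := by
    intro j
    have hAeq : A j = ⋃ n, (A j ∩ Pt n) := by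
      rw [← Set.inter_iUnion, hPt_cover, Set.inter_univ]
    conv_lhs => rw [hAeq]
    exact lintegral_iUnion (fun n => (hA_meas j).inter (hPt_m n))
      (fun n n' h => (hPt_disj h).mono Set.inter_subset_right Set.inter_subset_right) L
  -- the escape part is controlled by the chosen covers
  have hesc : ∀ j n : ℕ, ∫⁻ ω in (A j ∩ Pt n) \ C n, L ω ∂μ ≤
      ∑' mm, (if n = T j mm then μ.withDensity L (U j mm) else 0) := by
    intro j n
    have hsub : (A j ∩ Pt n) \ C n ⊆ ⋃ mm, (if n = T j mm then U j mm else ∅) := by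
      rintro ω ⟨⟨hAω, hPtω⟩, hnC⟩
      have hWω : ω ∈ W n := hPtω ▸ hNmem ω
      rcases hWω with hCω | hVω
      · exact absurd hCω hnC
      rcases hVω with hUω | hZω
      · obtain ⟨j', hj'⟩ := Set.mem_iUnion.1 hUω
        obtain ⟨mm, hmm⟩ := Set.mem_iUnion.1 hj'
        by_cases h : n = T j' mm
        · rw [if_pos h] at hmm
          have hjj : j' = j := hA_unique (hU_subA j' mm hmm) hAω
          subst hjj
          exact Set.mem_iUnion.2 ⟨mm, by rw [if_pos h]; exact hmm⟩
        · rw [if_neg h] at hmm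
          exact absurd hmm (Set.notMem_empty ω)
      · exfalso
        have h1 : g ω = ⊤ := hZω.1
        have h2 : g ω < (j : ℝ≥0∞) + 1 := hAω.2
        rw [h1] at h2
        exact absurd h2 (by simp)
    refine le_trans (lintegral_mono_set hsub) ?_
    refine le_trans (lintegral_iUnion_le _ _) (ENNReal.tsum_le_tsum fun mm => ?_)
    by_cases h : n = T j mm
    · rw [if_pos h, if_pos h, withDensity_apply _ (hR_m j mm (P j mm))]
    · rw [if_neg h, if_neg h]
      simp
  -- the total escape cost is at most 1
  have hgeo : ∑' k : ℕ, ((2 : ℝ≥0∞)⁻¹) ^ (k + 1) = 1 := by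
    have h1 : ∀ k : ℕ, ((2 : ℝ≥0∞)⁻¹) ^ (k + 1) = ((2 : ℝ≥0∞)⁻¹) ^ k * 2⁻¹ := fun k => pow_succ _ _
    calc ∑' k : ℕ, ((2 : ℝ≥0∞)⁻¹) ^ (k + 1) = ∑' k : ℕ, ((2 : ℝ≥0∞)⁻¹) ^ k * 2⁻¹ := by
          exact tsum_congr h1
      _ = (∑' k : ℕ, ((2 : ℝ≥0∞)⁻¹) ^ k) * 2⁻¹ := ENNReal.tsum_mul_right
      _ = (1 - 2⁻¹)⁻¹ * 2⁻¹ := by rw [ENNReal.tsum_geometric]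
      _ = 1 := by
          rw [ENNReal.one_sub_inv_two]
          exact ENNReal.inv_mul_cancel (by simp) (by simp)
  have hesc_tot : ∑' (j : ℕ), ∑' (n : ℕ),
      (∑' mm, (if n = T j mm then μ.withDensity L (U j mm) else 0)) ≤ 1 := by
    have hjj : ∀ j : ℕ, ∑' (n : ℕ), (∑' mm, (if n = T j mm then μ.withDensity L (U j mm) else 0))
        ≤ 2⁻¹ ^ (j + 1) := by
      intro j
      rw [ENNReal.tsum_comm]
      have h1 : ∀ mm : ℕ, ∑' (n : ℕ), (if n = T j mm then μ.withDensity L (U j mm) else 0)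
          = μ.withDensity L (U j mm) := fun mm => tsum_ite_eq (T j mm) _
      calc ∑' (mm : ℕ), ∑' (n : ℕ), (if n = T j mm then μ.withDensity L (U j mm) else 0)
          = ∑' (mm : ℕ), μ.withDensity L (U j mm) := tsum_congr h1
        _ ≤ ∑' (mm : ℕ), ε j mm := ENNReal.tsum_le_tsum fun mm => (hPspec j mm).le
        _ = 2⁻¹ ^ (j + 1) * ∑' (mm : ℕ), 2⁻¹ ^ (mm + 1) := by
            rw [hε, ENNReal.tsum_mul_left]
        _ = 2⁻¹ ^ (j + 1) := by rw [hgeo, mul_one]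
    calc ∑' (j : ℕ), ∑' (n : ℕ), (∑' mm, (if n = T j mm then μ.withDensity L (U j mm) else 0))
        ≤ ∑' (j : ℕ), (2 : ℝ≥0∞)⁻¹ ^ (j + 1) := ENNReal.tsum_le_tsum hjj
      _ = 1 := hgeo
  -- the hit part is controlled by the integral of XT
  have hhit_tot : ∑' (jn : ℕ × ℕ), ∫⁻ ω in (A jn.1 ∩ Pt jn.2) ∩ C jn.2, XT ω ∂μ ≤
      ∫⁻ ω, XT ω ∂μ := by
    have hdisj : Pairwise (Function.onFun Disjoint fun jn : ℕ × ℕ =>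
        (A jn.1 ∩ Pt jn.2) ∩ C jn.2) := by
      intro jn jn' hne
      rw [Function.onFun, Set.disjoint_left]
      intro ω h1 h2
      refine hne ?_
      have hj : jn.1 = jn'.1 := hA_unique h1.1.1 h2.1.1
      have hn : jn.2 = jn'.2 := h1.1.2.symm.trans h2.1.2
      exact Prod.ext hj hn
    have hmeas : ∀ jn : ℕ × ℕ, MeasurableSet ((A jn.1 ∩ Pt jn.2) ∩ C jn.2) :=
      fun jn => ((hA_meas jn.1).inter (hPt_m jn.2)).inter (hC_m jn.2)
    have hstep1 : ∀ jn : ℕ × ℕ, ∫⁻ ω in (A jn.1 ∩ Pt jn.2) ∩ C jn.2, XT ω ∂μ =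
        μ.withDensity XT ((A jn.1 ∩ Pt jn.2) ∩ C jn.2) :=
      fun jn => (withDensity_apply _ (hmeas jn)).symm
    calc ∑' (jn : ℕ × ℕ), ∫⁻ ω in (A jn.1 ∩ Pt jn.2) ∩ C jn.2, XT ω ∂μ
        = ∑' (jn : ℕ × ℕ), μ.withDensity XT ((A jn.1 ∩ Pt jn.2) ∩ C jn.2) := tsum_congr hstep1
      _ = μ.withDensity XT (⋃ jn : ℕ × ℕ, ((A jn.1 ∩ Pt jn.2) ∩ C jn.2)) :=
          (measure_iUnion hdisj hmeas).symm
      _ ≤ μ.withDensity XT Set.univ := measure_mono (Set.subset_univ _)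
      _ = ∫⁻ ω, XT ω ∂μ := by rw [withDensity_apply _ MeasurableSet.univ, Measure.restrict_univ]
  -- assembling everything
  have htop_m : MeasurableSet (g ⁻¹' {⊤}) := hηle _ hZ_measη
  have hcompl : (g ⁻¹' {⊤})ᶜ = ⋃ j, A j := by
    ext ω
    simp only [Set.mem_compl_iff, Set.mem_preimage, Set.mem_singleton_iff, Set.mem_iUnion]
    constructor
    · exact fun h => hA_cover ω h
    · rintro ⟨j, hj⟩
      intro htop
      have := hj.2
      rw [htop] at this
      exact absurd this (by simp)
  have hfinal : ∫⁻ ω, L ω ∂μ ≤ ∫⁻ ω, XT ω ∂μ + 1 := by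
    rw [← lintegral_add_compl L htop_m, setLIntegral_measure_zero _ _ hZ_null, zero_add,
      hcompl, lintegral_iUnion hA_meas hA_disj]
    calc ∑' j, ∫⁻ ω in A j, L ω ∂μ
        = ∑' j, ∑' n, ∫⁻ ω in A j ∩ Pt n, L ω ∂μ := tsum_congr hsum_n
      _ ≤ ∑' j, ∑' n, ((∫⁻ ω in (A j ∩ Pt n) ∩ C n, XT ω ∂μ) +
            ∑' mm, (if n = T j mm then μ.withDensity L (U j mm) else 0)) := by
          refine ENNReal.tsum_le_tsum fun j => ENNReal.tsum_le_tsum fun n => ?_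
          exact le_trans (hkey j n) (add_le_add_right (hesc j n) _)
      _ = (∑' j, ∑' n, ∫⁻ ω in (A j ∩ Pt n) ∩ C n, XT ω ∂μ) +
            ∑' j, ∑' n, (∑' mm, (if n = T j mm then μ.withDensity L (U j mm) else 0)) := by
          rw [← ENNReal.tsum_add]
          refine tsum_congr fun j => ?_
          rw [← ENNReal.tsum_add]
      _ ≤ ∫⁻ ω, XT ω ∂μ + 1 := by
          refine add_le_add ?_ hesc_tot
          rw [← ENNReal.tsum_prod]
          exact hhit_tot
  exact lt_of_le_of_lt hfinal (by
    exact ENNReal.add_lt_top.2 ⟨hXT_fin, by simp⟩)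
end

section
/- Let X be a right-continuous adapted process such that X_τ is integrable and E[X_τ] = E[X_0] for all finite stopping times τ with respect to the filtration (F_t). Then the same holds for all finite stopping times of the right-continuous augmentation (F_t^+): for any finite (F_t^+)-stopping time σ̂, X_{σ̂} is integrable and E[X_{σ̂}] = E[X_0]. -/
open MeasureTheory Filter ProbabilityTheory
open scoped ENNReal NNReal Topology

/-- Let `X` be right-continuous and adapted with `X_τ ∈ L¹` and
`E[X_τ] = E[X_0]` for all finite `ℱ`-stopping times `τ`. Then the same holds for every finite
stopping time `σhat` of the right-continuous augmentation `ℱ⁺` (where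
`ℱ⁺ t = ⨅_{s > t} ℱ s`): `X_{σhat} ∈ L¹` and `E[X_{σhat}] = E[X_0]`. -/
theorem statement16 {Ω : Type*} {m : MeasurableSpace Ω} {μ : Measure Ω} [IsProbabilityMeasure μ]
    (ℱ : Filtration ℝ≥0 m) (X : ℝ≥0 → Ω → ℝ)
    (hadapted : Adapted ℱ X)
    (hrc : ∀ᵐ ω ∂μ, ∀ t : ℝ≥0, ContinuousWithinAt (fun s => X s ω) (Set.Ici t) t)
    (hstop : ∀ τ : Ω → ℝ≥0, IsStoppingTime ℱ (fun ω => (τ ω : WithTop ℝ≥0)) →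
      Integrable (fun ω => X (τ ω) ω) μ ∧ ∫ ω, X (τ ω) ω ∂μ = ∫ ω, X 0 ω ∂μ)
    (σhat : Ω → ℝ≥0)
    (hσhat : ∀ t : ℝ≥0, MeasurableSet[⨅ s : {s : ℝ≥0 // t < s}, ℱ s.1] {ω | σhat ω ≤ t}) :
    Integrable (fun ω => X (σhat ω) ω) μ ∧ ∫ ω, X (σhat ω) ω ∂μ = ∫ ω, X 0 ω ∂μ := by
  classical
  -- `ℱ⁺ s ≤ ℱ t` for `s < t`, so `{σhat ≤ s} ∈ ℱ t`.
  have hle : ∀ s t : ℝ≥0, s < t → MeasurableSet[ℱ t] {ω | σhat ω ≤ s} := by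
    intro s t hst
    exact (iInf_le (fun u : {u : ℝ≥0 // s < u} => ℱ u.1) ⟨t, hst⟩ : _ ≤ ℱ t) _ (hσhat s)
  -- `{σhat < d} ∈ ℱ t` for `0 < d ≤ t`.
  have hlt : ∀ d t : ℝ≥0, 0 < d → d ≤ t → MeasurableSet[ℱ t] {ω | σhat ω < d} := by
    intro d t hd hdt
    have hkey : {ω | σhat ω < d} = ⋃ k : ℕ, {ω | σhat ω ≤ d - d / (k + 2)} := by
      ext ω
      simp only [Set.mem_setOf_eq, Set.mem_iUnion]
      constructor
      · intro h
        have hc : 0 < d - σhat ω := tsub_pos_of_lt h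
        obtain ⟨k, hk⟩ := exists_nat_ge (d / (d - σhat ω))
        refine ⟨k, ?_⟩
        have hdk : d / ((k : ℝ≥0) + 2) ≤ d - σhat ω := by
          rw [div_le_iff₀ (by positivity)]
          calc d = d / (d - σhat ω) * (d - σhat ω) := by
                rw [div_mul_cancel₀ _ hc.ne']
            _ ≤ ((k : ℝ≥0) + 2) * (d - σhat ω) := by
                exact mul_le_mul_of_nonneg_right (hk.trans (by
                  simp [le_add_iff_nonneg_right])) zero_le
            _ = (d - σhat ω) * ((k : ℝ≥0) + 2) := mul_comm _ _
        calc σhat ω = d - (d - σhat ω) := by rw [tsub_tsub_cancel_of_le h.le]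
          _ ≤ d - d / ((k : ℝ≥0) + 2) := tsub_le_tsub_left hdk d
      · rintro ⟨k, hk⟩
        exact lt_of_le_of_lt hk (tsub_lt_self hd (by positivity))
    rw [hkey]
    refine MeasurableSet.iUnion fun k => hle _ _ ?_
    exact lt_of_lt_of_le (tsub_lt_self hd (by positivity)) hdt
  -- `σhat + c` is an `ℱ`-stopping time for `c > 0`.
  have hstopC : ∀ c : ℝ≥0, 0 < c → IsStoppingTime ℱ fun ω => ((σhat ω + c : ℝ≥0) : WithTop ℝ≥0) := by
    intro c hc t
    simp only [WithTop.coe_le_coe]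
    by_cases hct : c ≤ t
    · have hset : {ω | σhat ω + c ≤ t} = {ω | σhat ω ≤ t - c} := by
        ext ω; simp [le_tsub_iff_right hct]
      rw [hset]
      exact hle _ _ (tsub_lt_self (lt_of_lt_of_le hc hct) hc)
    · have hset : {ω | σhat ω + c ≤ t} = (∅ : Set Ω) := by
        ext ω
        simp only [Set.mem_setOf_eq, Set.mem_empty_iff_false, iff_false, not_le]
        exact lt_of_lt_of_le (lt_of_not_ge hct) (le_add_self)
      rw [hset]; exact @MeasurableSet.empty Ω (ℱ t)
  -- dyadic upper approximations of `σhat`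
  set ρ : ℕ → Ω → ℝ≥0 := fun n ω => ((⌊σhat ω * 2 ^ n⌋₊ : ℝ≥0) + 1) / 2 ^ n with hρdef
  have h2n : ∀ n : ℕ, (0 : ℝ≥0) < 2 ^ n := fun n => pow_pos two_pos n
  have hρ_gt : ∀ n ω, σhat ω < ρ n ω := by
    intro n ω
    rw [hρdef]
    dsimp only
    rw [lt_div_iff₀ (h2n n)]
    exact Nat.lt_floor_add_one (σhat ω * 2 ^ n)
  have hρ_le : ∀ n ω, ρ n ω ≤ σhat ω + (1 / 2) ^ n := by
    intro n ω
    rw [hρdef]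
    dsimp only
    rw [div_le_iff₀ (h2n n)]
    calc (⌊σhat ω * 2 ^ n⌋₊ : ℝ≥0) + 1 ≤ σhat ω * 2 ^ n + 1 :=
          add_le_add_left (Nat.floor_le zero_le) 1
      _ = (σhat ω + (1 / 2) ^ n) * 2 ^ n := by
          rw [add_mul]
          congr 1
          rw [div_pow, one_pow, div_mul_cancel₀ _ (h2n n).ne']
  -- `ρ n` is an `ℱ`-stopping time
  have hρ_st : ∀ n, IsStoppingTime ℱ (fun ω => (ρ n ω : WithTop ℝ≥0)) := by
    intro n t
    simp only [WithTop.coe_le_coe]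
    have hset : {ω | ρ n ω ≤ t} = {ω | σhat ω < (⌊t * 2 ^ n⌋₊ : ℝ≥0) / 2 ^ n} := by
      ext ω
      simp only [Set.mem_setOf_eq, hρdef]
      rw [div_le_iff₀ (h2n n), lt_div_iff₀ (h2n n)]
      constructor
      · intro h
        have h1 : (⌊σhat ω * 2 ^ n⌋₊ + 1 : ℕ) ≤ ⌊t * 2 ^ n⌋₊ := by
          rw [Nat.le_floor_iff zero_le]
          exact_mod_cast h
        have h2 : ⌊σhat ω * 2 ^ n⌋₊ < ⌊t * 2 ^ n⌋₊ := Nat.lt_of_succ_le h1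
        exact Nat.lt_of_floor_lt h2
      · intro h
        have h2 : ⌊σhat ω * 2 ^ n⌋₊ < ⌊t * 2 ^ n⌋₊ := by
          rw [← Nat.floor_lt zero_le] at h
          exact h
        have h1 : (⌊σhat ω * 2 ^ n⌋₊ + 1 : ℕ) ≤ ⌊t * 2 ^ n⌋₊ := Nat.succ_le_of_lt h2
        calc ((⌊σhat ω * 2 ^ n⌋₊ : ℝ≥0) + 1) = ((⌊σhat ω * 2 ^ n⌋₊ + 1 : ℕ) : ℝ≥0) := by
              push_cast; ring
          _ ≤ (⌊t * 2 ^ n⌋₊ : ℝ≥0) := by exact_mod_cast h1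
          _ ≤ t * 2 ^ n := Nat.floor_le zero_le
    rw [hset]
    rcases Nat.eq_zero_or_pos ⌊t * 2 ^ n⌋₊ with h0 | hpos
    · have : {ω | σhat ω < (⌊t * 2 ^ n⌋₊ : ℝ≥0) / 2 ^ n} = (∅ : Set Ω) := by
        ext ω; simp [h0]
      rw [this]; exact @MeasurableSet.empty Ω (ℱ t)
    · refine hlt _ _ ?_ ?_
      · have : (0 : ℝ≥0) < (⌊t * 2 ^ n⌋₊ : ℝ≥0) := by exact_mod_cast hpos
        positivity
      · rw [div_le_iff₀ (h2n n)]
        exact Nat.floor_le zero_le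
  -- the range of `ρ n` is countable
  have hρ_ct : ∀ n, (Set.range (ρ n)).Countable := by
    intro n
    have : Set.range (ρ n) ⊆ Set.range (fun k : ℕ => ((k : ℝ≥0) + 1) / 2 ^ n) := by
      rintro x ⟨ω, rfl⟩
      exact ⟨⌊σhat ω * 2 ^ n⌋₊, rfl⟩
    exact (Set.countable_range _).mono this
  have hρ_ct' : ∀ n, (Set.range fun ω => (ρ n ω : WithTop ℝ≥0)).Countable := fun n =>
    ((hρ_ct n).image (fun x : ℝ≥0 => (x : WithTop ℝ≥0))).mono
      (by rintro _ ⟨ω, rfl⟩; exact ⟨ρ n ω, ⟨ω, rfl⟩, rfl⟩)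
  -- `X_{ρ n}` is strongly measurable w.r.t. the stopping σ-algebra of `ρ n`
  have hXmeas : ∀ n, StronglyMeasurable[(hρ_st n).measurableSpace] fun ω => X (ρ n ω) ω := by
    intro n
    refine Measurable.stronglyMeasurable ?_
    intro B hB
    rw [(hρ_st n).measurableSet]
    suffices hpart : ∀ t : ℝ≥0,
        MeasurableSet[ℱ t] ((fun ω => X (ρ n ω) ω) ⁻¹' B ∩ {ω | ρ n ω ≤ t}) by
      refine ⟨?_, fun t => ?_⟩
      · have hU : (fun ω => X (ρ n ω) ω) ⁻¹' B =
            ⋃ k : ℕ, ((fun ω => X (ρ n ω) ω) ⁻¹' B ∩ {ω | ρ n ω ≤ (k : ℝ≥0)}) := by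
          ext ω
          simp only [Set.mem_iUnion, Set.mem_inter_iff, Set.mem_setOf_eq]
          constructor
          · intro h
            obtain ⟨k, hk⟩ := exists_nat_ge (ρ n ω)
            exact ⟨k, h, hk⟩
          · rintro ⟨k, h, _⟩
            exact h
        rw [hU]
        exact MeasurableSet.iUnion fun k => le_iSup (fun t => ℱ t) (k : ℝ≥0) _ (hpart k)
      · have := hpart t
        simpa only [WithTop.coe_le_coe] using this
    intro t
    have hset : (fun ω => X (ρ n ω) ω) ⁻¹' B ∩ {ω | ρ n ω ≤ t} =
        ⋃ k : ℕ, if h : ((k : ℝ≥0) + 1) / 2 ^ n ≤ t then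
          ({ω | ρ n ω = ((k : ℝ≥0) + 1) / 2 ^ n} ∩ X (((k : ℝ≥0) + 1) / 2 ^ n) ⁻¹' B)
        else (∅ : Set Ω) := by
      ext ω
      simp only [Set.mem_inter_iff, Set.mem_preimage, Set.mem_setOf_eq, Set.mem_iUnion]
      constructor
      · rintro ⟨hXB, hρt⟩
        refine ⟨⌊σhat ω * 2 ^ n⌋₊, ?_⟩
        have hval : ρ n ω = ((⌊σhat ω * 2 ^ n⌋₊ : ℝ≥0) + 1) / 2 ^ n := rfl
        rw [dif_pos (hval ▸ hρt)]
        exact ⟨hval.symm, by rw [← hval]; exact hXB⟩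
      · rintro ⟨k, hk⟩
        by_cases h : ((k : ℝ≥0) + 1) / 2 ^ n ≤ t
        · rw [dif_pos h] at hk
          obtain ⟨h1, h2⟩ := hk
          exact ⟨by rw [h1]; exact h2, h1 ▸ h⟩
        · rw [dif_neg h] at hk
          exact absurd hk (Set.notMem_empty ω)
    rw [hset]
    refine MeasurableSet.iUnion fun k => ?_
    by_cases h : ((k : ℝ≥0) + 1) / 2 ^ n ≤ t
    · rw [dif_pos h]
      refine MeasurableSet.inter ?_ ?_
      · exact ℱ.mono h _ (by simpa only [WithTop.coe_eq_coe] using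
            (hρ_st n).measurableSet_eq_of_countable_range (hρ_ct' n) (((k : ℝ≥0) + 1) / 2 ^ n))
      · exact ℱ.mono h _ ((hadapted _) hB)
    · rw [dif_neg h]
      exact @MeasurableSet.empty Ω (ℱ t)
  -- integrability and expectation of `X_{ρ n}`
  have hρ_int : ∀ n, Integrable (fun ω => X (ρ n ω) ω) μ := fun n => (hstop (ρ n) (hρ_st n)).1
  have hρ_mean : ∀ n, ∫ ω, X (ρ n ω) ω ∂μ = ∫ ω, X 0 ω ∂μ := fun n => (hstop (ρ n) (hρ_st n)).2
  -- the comparison stopping time `σ₂ = σhat + 2`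
  set σ₂ : Ω → ℝ≥0 := fun ω => σhat ω + 2 with hσ₂def
  have hσ₂ : IsStoppingTime ℱ (fun ω => (σ₂ ω : WithTop ℝ≥0)) := hstopC 2 two_pos
  obtain ⟨hG_int, hG_eq⟩ := hstop σ₂ hσ₂
  have hρ_le_one : ∀ n ω, ρ n ω ≤ σhat ω + 1 := by
    intro n ω
    refine (hρ_le n ω).trans (add_le_add_right ?_ _)
    exact pow_le_one₀ zero_le (by norm_num)
  -- the key exchange identity: on sets in the stopping σ-algebra of `ρ n`, the integral of
  -- `X_{ρ n}` agrees with that of `X_{σ₂}`.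
  have hswap : ∀ n, ∀ A : Set Ω, MeasurableSet[(hρ_st n).measurableSpace] A →
      ∫ ω in A, X (ρ n ω) ω ∂μ = ∫ ω in A, X (σ₂ ω) ω ∂μ := by
    intro n A hA
    have hAm : MeasurableSet A :=
      (hρ_st n).measurableSpace_le _ hA
    set τ : Ω → ℝ≥0 := A.piecewise (ρ n) σ₂ with hτdef
    have hτ_st : IsStoppingTime ℱ (fun ω => (τ ω : WithTop ℝ≥0)) := by
      intro t
      simp only [WithTop.coe_le_coe]
      have hsplit : {ω | τ ω ≤ t} =
          (A ∩ {ω | ρ n ω ≤ t}) ∪ (Aᶜ ∩ {ω | σ₂ ω ≤ t}) := by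
        ext ω
        by_cases hω : ω ∈ A <;>
          simp [hτdef, Set.piecewise, hω]
      rw [hsplit]
      refine MeasurableSet.union (by simpa only [WithTop.coe_le_coe] using (((hρ_st n).measurableSet A).1 hA).2 t) ?_
      have hsub : Aᶜ ∩ {ω | σ₂ ω ≤ t} =
          (Aᶜ ∩ {ω | ρ n ω ≤ t - 1}) ∩ {ω | σ₂ ω ≤ t} := by
        ext ω
        constructor
        · rintro ⟨h1, h2⟩
          have h1t : (1 : ℝ≥0) ≤ t := le_trans (by norm_num) (le_trans le_add_self h2)
          refine ⟨⟨h1, ?_⟩, h2⟩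
          show ρ n ω ≤ t - 1
          rw [le_tsub_iff_right h1t]
          calc ρ n ω + 1 ≤ (σhat ω + 1) + 1 := add_le_add_left (hρ_le_one n ω) 1
            _ = σhat ω + 2 := by ring
            _ ≤ t := h2
        · rintro ⟨⟨h1, _⟩, h2⟩
          exact ⟨h1, h2⟩
      rw [hsub]
      refine MeasurableSet.inter ?_ (by simpa only [WithTop.coe_le_coe] using hσ₂ t)
      exact ℱ.mono tsub_le_self _ (by simpa only [WithTop.coe_le_coe] using
          (((hρ_st n).measurableSet Aᶜ).1 hA.compl).2 (t - 1))
    obtain ⟨hτ_int, hτ_eq⟩ := hstop τ hτ_st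
    have h1 : ∫ ω, X (τ ω) ω ∂μ = (∫ ω in A, X (ρ n ω) ω ∂μ) + ∫ ω in Aᶜ, X (σ₂ ω) ω ∂μ := by
      rw [← integral_add_compl hAm hτ_int]
      congr 1
      · refine setIntegral_congr_fun hAm fun ω hω => ?_
        simp [hτdef, Set.piecewise_eq_of_mem _ _ _ hω]
      · refine setIntegral_congr_fun hAm.compl fun ω hω => ?_
        simp [hτdef, Set.piecewise_eq_of_notMem _ _ _ hω]
    have h2 : ∫ ω, X (σ₂ ω) ω ∂μ = (∫ ω in A, X (σ₂ ω) ω ∂μ) + ∫ ω in Aᶜ, X (σ₂ ω) ω ∂μ :=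
      (integral_add_compl hAm hG_int).symm
    have h3 : ∫ ω, X (τ ω) ω ∂μ = ∫ ω, X (σ₂ ω) ω ∂μ := hτ_eq.trans hG_eq.symm
    have := h1.symm.trans (h3.trans h2)
    linarith
  -- `X_{ρ n}` is the conditional expectation of `X_{σ₂}` w.r.t. the stopping σ-algebra of `ρ n`
  have hm : ∀ n, (hρ_st n).measurableSpace ≤ m := fun n =>
    (hρ_st n).measurableSpace_le
  have hcond : ∀ n, (fun ω => X (ρ n ω) ω)
      =ᵐ[μ] μ[fun ω => X (σ₂ ω) ω|(hρ_st n).measurableSpace] := by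
    intro n
    refine ae_eq_condExp_of_forall_setIntegral_eq (hm n) hG_int
      (fun s _ _ => (hρ_int n).integrableOn) (fun s hs _ => hswap n s hs) ?_
    exact StronglyMeasurable.aestronglyMeasurable (hXmeas n)
  -- uniform integrability of the family `X_{ρ n}`
  have hui : UniformIntegrable (fun n ω => X (ρ n ω) ω) 1 μ := by
    refine (hG_int.uniformIntegrable_condExp hm).ae_eq fun n => ?_
    exact (hcond n).symm
  -- a.e. convergence of `X_{ρ n}` to `X_{σhat}` by right-continuity
  have htend : ∀ᵐ ω ∂μ, Tendsto (fun n => X (ρ n ω) ω) atTop (𝓝 (X (σhat ω) ω)) := by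
    filter_upwards [hrc] with ω hω
    have hρ_tendsto : Tendsto (fun n => ρ n ω) atTop (𝓝 (σhat ω)) := by
      have hupper : Tendsto (fun n : ℕ => σhat ω + (1 / 2 : ℝ≥0) ^ n) atTop (𝓝 (σhat ω)) := by
        have h0 : Tendsto (fun n : ℕ => ((1 : ℝ≥0) / 2) ^ n) atTop (𝓝 0) :=
          NNReal.tendsto_pow_atTop_nhds_zero_of_lt_one
            (by rw [one_div]; exact inv_lt_one_of_one_lt₀ one_lt_two)
        simpa using tendsto_const_nhds.add h0
      exact tendsto_of_tendsto_of_tendsto_of_le_of_le tendsto_const_nhds hupper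
        (fun n => (hρ_gt n ω).le) (fun n => hρ_le n ω)
    have hmem : ∀ n : ℕ, ρ n ω ∈ Set.Ici (σhat ω) := fun n => (hρ_gt n ω).le
    exact (hω (σhat ω)).tendsto.comp
      (tendsto_nhdsWithin_of_tendsto_nhds_of_eventually_within _ hρ_tendsto
        (Eventually.of_forall hmem))
  -- the limit is in L¹
  have hfm : AEStronglyMeasurable (fun ω => X (σhat ω) ω) μ :=
    aestronglyMeasurable_of_tendsto_ae atTop (fun n => (hρ_int n).aestronglyMeasurable) htend
  obtain ⟨C, hC⟩ := hui.2.2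
  have hf1 : MemLp (fun ω => X (σhat ω) ω) 1 μ := by
    refine ⟨hfm, ?_⟩
    calc eLpNorm (fun ω => X (σhat ω) ω) 1 μ
        ≤ atTop.liminf fun n => eLpNorm (fun ω => X (ρ n ω) ω) 1 μ :=
          Lp.eLpNorm_lim_le_liminf_eLpNorm (fun n => (hρ_int n).aestronglyMeasurable) _ htend
      _ ≤ (C : ℝ≥0∞) := liminf_le_of_frequently_le (Frequently.of_forall hC)
      _ < ∞ := ENNReal.coe_lt_top
  have hfint : Integrable (fun ω => X (σhat ω) ω) μ := memLp_one_iff_integrable.mp hf1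
  -- Vitali's convergence theorem: `X_{ρ n} → X_{σhat}` in L¹
  have hL1 : Tendsto (fun n => eLpNorm ((fun ω => X (ρ n ω) ω) - fun ω => X (σhat ω) ω) 1 μ)
      atTop (𝓝 0) :=
    tendsto_Lp_finite_of_tendsto_ae le_rfl ENNReal.one_ne_top
      (fun n => (hρ_int n).aestronglyMeasurable) hf1 hui.2.1 htend
  have hIt : Tendsto (fun n => ∫ ω, X (ρ n ω) ω ∂μ) atTop (𝓝 (∫ ω, X (σhat ω) ω ∂μ)) :=
    tendsto_integral_of_L1' _ hfint.aestronglyMeasurable (Eventually.of_forall hρ_int) hL1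
  rw [tendsto_congr hρ_mean] at hIt
  exact ⟨hfint, tendsto_nhds_unique hIt tendsto_const_nhds⟩
end

section
/- Let A be an event with P(A) > 0 and U a uniform(0,1) random variable (on the same space, not necessarily independent of A). Define g : [0,1] → [0,∞] by g(t) = 1/P(A ∩ {U ≤ t}). Then ∑_{n∈ℕ} P(A ∩ {g(U) ≥ n}) = ∞; in particular E[1_A g(U)] = ∞. -/
open MeasureTheory Filter ProbabilityTheory
open scoped ENNReal NNReal Topology

section aux

lemma aux_harmonic_shift (N : ℕ) (hN : 1 ≤ N) :
    ∑' k : ℕ, ((k + N : ℕ) : ℝ≥0∞)⁻¹ = ⊤ := by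
  set g : ℕ → ℝ≥0 := fun k => ((k + N : ℕ) : ℝ≥0)⁻¹ with hg
  have h1 : ∀ k : ℕ, ((k + N : ℕ) : ℝ≥0∞)⁻¹ = ((g k : ℝ≥0) : ℝ≥0∞) := by
    intro k
    rw [hg, ← ENNReal.coe_natCast, ← ENNReal.coe_inv (Nat.cast_ne_zero.2 (by omega))]
  have h2 : ∑' k : ℕ, ((g k : ℝ≥0) : ℝ≥0∞) = ⊤ := by
    by_contra h
    have hsum : Summable g :=
      ENNReal.tsum_coe_ne_top_iff_summable.1 h
    have hsumR : Summable (fun k : ℕ => ((k + N : ℕ) : ℝ)⁻¹) := by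
      have := NNReal.summable_coe.2 hsum
      simpa [hg] using this
    have : Summable (fun n : ℕ => ((n : ℝ))⁻¹) :=
      (summable_nat_add_iff (f := fun n : ℕ => ((n : ℝ))⁻¹) N).1 (by simpa using hsumR)
    exact Real.not_summable_one_div_natCast (by simpa [one_div] using this)
  rw [tsum_congr h1, h2]

end aux

/-- Let `A` be an event with `P(A) > 0` and `U` a uniform(0,1) random variable
(not necessarily independent of `A`). With `g(t) = 1/P(A ∩ {U ≤ t})` (and `1/0 = ∞`),
`∑_{n ∈ ℕ} P(A ∩ {g(U) ≥ n}) = ∞`; in particular `E[1_A g(U)] = ∞`. -/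
theorem statement17 {Ω : Type*} {m : MeasurableSpace Ω} {μ : Measure Ω} [IsProbabilityMeasure μ]
    (A : Set Ω) (hAmeas : MeasurableSet A) (hApos : 0 < μ A)
    (U : Ω → ℝ) (hUmeas : Measurable U)
    (hUlaw : Measure.map U μ = (volume : Measure ℝ).restrict (Set.Ioo 0 1)) :
    (∑' n : ℕ, μ (A ∩ {ω | (n : ℝ≥0∞) ≤ (μ (A ∩ {ω' | U ω' ≤ U ω}))⁻¹}) = ⊤) ∧
      ∫⁻ ω in A, (μ (A ∩ {ω' | U ω' ≤ U ω}))⁻¹ ∂μ = ⊤ := by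
  classical
  -- the "CDF on A" function
  set F : ℝ → ℝ≥0∞ := fun t => μ (A ∩ {ω' | U ω' ≤ t}) with hF
  have hset : ∀ t, {ω' | U ω' ≤ t} = U ⁻¹' Set.Iic t := fun t => rfl
  have hFm : ∀ t, MeasurableSet (A ∩ {ω' | U ω' ≤ t}) := by
    intro t; rw [hset]; exact hAmeas.inter (hUmeas measurableSet_Iic)
  have hFmono : Monotone F := by
    intro s t hst
    exact measure_mono (Set.inter_subset_inter_right _ (fun ω hω => le_trans hω hst))
  -- measure of U-level sets via the law
  have hmap : ∀ s : Set ℝ, MeasurableSet s → μ (U ⁻¹' s) = volume (s ∩ Set.Ioo 0 1) := by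
    intro s hs
    rw [← Measure.map_apply hUmeas hs, hUlaw, Measure.restrict_apply hs]
  have hsing : ∀ t : ℝ, μ (U ⁻¹' {t}) = 0 := by
    intro t
    rw [hmap _ (measurableSet_singleton t)]
    exact measure_mono_null Set.inter_subset_left (measure_singleton t)
  -- continuity of F
  have hFcont : Continuous F := by
    rw [continuous_iff_continuousAt]
    intro x
    rw [continuousAt_iff_continuous_left'_right']
    constructor
    · -- left continuity
      have h := hFmono.tendsto_nhdsLT x
      have hsup : sSup (F '' Set.Iio x) = F x := by
        refine le_antisymm (sSup_le ?_) ?_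
        · rintro y ⟨t, ht, rfl⟩
          exact hFmono (le_of_lt ht)
        · have hUnion : (⋃ n : ℕ, A ∩ {ω' | U ω' ≤ x - ((n:ℝ)+1)⁻¹}) = A ∩ U ⁻¹' Set.Iio x := by
            ext ω
            simp only [Set.mem_iUnion, Set.mem_inter_iff, Set.mem_setOf_eq, Set.mem_preimage,
              Set.mem_Iio]
            constructor
            · rintro ⟨n, hA, hle⟩
              have hp : (0:ℝ) < ((n:ℝ)+1)⁻¹ := by positivity
              exact ⟨hA, by linarith⟩
            · rintro ⟨hA, hlt⟩
              obtain ⟨n, hn⟩ := exists_nat_one_div_lt (sub_pos.2 hlt)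
              rw [one_div] at hn
              exact ⟨n, hA, by linarith⟩
          have hmonoseq : Monotone (fun n : ℕ => A ∩ {ω' | U ω' ≤ x - ((n:ℝ)+1)⁻¹}) := by
            intro a b hab
            refine Set.inter_subset_inter_right _ (fun ω hω => ?_)
            simp only [Set.mem_setOf_eq] at hω ⊢
            have h1 : ((a:ℝ)+1) ≤ ((b:ℝ)+1) := by
              have : (a:ℝ) ≤ (b:ℝ) := by exact_mod_cast hab
              linarith
            have h2 : ((b:ℝ)+1)⁻¹ ≤ ((a:ℝ)+1)⁻¹ :=
              inv_anti₀ (by positivity) h1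
            linarith
          have h2 : μ (A ∩ U ⁻¹' Set.Iio x) = ⨆ n : ℕ, F (x - ((n:ℝ)+1)⁻¹) := by
            rw [← hUnion, hmonoseq.measure_iUnion]
          have hsplit : F x ≤ μ (A ∩ U ⁻¹' Set.Iio x) + μ (U ⁻¹' {x}) := by
            refine le_trans (measure_mono ?_) (measure_union_le _ _)
            rintro ω ⟨hA, hle⟩
            have hle' : U ω ≤ x := hle
            rcases lt_or_eq_of_le hle' with hc | hc
            · exact Or.inl ⟨hA, hc⟩
            · exact Or.inr hc
          rw [hsing x, add_zero, h2] at hsplit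
          refine le_trans hsplit (iSup_le fun n => le_sSup ?_)
          refine ⟨x - ((n:ℝ)+1)⁻¹, ?_, rfl⟩
          have : (0:ℝ) < ((n:ℝ)+1)⁻¹ := by positivity
          simp only [Set.mem_Iio]
          linarith
      show Filter.Tendsto F (𝓝[<] x) (𝓝 (F x))
      rw [← hsup]
      exact h
    · -- right continuity
      have h := hFmono.tendsto_nhdsGT x
      have hInter : (⋂ n : ℕ, A ∩ {ω' | U ω' ≤ x + ((n:ℝ)+1)⁻¹}) = A ∩ {ω' | U ω' ≤ x} := by
        ext ω
        simp only [Set.mem_iInter, Set.mem_inter_iff, Set.mem_setOf_eq]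
        constructor
        · intro hall
          refine ⟨(hall 0).1, ?_⟩
          by_contra hc
          push_neg at hc
          obtain ⟨n, hn⟩ := exists_nat_one_div_lt (sub_pos.2 hc)
          rw [one_div] at hn
          have := (hall n).2
          linarith
        · rintro ⟨hA, hle⟩ n
          have : (0:ℝ) < ((n:ℝ)+1)⁻¹ := by positivity
          exact ⟨hA, by linarith⟩
      have hanti : Antitone (fun n : ℕ => A ∩ {ω' | U ω' ≤ x + ((n:ℝ)+1)⁻¹}) := by
        intro a b hab
        refine Set.inter_subset_inter_right _ (fun ω hω => ?_)
        simp only [Set.mem_setOf_eq] at hω ⊢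
        have h1 : ((a:ℝ)+1) ≤ ((b:ℝ)+1) := by
          have : (a:ℝ) ≤ (b:ℝ) := by exact_mod_cast hab
          linarith
        have h2 : ((b:ℝ)+1)⁻¹ ≤ ((a:ℝ)+1)⁻¹ := inv_anti₀ (by positivity) h1
        linarith
      have h2 : F x = ⨅ n : ℕ, F (x + ((n:ℝ)+1)⁻¹) := by
        have := Directed.measure_iInter (μ := μ)
          (fun n : ℕ => (hFm (x + ((n:ℝ)+1)⁻¹)).nullMeasurableSet)
          hanti.directed_ge ⟨0, measure_ne_top μ _⟩
        rw [hInter] at this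
        exact this
      have hinf : sInf (F '' Set.Ioi x) = F x := by
        refine le_antisymm ?_ (le_sInf ?_)
        · refine le_trans (le_iInf fun n : ℕ => sInf_le ?_) h2.symm.le
          refine ⟨x + ((n:ℝ)+1)⁻¹, ?_, rfl⟩
          have : (0:ℝ) < ((n:ℝ)+1)⁻¹ := by positivity
          simp only [Set.mem_Ioi]
          linarith
        · rintro y ⟨t, ht, rfl⟩
          exact hFmono (le_of_lt ht)
      show Filter.Tendsto F (𝓝[>] x) (𝓝 (F x))
      rw [← hinf]
      exact h
  -- F 0 = 0 and F 1 = μ A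
  have hF0 : F 0 = 0 := by
    have : μ (U ⁻¹' Set.Iic 0) = 0 := by
      rw [hmap _ measurableSet_Iic]
      have : Set.Iic (0:ℝ) ∩ Set.Ioo 0 1 = ∅ :=
        Set.eq_empty_of_forall_notMem (fun x hx => by
          obtain ⟨h1x, h2x, h3x⟩ := hx
          have := Set.mem_Iic.1 h1x; linarith)
      rw [this]; simp
    exact measure_mono_null (by rw [hset]; exact Set.inter_subset_right) this
  have hF1 : F 1 = μ A := by
    refine le_antisymm (measure_mono Set.inter_subset_left) ?_
    have hnull : μ (A ∩ U ⁻¹' Set.Ioi 1) = 0 := by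
      refine measure_mono_null Set.inter_subset_right ?_
      rw [hmap _ measurableSet_Ioi]
      have : Set.Ioi (1:ℝ) ∩ Set.Ioo 0 1 = ∅ :=
        Set.eq_empty_of_forall_notMem (fun x hx => by
          obtain ⟨h1x, h2x, h3x⟩ := hx
          have := Set.mem_Ioi.1 h1x; linarith)
      rw [this]; simp
    calc μ A = μ ((A ∩ {ω' | U ω' ≤ 1}) ∪ (A ∩ U ⁻¹' Set.Ioi 1)) := by
            congr 1
            ext ω
            simp only [Set.mem_union, Set.mem_inter_iff, Set.mem_setOf_eq, Set.mem_preimage,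
              Set.mem_Ioi]
            constructor
            · intro hω; rcases le_or_gt (U ω) 1 with h | h
              · exact Or.inl ⟨hω, h⟩
              · exact Or.inr ⟨hω, h⟩
            · rintro (⟨h, _⟩ | ⟨h, _⟩) <;> exact h
      _ ≤ μ (A ∩ {ω' | U ω' ≤ 1}) + μ (A ∩ U ⁻¹' Set.Ioi 1) := measure_union_le _ _
      _ = F 1 := by rw [hnull, add_zero]
  -- choose N₀ with (μ A)⁻¹ < N₀ and 1 ≤ N₀
  obtain ⟨N₀, hN₀⟩ : ∃ N : ℕ, (μ A)⁻¹ < N ∧ 1 ≤ N := by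
    obtain ⟨N, hN⟩ := ENNReal.exists_nat_gt (ENNReal.inv_ne_top.2 hApos.ne')
    exact ⟨N + 1, lt_of_lt_of_le hN (by exact_mod_cast Nat.le_succ N), Nat.le_add_left 1 N⟩
  -- for n ≥ N₀, find t with F t = n⁻¹
  have hts : ∀ n : ℕ, N₀ ≤ n → ∃ t, F t = ((n : ℝ≥0∞))⁻¹ := by
    intro n hn
    have hle : ((n : ℝ≥0∞))⁻¹ ≤ μ A := by
      rw [← inv_inv (μ A)]
      exact ENNReal.inv_le_inv' (le_trans hN₀.1.le (by exact_mod_cast hn))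
    have := intermediate_value_Icc (zero_le_one (α := ℝ)) hFcont.continuousOn
      (by rw [hF0, hF1]; exact ⟨zero_le, hle⟩)
    obtain ⟨t, _, ht⟩ := this
    exact ⟨t, ht⟩
  -- key bound: μ (A ∩ {n ≤ (F (U ω))⁻¹}) ≥ n⁻¹ for n ≥ N₀
  have hkey : ∀ n : ℕ, N₀ ≤ n →
      ((n : ℝ≥0∞))⁻¹ ≤ μ (A ∩ {ω | (n : ℝ≥0∞) ≤ (F (U ω))⁻¹}) := by
    intro n hn
    obtain ⟨t, ht⟩ := hts n hn
    calc ((n : ℝ≥0∞))⁻¹ = F t := ht.symm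
      _ ≤ μ (A ∩ {ω | (n : ℝ≥0∞) ≤ (F (U ω))⁻¹}) := by
          refine measure_mono (Set.inter_subset_inter_right _ ?_)
          intro ω (hω : U ω ≤ t)
          have h1 : F (U ω) ≤ ((n : ℝ≥0∞))⁻¹ := ht ▸ hFmono hω
          calc (n : ℝ≥0∞) = (((n : ℝ≥0∞))⁻¹)⁻¹ := (inv_inv _).symm
            _ ≤ (F (U ω))⁻¹ := ENNReal.inv_le_inv' h1
  constructor
  · -- first part
    refine top_unique ?_
    calc (⊤ : ℝ≥0∞) = ∑' k : ℕ, ((k + N₀ : ℕ) : ℝ≥0∞)⁻¹ := (aux_harmonic_shift N₀ hN₀.2).symm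
      _ ≤ ∑' k : ℕ, μ (A ∩ {ω | ((k + N₀ : ℕ) : ℝ≥0∞) ≤ (F (U ω))⁻¹}) :=
          ENNReal.tsum_le_tsum fun k => hkey (k + N₀) (Nat.le_add_left _ _)
      _ ≤ ∑' n : ℕ, μ (A ∩ {ω | (n : ℝ≥0∞) ≤ (F (U ω))⁻¹}) :=
          ENNReal.tsum_comp_le_tsum_of_injective (add_left_injective N₀) _
  · -- second part
    have hle : ∀ k : ℕ, N₀ ≤ N₀ * 2 ^ k := fun k =>
      Nat.le_mul_of_pos_right N₀ (pow_pos two_pos k)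
    set s : ℕ → ℝ := fun k => Classical.choose (hts (N₀ * 2 ^ k) (hle k)) with hs
    have hsk : ∀ k : ℕ, F (s k) = ((N₀ * 2 ^ k : ℕ) : ℝ≥0∞)⁻¹ := fun k =>
      Classical.choose_spec (hts (N₀ * 2 ^ k) (hle k))
    have hcast : ∀ k : ℕ, ((N₀ * 2 ^ k : ℕ) : ℝ≥0∞) ≠ 0 := by
      intro k
      simp only [ne_eq, Nat.cast_eq_zero, Nat.mul_eq_zero, not_or]
      exact ⟨by omega, by positivity⟩
    have hcast' : ∀ k : ℕ, ((N₀ * 2 ^ k : ℕ) : ℝ≥0∞) ≠ ⊤ := fun k => ENNReal.natCast_ne_top _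
    have hltadj : ∀ k : ℕ, s (k+1) < s k := by
      intro k
      by_contra hc
      push_neg at hc
      have hm := hFmono hc
      rw [hsk k, hsk (k+1)] at hm
      have h1 : ((N₀ * 2 ^ k : ℕ) : ℝ≥0∞) < ((N₀ * 2 ^ (k+1) : ℕ) : ℝ≥0∞) := by
        have : N₀ * 2 ^ k < N₀ * 2 ^ (k+1) := by
          have h2 : 2 ^ k < 2 ^ (k+1) := Nat.pow_lt_pow_succ one_lt_two
          have hpos : 0 < N₀ := by omega
          exact mul_lt_mul_of_pos_left h2 hpos
        exact_mod_cast this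
      have h2 := ENNReal.inv_le_inv' hm
      rw [inv_inv, inv_inv] at h2
      exact absurd h2 (not_le.2 h1)
    have hanti : Antitone s := antitone_nat_of_succ_le fun k => (hltadj k).le
    set B : ℕ → Set Ω := fun k => A ∩ U ⁻¹' Set.Ioc (s (k+1)) (s k) with hB
    have hBmeas : ∀ k, MeasurableSet (B k) := fun k =>
      hAmeas.inter (hUmeas measurableSet_Ioc)
    have hBdisj : Pairwise (Function.onFun Disjoint B) := by
      refine (pairwise_disjoint_on B).2 fun i j hij => ?_
      refine Set.disjoint_of_subset Set.inter_subset_right Set.inter_subset_right ?_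
      refine Disjoint.preimage U ?_
      rw [Set.Ioc_disjoint_Ioc]
      calc min (s i) (s j) ≤ s j := min_le_right _ _
        _ ≤ s (i+1) := hanti (by omega)
        _ ≤ max (s (i+1)) (s (j+1)) := le_max_left _ _
    have hμB : ∀ k : ℕ, μ (B k) = ((N₀ * 2 ^ (k+1) : ℕ) : ℝ≥0∞)⁻¹ := by
      intro k
      have hsub : A ∩ {ω' | U ω' ≤ s (k+1)} ⊆ A ∩ {ω' | U ω' ≤ s k} :=
        Set.inter_subset_inter_right _ (fun ω hω => le_trans hω (hltadj k).le)
      have hdiff : B k = (A ∩ {ω' | U ω' ≤ s k}) \ (A ∩ {ω' | U ω' ≤ s (k+1)}) := by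
        ext ω
        simp only [hB, Set.mem_inter_iff, Set.mem_preimage, Set.mem_Ioc, Set.mem_diff,
          Set.mem_setOf_eq, not_and, not_le]
        constructor
        · rintro ⟨hA, hlt, hle⟩
          exact ⟨⟨hA, hle⟩, fun _ => hlt⟩
        · rintro ⟨⟨hA, hle⟩, himp⟩
          exact ⟨hA, himp hA, hle⟩
      have hdm : μ (B k) = μ (A ∩ {ω' | U ω' ≤ s k}) - μ (A ∩ {ω' | U ω' ≤ s (k+1)}) := by
        rw [hdiff]
        exact measure_diff hsub (hFm _).nullMeasurableSet (measure_ne_top μ _)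
      rw [hdm]
      show F (s k) - F (s (k+1)) = ((N₀ * 2 ^ (k+1) : ℕ) : ℝ≥0∞)⁻¹
      rw [hsk k, hsk (k+1)]
      -- show a⁻¹ - (2a)⁻¹ = (2a)⁻¹
      set a : ℝ≥0∞ := ((N₀ * 2 ^ k : ℕ) : ℝ≥0∞) with ha
      have h2a : ((N₀ * 2 ^ (k+1) : ℕ) : ℝ≥0∞) = 2 * a := by
        rw [ha]
        push_cast
        ring
      rw [h2a]
      have hsplit : a⁻¹ = (2*a)⁻¹ + (2*a)⁻¹ := by
        rw [ENNReal.mul_inv (Or.inl two_ne_zero) (Or.inl ENNReal.ofNat_ne_top), ← two_mul,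
          ← mul_assoc, ENNReal.mul_inv_cancel two_ne_zero ENNReal.ofNat_ne_top, one_mul]
      rw [hsplit, ENNReal.add_sub_cancel_right]
      exact ENNReal.inv_ne_top.2 (mul_ne_zero two_ne_zero (hcast k))
    have hint : ∀ k : ℕ, (2:ℝ≥0∞)⁻¹ ≤ ∫⁻ ω in B k, (F (U ω))⁻¹ ∂μ := by
      intro k
      have hconst : ∀ ω ∈ B k, ((N₀ * 2 ^ k : ℕ) : ℝ≥0∞) ≤ (F (U ω))⁻¹ := by
        rintro ω ⟨hA, hω⟩
        have hle2 : F (U ω) ≤ ((N₀ * 2 ^ k : ℕ) : ℝ≥0∞)⁻¹ := (hsk k) ▸ hFmono hω.2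
        calc ((N₀ * 2 ^ k : ℕ) : ℝ≥0∞) = (((N₀ * 2 ^ k : ℕ) : ℝ≥0∞)⁻¹)⁻¹ := (inv_inv _).symm
          _ ≤ (F (U ω))⁻¹ := ENNReal.inv_le_inv' hle2
      have heq : ((N₀ * 2 ^ k : ℕ) : ℝ≥0∞) * μ (B k) = 2⁻¹ := by
        rw [hμB k]
        have h2a : ((N₀ * 2 ^ (k+1) : ℕ) : ℝ≥0∞) = 2 * ((N₀ * 2 ^ k : ℕ) : ℝ≥0∞) := by
          push_cast
          ring
        rw [h2a, ENNReal.mul_inv (Or.inl two_ne_zero) (Or.inl ENNReal.ofNat_ne_top),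
          mul_left_comm, mul_comm (((N₀ * 2 ^ k : ℕ) : ℝ≥0∞)) _,
          ENNReal.inv_mul_cancel (hcast k) (hcast' k), mul_one]
      calc (2:ℝ≥0∞)⁻¹ = ((N₀ * 2 ^ k : ℕ) : ℝ≥0∞) * μ (B k) := heq.symm
        _ = ∫⁻ _ in B k, ((N₀ * 2 ^ k : ℕ) : ℝ≥0∞) ∂μ := (setLIntegral_const _ _).symm
        _ ≤ ∫⁻ ω in B k, (F (U ω))⁻¹ ∂μ := setLIntegral_mono' (hBmeas k) hconst
    refine top_unique ?_
    calc (⊤:ℝ≥0∞) = ∑' _ : ℕ, (2:ℝ≥0∞)⁻¹ :=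
          (ENNReal.tsum_const_eq_top_of_ne_zero (by simp)).symm
      _ ≤ ∑' k : ℕ, ∫⁻ ω in B k, (F (U ω))⁻¹ ∂μ := ENNReal.tsum_le_tsum hint
      _ = ∫⁻ ω in ⋃ k, B k, (F (U ω))⁻¹ ∂μ := (lintegral_iUnion hBmeas hBdisj _).symm
      _ ≤ ∫⁻ ω in A, (F (U ω))⁻¹ ∂μ :=
          lintegral_mono_set (Set.iUnion_subset fun k => Set.inter_subset_left)
end
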